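/- arXiv:2602.12067 — 7 statements merged into one kernel-verified Lean document; each statement's English description precedes it below -/
import Mathlib

section
/- Let H be a complex Hilbert space, let A and G be bounded linear operators on H with G skew-adjoint (G* = −G), and let ψ ∈ H. Then ⟨e^{G}ψ, A e^{G}ψ⟩ = ⟨ψ, Aψ⟩ + ⟨ψ, [A,G]ψ⟩ + ∫₀¹ (1−λ) ⟨e^{λG}ψ, [[A,G],G] e^{λG}ψ⟩ dλ, where e^{λG} denotes the operator exponential and [X,Y] := XY − YX. -/
open scoped InnerProductSpace
open NormedSpace

section Aux

variable {H : Type*} [NormedAddCommGroup H] [InnerProductSpace ℂ H] [CompleteSpace H]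

private lemma expDeriv_aux (G : H →L[ℂ] H) (ψ : H) (l : ℝ) :
    HasDerivAt (fun l : ℝ => (exp (l • G)) ψ) (G ((exp (l • G)) ψ)) l := by
  have hexp : (exp : (H →L[ℂ] H) → (H →L[ℂ] H)) = exp :=
    rfl
  have h : HasDerivAt (fun l : ℝ => exp (l • G)) (G * exp (l • G)) l :=
    hasDerivAt_exp_smul_const' G l
  have E : (H →L[ℂ] H) →L[ℝ] H :=
    ((ContinuousLinearMap.apply ℂ H ψ) : (H →L[ℂ] H) →L[ℂ] H).restrictScalars ℝ
  have h2 := (((ContinuousLinearMap.apply ℂ H ψ).restrictScalars ℝ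
      : (H →L[ℂ] H) →L[ℝ] H).hasFDerivAt).comp_hasDerivAt l h
  exact h2

private lemma innerDeriv_aux (A G : H →L[ℂ] H)
    (hG : ContinuousLinearMap.adjoint G = -G) (ψ : H) (l : ℝ) :
    HasDerivAt (fun l : ℝ => ⟪(exp (l • G)) ψ, A ((exp (l • G)) ψ)⟫_ℂ)
      (⟪(exp (l • G)) ψ, ((A * G - G * A) ((exp (l • G)) ψ))⟫_ℂ) l := by
  have h1 := expDeriv_aux G ψ l
  have h2 : HasDerivAt (fun l : ℝ => A ((exp (l • G)) ψ))
      (A (G ((exp (l • G)) ψ))) l :=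
    ((A.restrictScalars ℝ).hasFDerivAt).comp_hasDerivAt l h1
  have h3 := h1.inner ℂ h2
  refine h3.congr_deriv ?_
  set φ := (exp (l • G)) ψ
  have hskew : ∀ x y : H, ⟪G x, y⟫_ℂ = -⟪x, G y⟫_ℂ := by
    intro x y
    rw [← ContinuousLinearMap.adjoint_inner_right G, hG]
    simp
  rw [ContinuousLinearMap.sub_apply, inner_sub_right, ContinuousLinearMap.mul_apply,
    ContinuousLinearMap.mul_apply, hskew φ (A φ)]
  ring

end Aux

/-- Second-order Duhamel (Taylor) expansion: for bounded operators `A`, `G` on a complex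
Hilbert space `H` with `G` skew-adjoint, and `ψ ∈ H`,
`⟨e^G ψ, A e^G ψ⟩ = ⟨ψ, Aψ⟩ + ⟨ψ, [A,G]ψ⟩ + ∫₀¹ (1−λ) ⟨e^{λG}ψ, [[A,G],G] e^{λG}ψ⟩ dλ`. -/
theorem duhamel_second_order
    {H : Type*} [NormedAddCommGroup H] [InnerProductSpace ℂ H] [CompleteSpace H]
    (A G : H →L[ℂ] H) (hG : ContinuousLinearMap.adjoint G = -G) (ψ : H) :
    ⟪(exp G) ψ, A ((exp G) ψ)⟫_ℂ
      = ⟪ψ, A ψ⟫_ℂ + ⟪ψ, (A * G - G * A) ψ⟫_ℂ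
        + ∫ l in (0:ℝ)..1, (1 - (l : ℂ)) *
            ⟪(exp (l • G)) ψ,
              (((A * G - G * A) * G - G * (A * G - G * A)) ((exp (l • G)) ψ))⟫_ℂ := by
  set B := A * G - G * A with hB
  set C := B * G - G * B with hC
  set g : ℝ → ℂ := fun l => ⟪(exp (l • G)) ψ, A ((exp (l • G)) ψ)⟫_ℂ with hg
  set g1 : ℝ → ℂ := fun l => ⟪(exp (l • G)) ψ, B ((exp (l • G)) ψ)⟫_ℂ with hg1
  set g2 : ℝ → ℂ := fun l => ⟪(exp (l • G)) ψ, C ((exp (l • G)) ψ)⟫_ℂ with hg2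
  have hdg : ∀ l : ℝ, HasDerivAt g (g1 l) l := fun l => innerDeriv_aux A G hG ψ l
  have hdg1 : ∀ l : ℝ, HasDerivAt g1 (g2 l) l := fun l => innerDeriv_aux B G hG ψ l
  have hcont1 : Continuous g1 :=
    continuous_iff_continuousAt.mpr fun l => (hdg1 l).continuousAt
  have hcont2 : Continuous g2 :=
    continuous_iff_continuousAt.mpr fun l => (innerDeriv_aux C G hG ψ l).continuousAt
  have hFTC : ∫ l in (0:ℝ)..1, g1 l = g 1 - g 0 :=
    intervalIntegral.integral_eq_sub_of_hasDerivAt (fun x _ => hdg x)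
      (hcont1.intervalIntegrable 0 1)
  have hu : ∀ x : ℝ, HasDerivAt (fun l : ℝ => (1 : ℂ) - (l : ℂ)) (-1) x := by
    intro x
    have h0 : HasDerivAt (fun l : ℝ => (l : ℂ)) 1 x := by
      simpa using (hasDerivAt_id x).ofReal_comp
    exact ((hasDerivAt_const x (1 : ℂ)).sub h0).congr_deriv (by norm_num)
  have hIBP := intervalIntegral.integral_mul_deriv_eq_deriv_mul
    (u := fun l : ℝ => (1 : ℂ) - (l : ℂ)) (u' := fun _ => (-1 : ℂ))
    (v := g1) (v' := g2)
    (fun x _ => hu x) (fun x _ => hdg1 x)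
    ((continuous_const).intervalIntegrable 0 1)
    (hcont2.intervalIntegrable 0 1)
  have hint : ∫ l in (0:ℝ)..1, ((-1 : ℂ)) * g1 l = -(g 1 - g 0) := by
    rw [← hFTC, ← intervalIntegral.integral_neg]
    simp
  rw [hint] at hIBP
  have hLHS : ⟪(exp G) ψ, A ((exp G) ψ)⟫_ℂ = g 1 := by
    simp [hg]
  have h0g : g 0 = ⟪ψ, A ψ⟫_ℂ := by simp [hg]
  have h0g1 : g1 0 = ⟪ψ, B ψ⟫_ℂ := by simp [hg1]
  have hInt2 : (∫ l in (0:ℝ)..1, (1 - (l : ℂ)) *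
      ⟪(exp (l • G)) ψ,
        (((A * G - G * A) * G - G * (A * G - G * A)) ((exp (l • G)) ψ))⟫_ℂ)
      = ∫ x in (0:ℝ)..1, ((1 : ℂ) - (x : ℂ)) * g2 x := rfl
  rw [hLHS, ← h0g, ← h0g1, hInt2, hIBP]
  push_cast
  ring
end

section
/- There exists a constant C > 0, independent of x, such that for every x ∈ (0,1] one has I₂(x) ≤ C, where I₂(x) = ∫_{ℝ³} dp ∫_{|r|<1<|r+p|} dr ∫_{|r'|<x<|r'−p|} dr' (|r+p|² − |r|² + |r'−p|² − |r'|²)^{−2}. -/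
open MeasureTheory
open scoped ENNReal

noncomputable abbrev E3 := EuclideanSpace ℝ (Fin 3)

/-- The Belyakov-type integral `I_s(x)` of Lemma B.1:
`I_s(x) = ∫ dp ∫_{|r|<1<|r+p|} dr ∫_{|r'|<x<|r'-p|} dr' (|r+p|² - |r|² + |r'-p|² - |r'|²)^{-s}`. -/
noncomputable def belyakovI (s : ℕ) (x : ℝ) : ℝ≥0∞ :=
  ∫⁻ p : E3, ∫⁻ r in {r : E3 | ‖r‖ < 1 ∧ 1 < ‖r + p‖},
    ∫⁻ r' in {r' : E3 | ‖r'‖ < x ∧ x < ‖r' - p‖},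
      ENNReal.ofReal (1 / (‖r + p‖ ^ 2 - ‖r‖ ^ 2 + ‖r' - p‖ ^ 2 - ‖r'‖ ^ 2) ^ s)

open Metric Real


lemma meas_disc_lt (A : ℝ) : MeasurableSet {y : Fin 2 → ℝ | y 0 ^ 2 + y 1 ^ 2 < A} :=
  measurableSet_lt (((measurable_pi_apply 0).pow_const 2).add
    ((measurable_pi_apply 1).pow_const 2)) measurable_const

lemma meas_disc_le (b : ℝ) : MeasurableSet {y : Fin 2 → ℝ | y 0 ^ 2 + y 1 ^ 2 ≤ b} :=
  measurableSet_le (((measurable_pi_apply 0).pow_const 2).add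
    ((measurable_pi_apply 1).pow_const 2)) measurable_const

lemma euclid2_vol_ball (r : ℝ) (hr : 0 ≤ r) :
    volume (ball (0 : EuclideanSpace ℝ (Fin 2)) r) = ENNReal.ofReal π * ENNReal.ofReal (r ^ 2) := by
  rw [EuclideanSpace.volume_ball]
  simp only [Fintype.card_fin]
  norm_num [Real.Gamma_two, Real.sq_sqrt Real.pi_nonneg]
  rw [← ENNReal.ofReal_pow hr, mul_comm]

lemma euclid2_vol_closedBall (r : ℝ) (hr : 0 ≤ r) :
    volume (closedBall (0 : EuclideanSpace ℝ (Fin 2)) r)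
      = ENNReal.ofReal π * ENNReal.ofReal (r ^ 2) := by
  rw [EuclideanSpace.volume_closedBall]
  simp only [Fintype.card_fin]
  norm_num [Real.Gamma_two, Real.sq_sqrt Real.pi_nonneg]
  rw [← ENNReal.ofReal_pow hr, mul_comm]

lemma vol_disc_lt (A : ℝ) :
    volume {y : Fin 2 → ℝ | y 0 ^ 2 + y 1 ^ 2 < A} = ENNReal.ofReal π * ENNReal.ofReal A := by
  rcases le_or_gt A 0 with hA | hA
  · have h1 : {y : Fin 2 → ℝ | y 0 ^ 2 + y 1 ^ 2 < A} = ∅ := by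
      ext y; simp only [Set.mem_setOf_eq, Set.mem_empty_iff_false, iff_false, not_lt]
      nlinarith [sq_nonneg (y 0), sq_nonneg (y 1)]
    rw [h1, measure_empty, ENNReal.ofReal_eq_zero.2 hA, mul_zero]
  · have := (EuclideanSpace.volume_preserving_symm_measurableEquiv_toLp (Fin 2)).measure_preimage
      (s := {y : Fin 2 → ℝ | y 0 ^ 2 + y 1 ^ 2 < A}) (meas_disc_lt A).nullMeasurableSet
    rw [← this]
    have h2 : ((MeasurableEquiv.toLp 2 (Fin 2 → ℝ)).symm) ⁻¹'
        {y : Fin 2 → ℝ | y 0 ^ 2 + y 1 ^ 2 < A} = ball (0 : EuclideanSpace ℝ (Fin 2)) (Real.sqrt A) := by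
      ext u
      simp only [Set.mem_preimage, Set.mem_setOf_eq, mem_ball, dist_zero_right]
      have hcoord : ((MeasurableEquiv.toLp 2 (Fin 2 → ℝ)).symm) u = fun i => u i := rfl
      rw [hcoord]
      have hnorm : ‖u‖ ^ 2 = u 0 ^ 2 + u 1 ^ 2 := by
        rw [EuclideanSpace.norm_eq, Real.sq_sqrt (by positivity), Fin.sum_univ_two]; simp [Real.norm_eq_abs, sq_abs]
      rw [← hnorm, ← Real.lt_sqrt (norm_nonneg u)]
    rw [h2, euclid2_vol_ball _ (Real.sqrt_nonneg A), Real.sq_sqrt hA.le]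

lemma vol_disc_le (b : ℝ) (hb : 0 ≤ b) :
    volume {y : Fin 2 → ℝ | y 0 ^ 2 + y 1 ^ 2 ≤ b} = ENNReal.ofReal π * ENNReal.ofReal b := by
  have := (EuclideanSpace.volume_preserving_symm_measurableEquiv_toLp (Fin 2)).measure_preimage
    (s := {y : Fin 2 → ℝ | y 0 ^ 2 + y 1 ^ 2 ≤ b}) (meas_disc_le b).nullMeasurableSet
  rw [← this]
  have h2 : ((MeasurableEquiv.toLp 2 (Fin 2 → ℝ)).symm) ⁻¹'
      {y : Fin 2 → ℝ | y 0 ^ 2 + y 1 ^ 2 ≤ b}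
      = closedBall (0 : EuclideanSpace ℝ (Fin 2)) (Real.sqrt b) := by
    ext u
    simp only [Set.mem_preimage, Set.mem_setOf_eq, mem_closedBall, dist_zero_right]
    have hcoord : ((MeasurableEquiv.toLp 2 (Fin 2 → ℝ)).symm) u = fun i => u i := rfl
    rw [hcoord]
    have hnorm : ‖u‖ ^ 2 = u 0 ^ 2 + u 1 ^ 2 := by
      rw [EuclideanSpace.norm_eq, Real.sq_sqrt (by positivity), Fin.sum_univ_two]; simp [Real.norm_eq_abs, sq_abs]
    rw [← hnorm, show (‖u‖ ≤ Real.sqrt b ↔ ‖u‖^2 ≤ b) from ?_]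
    constructor
    · intro h; nlinarith [Real.sq_sqrt hb, norm_nonneg u, Real.sqrt_nonneg b]
    · intro h; nlinarith [Real.sq_sqrt hb, norm_nonneg u, Real.sqrt_nonneg b]
  rw [h2, euclid2_vol_closedBall _ (Real.sqrt_nonneg b), Real.sq_sqrt hb]


lemma slice2 (R ρ t : ℝ) (hR : 0 < R) :
    ENNReal.ofReal (1 / ((t + ρ) ^ 2 - t ^ 2)) *
      volume {y : Fin 2 → ℝ | t ^ 2 + (y 0 ^ 2 + y 1 ^ 2) < R ^ 2 ∧
        R ^ 2 < (t + ρ) ^ 2 + (y 0 ^ 2 + y 1 ^ 2)}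
      ≤ Set.indicator (Set.Ioo (-R) R) (fun _ => ENNReal.ofReal π) t := by
  set S := {y : Fin 2 → ℝ | t ^ 2 + (y 0 ^ 2 + y 1 ^ 2) < R ^ 2 ∧
        R ^ 2 < (t + ρ) ^ 2 + (y 0 ^ 2 + y 1 ^ 2)} with hS
  rcases Set.eq_empty_or_nonempty S with hemp | ⟨y, hy1, hy2⟩
  · rw [hemp, measure_empty, mul_zero]; exact zero_le
  · have hq0 : 0 ≤ y 0 ^ 2 + y 1 ^ 2 := by positivity
    have ht2 : t ^ 2 < R ^ 2 := by nlinarith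
    have htmem : t ∈ Set.Ioo (-R) R := by
      constructor <;> nlinarith
    have ha : 0 < (t + ρ) ^ 2 - t ^ 2 := by nlinarith
    set a := (t + ρ) ^ 2 - t ^ 2 with hadef
    set A := R ^ 2 - t ^ 2 with hAdef
    set b := R ^ 2 - (t + ρ) ^ 2 with hbdef
    rw [Set.indicator_of_mem htmem]
    rcases lt_or_ge b 0 with hb | hb
    · -- S ⊆ disc of radius² A, and A < a
      have hAa : A ≤ a := by simp only [hAdef, hadef]; nlinarith
      have hsub : S ⊆ {y : Fin 2 → ℝ | y 0 ^ 2 + y 1 ^ 2 < A} := by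
        intro z hz; simp only [Set.mem_setOf_eq] at hz ⊢; nlinarith [hz.1]
      calc ENNReal.ofReal (1 / a) * volume S
          ≤ ENNReal.ofReal (1 / a) * (ENNReal.ofReal π * ENNReal.ofReal A) := by
            exact mul_le_mul_right ((measure_mono hsub).trans_eq (vol_disc_lt A)) _
        _ = ENNReal.ofReal ((1 / a) * (π * A)) := by
            rw [ENNReal.ofReal_mul (by positivity), ENNReal.ofReal_mul Real.pi_nonneg]
        _ ≤ ENNReal.ofReal π := by
            apply ENNReal.ofReal_le_ofReal
            rw [div_mul_eq_mul_div, one_mul, div_le_iff₀ ha]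
            nlinarith [Real.pi_nonneg]
    · -- annulus bound
      have hbA : {y : Fin 2 → ℝ | y 0 ^ 2 + y 1 ^ 2 ≤ b} ⊆ {y : Fin 2 → ℝ | y 0 ^ 2 + y 1 ^ 2 < A} := by
        intro z hz; simp only [Set.mem_setOf_eq] at hz ⊢; nlinarith
      have hsub : S ⊆ {y : Fin 2 → ℝ | y 0 ^ 2 + y 1 ^ 2 < A} \ {y : Fin 2 → ℝ | y 0 ^ 2 + y 1 ^ 2 ≤ b} := by
        intro z hz
        obtain ⟨hz1, hz2⟩ := hz
        simp only [Set.mem_diff, Set.mem_setOf_eq, not_le]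
        exact ⟨by nlinarith, by nlinarith⟩
      have hdiff : volume ({y : Fin 2 → ℝ | y 0 ^ 2 + y 1 ^ 2 < A} \ {y : Fin 2 → ℝ | y 0 ^ 2 + y 1 ^ 2 ≤ b})
          = ENNReal.ofReal (π * a) := by
        rw [measure_diff hbA (meas_disc_le b).nullMeasurableSet
          (by rw [vol_disc_le b hb]; exact ENNReal.mul_ne_top ENNReal.ofReal_ne_top ENNReal.ofReal_ne_top),
          vol_disc_lt, vol_disc_le b hb, ← ENNReal.ofReal_mul Real.pi_nonneg,
          ← ENNReal.ofReal_mul Real.pi_nonneg,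
          ← ENNReal.ofReal_sub _ (by positivity)]
        congr 1
        simp only [hAdef, hbdef, hadef]; ring
      calc ENNReal.ofReal (1 / a) * volume S
          ≤ ENNReal.ofReal (1 / a) * ENNReal.ofReal (π * a) := by
            exact mul_le_mul_right ((measure_mono hsub).trans_eq hdiff) _
        _ = ENNReal.ofReal π := by
            rw [← ENNReal.ofReal_mul (by positivity)]
            congr 1
            field_simp

lemma meas_integrand (q : E3) :
    Measurable (fun u : E3 => ENNReal.ofReal (1 / (‖u + q‖ ^ 2 - ‖u‖ ^ 2))) := by
  fun_prop

lemma meas_lens (R : ℝ) (q : E3) :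
    MeasurableSet {u : E3 | ‖u‖ < R ∧ R < ‖u + q‖} := by
  apply MeasurableSet.inter
  · exact measurableSet_lt measurable_norm measurable_const
  · exact measurableSet_lt measurable_const ((measurable_id.add_const q).norm)


lemma norm_sq_eq3 (u : E3) : ‖u‖ ^ 2 = u 0 ^ 2 + u 1 ^ 2 + u 2 ^ 2 := by
  rw [EuclideanSpace.norm_eq, Real.sq_sqrt (by positivity), Fin.sum_univ_three]
  simp [Real.norm_eq_abs, sq_abs]

lemma meas_slice (R ρ t : ℝ) :
    MeasurableSet {y : Fin 2 → ℝ | t ^ 2 + (y 0 ^ 2 + y 1 ^ 2) < R ^ 2 ∧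
      R ^ 2 < (t + ρ) ^ 2 + (y 0 ^ 2 + y 1 ^ 2)} := by
  have hq : Measurable (fun y : Fin 2 → ℝ => y 0 ^ 2 + y 1 ^ 2) :=
    ((measurable_pi_apply 0).pow_const 2).add ((measurable_pi_apply 1).pow_const 2)
  exact (measurableSet_lt (hq.const_add _) measurable_const).inter
    (measurableSet_lt measurable_const (hq.const_add _))

lemma L1aux (R : ℝ) (hR : 0 < R) (ρ : ℝ) (hρ0 : 0 ≤ ρ) :
    (∫⁻ u in {u : E3 | ‖u‖ < R ∧ R < ‖u + EuclideanSpace.single (0 : Fin 3) ρ‖},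
      ENNReal.ofReal (1 / (‖u + EuclideanSpace.single (0 : Fin 3) ρ‖ ^ 2 - ‖u‖ ^ 2)))
      ≤ ENNReal.ofReal (2 * π * R) := by
  set v : E3 := EuclideanSpace.single (0 : Fin 3) ρ with hv
  set f : E3 → ℝ≥0∞ := fun u => ENNReal.ofReal (1 / (‖u + v‖ ^ 2 - ‖u‖ ^ 2)) with hf
  set S := {u : E3 | ‖u‖ < R ∧ R < ‖u + v‖} with hSdef
  have hmeas : Measurable (S.indicator f) := (meas_integrand v).indicator (meas_lens R v)
  rw [← lintegral_indicator (meas_lens R v)]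
  have mp1 := (EuclideanSpace.volume_preserving_symm_measurableEquiv_toLp (Fin 3)).symm
  rw [← mp1.lintegral_comp hmeas]
  have hmeas2 : Measurable fun w : Fin 3 → ℝ =>
      S.indicator f (((MeasurableEquiv.toLp 2 (Fin 3 → ℝ)).symm).symm w) :=
    hmeas.comp ((MeasurableEquiv.toLp 2 (Fin 3 → ℝ)).symm).symm.measurable
  rw [volume_pi, ← ((measurePreserving_piFinSuccAbove (fun _ : Fin 3 => (volume : Measure ℝ)) 0).symm _).lintegral_comp hmeas2]
  have hmeas3 : Measurable fun z : ℝ × (Fin 2 → ℝ) =>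
      S.indicator f (((MeasurableEquiv.toLp 2 (Fin 3 → ℝ)).symm).symm
        ((MeasurableEquiv.piFinSuccAbove (fun _ : Fin 3 => ℝ) 0).symm z)) :=
    hmeas2.comp (MeasurableEquiv.piFinSuccAbove (fun _ : Fin 3 => ℝ) 0).symm.measurable
  rw [lintegral_prod _ hmeas3.aemeasurable]
  -- now estimate
  have inner_bound : ∀ t : ℝ,
      (∫⁻ y : Fin 2 → ℝ, S.indicator f (((MeasurableEquiv.toLp 2 (Fin 3 → ℝ)).symm).symm
        ((MeasurableEquiv.piFinSuccAbove (fun _ : Fin 3 => ℝ) 0).symm (t, y)))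
        ∂(Measure.pi fun _ : Fin 2 => (volume : Measure ℝ)))
      ≤ Set.indicator (Set.Ioo (-R) R) (fun _ => ENNReal.ofReal π) t := by
    intro t
    have hpt : ∀ y : Fin 2 → ℝ,
        S.indicator f (((MeasurableEquiv.toLp 2 (Fin 3 → ℝ)).symm).symm
          ((MeasurableEquiv.piFinSuccAbove (fun _ : Fin 3 => ℝ) 0).symm (t, y)))
        = Set.indicator {y' : Fin 2 → ℝ | t ^ 2 + (y' 0 ^ 2 + y' 1 ^ 2) < R ^ 2 ∧
            R ^ 2 < (t + ρ) ^ 2 + (y' 0 ^ 2 + y' 1 ^ 2)}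
            (fun _ => ENNReal.ofReal (1 / ((t + ρ) ^ 2 - t ^ 2))) y := by
      intro y
      set u : E3 := ((MeasurableEquiv.toLp 2 (Fin 3 → ℝ)).symm).symm
          ((MeasurableEquiv.piFinSuccAbove (fun _ : Fin 3 => ℝ) 0).symm (t, y)) with hu
      have hu0 : u 0 = t := by rw [hu]; simp [MeasurableEquiv.piFinSuccAbove]; try rfl
      have hu1 : u 1 = y 0 := by rw [hu]; simp [MeasurableEquiv.piFinSuccAbove]; try rfl
      have hu2 : u 2 = y 1 := by rw [hu]; simp [MeasurableEquiv.piFinSuccAbove]; try rfl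
      have huv : ∀ i, (u + v) i = u i + v i := fun i => rfl
      have hv0 : v 0 = ρ := by rw [hv]; simp [EuclideanSpace.single_apply]
      have hv1 : v 1 = 0 := by rw [hv]; simp [EuclideanSpace.single_apply]
      have hv2 : v 2 = 0 := by rw [hv]; simp [EuclideanSpace.single_apply]
      have hn1 : ‖u‖ ^ 2 = t ^ 2 + (y 0 ^ 2 + y 1 ^ 2) := by
        rw [norm_sq_eq3, hu0, hu1, hu2]; ring
      have hn2 : ‖u + v‖ ^ 2 = (t + ρ) ^ 2 + (y 0 ^ 2 + y 1 ^ 2) := by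
        rw [norm_sq_eq3, huv 0, huv 1, huv 2, hu0, hu1, hu2, hv0, hv1, hv2]; ring
      rw [Set.indicator_apply, Set.indicator_apply]
      have hcond : (u ∈ S) ↔ (y ∈ {y' : Fin 2 → ℝ | t ^ 2 + (y' 0 ^ 2 + y' 1 ^ 2) < R ^ 2 ∧
          R ^ 2 < (t + ρ) ^ 2 + (y' 0 ^ 2 + y' 1 ^ 2)}) := by
        simp only [hSdef, Set.mem_setOf_eq]
        constructor
        · rintro ⟨h1, h2⟩
          constructor
          · rw [← hn1]; nlinarith [norm_nonneg u]
          · rw [← hn2]; nlinarith [norm_nonneg (u + v)]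
        · rintro ⟨h1, h2⟩
          rw [← hn1] at h1; rw [← hn2] at h2
          constructor
          · nlinarith [norm_nonneg u]
          · nlinarith [norm_nonneg (u + v)]
      have hval : f u = ENNReal.ofReal (1 / ((t + ρ) ^ 2 - t ^ 2)) := by
        rw [hf]; simp only; rw [hn1, hn2]; ring_nf
      exact if_congr hcond hval rfl
    calc (∫⁻ y : Fin 2 → ℝ, S.indicator f (((MeasurableEquiv.toLp 2 (Fin 3 → ℝ)).symm).symm
        ((MeasurableEquiv.piFinSuccAbove (fun _ : Fin 3 => ℝ) 0).symm (t, y)))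
        ∂(Measure.pi fun _ : Fin 2 => (volume : Measure ℝ)))
        = ∫⁻ y : Fin 2 → ℝ, Set.indicator {y' : Fin 2 → ℝ | t ^ 2 + (y' 0 ^ 2 + y' 1 ^ 2) < R ^ 2 ∧
            R ^ 2 < (t + ρ) ^ 2 + (y' 0 ^ 2 + y' 1 ^ 2)}
            (fun _ => ENNReal.ofReal (1 / ((t + ρ) ^ 2 - t ^ 2))) y
            ∂(Measure.pi fun _ : Fin 2 => (volume : Measure ℝ)) := lintegral_congr hpt
      _ = ENNReal.ofReal (1 / ((t + ρ) ^ 2 - t ^ 2)) *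
            (Measure.pi fun _ : Fin 2 => (volume : Measure ℝ))
              {y' : Fin 2 → ℝ | t ^ 2 + (y' 0 ^ 2 + y' 1 ^ 2) < R ^ 2 ∧
                R ^ 2 < (t + ρ) ^ 2 + (y' 0 ^ 2 + y' 1 ^ 2)} := by
          rw [lintegral_indicator (meas_slice R ρ t), setLIntegral_const]
          try rw [mul_comm]
      _ ≤ Set.indicator (Set.Ioo (-R) R) (fun _ => ENNReal.ofReal π) t := by
          rw [← volume_pi]; exact slice2 R ρ t hR
  calc (∫⁻ t : ℝ, ∫⁻ y : Fin 2 → ℝ, S.indicator f (((MeasurableEquiv.toLp 2 (Fin 3 → ℝ)).symm).symm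
        ((MeasurableEquiv.piFinSuccAbove (fun _ : Fin 3 => ℝ) 0).symm (t, y)))
        ∂(Measure.pi fun _ : Fin 2 => (volume : Measure ℝ)))
      ≤ ∫⁻ t : ℝ, Set.indicator (Set.Ioo (-R) R) (fun _ => ENNReal.ofReal π) t :=
        lintegral_mono inner_bound
    _ = ENNReal.ofReal π * volume (Set.Ioo (-R) R) := by
        rw [lintegral_indicator measurableSet_Ioo, setLIntegral_const, mul_comm]
    _ = ENNReal.ofReal (2 * π * R) := by
        rw [Real.volume_Ioo, ← ENNReal.ofReal_mul Real.pi_nonneg]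
        congr 1; ring

lemma L1 (R : ℝ) (hR : 0 < R) (p : E3) :
    (∫⁻ u in {u : E3 | ‖u‖ < R ∧ R < ‖u + p‖},
      ENNReal.ofReal (1 / (‖u + p‖ ^ 2 - ‖u‖ ^ 2))) ≤ ENNReal.ofReal (2 * π * R) := by
  set ρ := ‖p‖ with hρ
  set v : E3 := EuclideanSpace.single (0 : Fin 3) ρ with hv
  have hnv : ‖p‖ = ‖v‖ := by
    rw [hv, EuclideanSpace.norm_single]
    exact (abs_of_nonneg (norm_nonneg p)).symm
  -- step 1: rotate p to v
  have key : (∫⁻ u in {u : E3 | ‖u‖ < R ∧ R < ‖u + p‖},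
      ENNReal.ofReal (1 / (‖u + p‖ ^ 2 - ‖u‖ ^ 2)))
      = ∫⁻ u in {u : E3 | ‖u‖ < R ∧ R < ‖u + v‖},
      ENNReal.ofReal (1 / (‖u + v‖ ^ 2 - ‖u‖ ^ 2)) := by
    set T := Submodule.reflection (ℝ ∙ (p - v))ᗮ with hT
    have hTp : T p = v := Submodule.reflection_sub hnv
    have hTv : T v = p := by
      conv_lhs => rw [← hTp]
      rw [hT, Submodule.reflection_reflection]
    have := (T.measurePreserving).setLIntegral_comp_preimage_emb
      (T.toHomeomorph.measurableEmbedding)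
      (fun u => ENNReal.ofReal (1 / (‖u + p‖ ^ 2 - ‖u‖ ^ 2)))
      {u : E3 | ‖u‖ < R ∧ R < ‖u + p‖}
    rw [← this]
    have hpre : (⇑T) ⁻¹' {u : E3 | ‖u‖ < R ∧ R < ‖u + p‖}
        = {u : E3 | ‖u‖ < R ∧ R < ‖u + v‖} := by
      ext u
      simp only [Set.mem_preimage, Set.mem_setOf_eq]
      rw [show (T u + p) = T (u + v) by rw [map_add, hTv], T.norm_map, T.norm_map]
    rw [hpre]
    apply setLIntegral_congr_fun (meas_lens R v)
    intro u _
    beta_reduce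
    rw [show (T u + p) = T (u + v) by rw [map_add, hTv], T.norm_map, T.norm_map]
  rw [key]
  exact L1aux R hR ρ (by rw [hρ]; exact norm_nonneg p)

noncomputable def c₀ : ℝ := 50 * π + 8 * (volume (ball (0 : E3) 1)).toReal

lemma c₀_nonneg : 0 ≤ c₀ := by
  have := Real.pi_nonneg
  have := ENNReal.toReal_nonneg (a := volume (ball (0 : E3) 1))
  unfold c₀; nlinarith

lemma L2 (R : ℝ) (hR : 0 < R) (hR1 : R ≤ 1) (q : E3) (hq : 4 ≤ ‖q‖) :
    (∫⁻ u in {u : E3 | ‖u‖ < R ∧ R < ‖u + q‖},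
      ENNReal.ofReal (1 / (‖u + q‖ ^ 2 - ‖u‖ ^ 2)))
      ≤ volume (ball (0 : E3) 1) * ENNReal.ofReal (8 / (1 + ‖q‖) ^ 2) := by
  have hbd : ∀ u ∈ {u : E3 | ‖u‖ < R ∧ R < ‖u + q‖},
      ENNReal.ofReal (1 / (‖u + q‖ ^ 2 - ‖u‖ ^ 2)) ≤ ENNReal.ofReal (8 / (1 + ‖q‖) ^ 2) := by
    rintro u ⟨h1, h2⟩
    have hu1 : ‖u‖ < 1 := h1.trans_le hR1
    have h3 : ‖q‖ ≤ ‖u + q‖ + ‖u‖ := by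
      calc ‖q‖ = ‖u + q - u‖ := by rw [add_sub_cancel_left]
        _ ≤ ‖u + q‖ + ‖u‖ := norm_sub_le _ _
    have hd : (8:ℝ) ≤ ‖u + q‖ ^ 2 - ‖u‖ ^ 2 := by nlinarith [norm_nonneg u, norm_nonneg (u + q)]
    apply ENNReal.ofReal_le_ofReal
    rw [div_le_div_iff₀ (by nlinarith) (by positivity)]
    nlinarith [norm_nonneg u, norm_nonneg (u + q)]
  calc (∫⁻ u in {u : E3 | ‖u‖ < R ∧ R < ‖u + q‖},
      ENNReal.ofReal (1 / (‖u + q‖ ^ 2 - ‖u‖ ^ 2)))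
      ≤ ∫⁻ _ in {u : E3 | ‖u‖ < R ∧ R < ‖u + q‖}, ENNReal.ofReal (8 / (1 + ‖q‖) ^ 2) :=
        setLIntegral_mono measurable_const hbd
    _ = ENNReal.ofReal (8 / (1 + ‖q‖) ^ 2) * volume {u : E3 | ‖u‖ < R ∧ R < ‖u + q‖} :=
        by rw [setLIntegral_const]
    _ ≤ ENNReal.ofReal (8 / (1 + ‖q‖) ^ 2) * volume (ball (0 : E3) 1) := by
        apply mul_le_mul_right
        apply measure_mono
        rintro u ⟨h1, _⟩
        simpa [mem_ball, dist_zero_right] using h1.trans_le hR1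
    _ = volume (ball (0 : E3) 1) * ENNReal.ofReal (8 / (1 + ‖q‖) ^ 2) := mul_comm _ _

lemma lens_bound (R : ℝ) (hR : 0 < R) (hR1 : R ≤ 1) (q : E3) :
    (∫⁻ u in {u : E3 | ‖u‖ < R ∧ R < ‖u + q‖},
      ENNReal.ofReal (1 / (‖u + q‖ ^ 2 - ‖u‖ ^ 2)))
      ≤ ENNReal.ofReal (c₀ / (1 + ‖q‖) ^ 2) := by
  rcases le_total ‖q‖ 4 with hq | hq
  · refine (L1 R hR q).trans (ENNReal.ofReal_le_ofReal ?_)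
    have h1 : 2 * π * R ≤ 2 * π := by nlinarith [Real.pi_nonneg]
    have h2 : (1 + ‖q‖) ^ 2 ≤ 25 := by nlinarith [norm_nonneg q]
    rw [le_div_iff₀ (by positivity)]
    have := ENNReal.toReal_nonneg (a := volume (ball (0 : E3) 1))
    unfold c₀
    nlinarith [Real.pi_nonneg]
  · refine (L2 R hR hR1 q hq).trans ?_
    rw [← ENNReal.ofReal_toReal (measure_ball_lt_top (x := (0:E3)) (r := 1)).ne,
      ← ENNReal.ofReal_mul ENNReal.toReal_nonneg]
    apply ENNReal.ofReal_le_ofReal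
    have hQ : (0:ℝ) < (1 + ‖q‖) ^ 2 := by positivity
    rw [le_div_iff₀ hQ]
    have := ENNReal.toReal_nonneg (a := volume (ball (0 : E3) 1))
    have h8 : (volume (ball (0:E3) 1)).toReal * (8 / (1 + ‖q‖) ^ 2) * (1 + ‖q‖) ^ 2
        = 8 * (volume (ball (0:E3) 1)).toReal := by field_simp
    rw [h8]
    unfold c₀
    nlinarith [Real.pi_nonneg]

lemma pointwise_amgm (A a b : ℝ) (ha : 0 < a) (hb : 0 < b) (hA : A = a + b) :
    ENNReal.ofReal (1 / A ^ 2) ≤ ENNReal.ofReal (1 / a) * ENNReal.ofReal (1 / b) := by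
  rw [← ENNReal.ofReal_mul (by positivity)]
  apply ENNReal.ofReal_le_ofReal
  rw [div_mul_div_comm, one_mul]
  exact one_div_le_one_div_of_le (by positivity) (by nlinarith)

/-- `I₂(x) ≤ C` uniformly in `x ∈ (0,1]`. -/
theorem belyakovI_two_bound :
    ∃ C : ℝ, 0 < C ∧ ∀ x : ℝ, 0 < x → x ≤ 1 →
      belyakovI 2 x ≤ ENNReal.ofReal C := by
  have hmeas4 : Measurable fun p : E3 => ENNReal.ofReal ((1 + ‖p‖) ^ (-(4:ℝ))) := by
    have hcont : Continuous fun p : E3 => (1 + ‖p‖) ^ (-(4:ℝ)) :=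
      (continuous_const.add continuous_norm).rpow_const (fun p => Or.inl (ne_of_gt (add_pos_of_pos_of_nonneg one_pos (norm_nonneg p))))
    exact hcont.measurable.ennreal_ofReal
  have hJ : (∫⁻ p : E3, ENNReal.ofReal ((1 + ‖p‖) ^ (-(4:ℝ)))) < ⊤ := by
    have hint : Integrable (fun p : E3 => (1 + ‖p‖) ^ (-(4:ℝ))) volume := by
      apply integrable_one_add_norm
      rw [finrank_euclideanSpace]
      norm_num
    have h1 := hint.2
    rw [HasFiniteIntegral] at h1
    have h2 : (∫⁻ p : E3, ‖(1 + ‖p‖) ^ (-(4:ℝ))‖ₑ)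
        = ∫⁻ p : E3, ENNReal.ofReal ((1 + ‖p‖) ^ (-(4:ℝ))) :=
      lintegral_enorm_of_nonneg fun p => Real.rpow_nonneg (by positivity) _
    rwa [h2] at h1
  set J := ∫⁻ p : E3, ENNReal.ofReal ((1 + ‖p‖) ^ (-(4:ℝ))) with hJdef
  set M : ℝ≥0∞ := ENNReal.ofReal (c₀ ^ 2) * J with hM
  have hMtop : M ≠ ⊤ := ENNReal.mul_ne_top ENNReal.ofReal_ne_top hJ.ne
  refine ⟨M.toReal + 1, by positivity, ?_⟩
  intro x hx hx1
  have main : belyakovI 2 x ≤ M := by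
    have hFG : ∀ p : E3,
        (∫⁻ r in {r : E3 | ‖r‖ < 1 ∧ 1 < ‖r + p‖},
          ∫⁻ r' in {r' : E3 | ‖r'‖ < x ∧ x < ‖r' + -p‖},
            ENNReal.ofReal (1 / (‖r + p‖ ^ 2 - ‖r‖ ^ 2 + ‖r' + -p‖ ^ 2 - ‖r'‖ ^ 2) ^ 2))
        ≤ (∫⁻ r in {r : E3 | ‖r‖ < 1 ∧ 1 < ‖r + p‖},
            ENNReal.ofReal (1 / (‖r + p‖ ^ 2 - ‖r‖ ^ 2))) *
          (∫⁻ r' in {r' : E3 | ‖r'‖ < x ∧ x < ‖r' + -p‖},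
            ENNReal.ofReal (1 / (‖r' + -p‖ ^ 2 - ‖r'‖ ^ 2))) := by
      intro p
      set G := ∫⁻ r' in {r' : E3 | ‖r'‖ < x ∧ x < ‖r' + -p‖},
            ENNReal.ofReal (1 / (‖r' + -p‖ ^ 2 - ‖r'‖ ^ 2)) with hG
      calc (∫⁻ r in {r : E3 | ‖r‖ < 1 ∧ 1 < ‖r + p‖},
          ∫⁻ r' in {r' : E3 | ‖r'‖ < x ∧ x < ‖r' + -p‖},
            ENNReal.ofReal (1 / (‖r + p‖ ^ 2 - ‖r‖ ^ 2 + ‖r' + -p‖ ^ 2 - ‖r'‖ ^ 2) ^ 2))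
          ≤ ∫⁻ r in {r : E3 | ‖r‖ < 1 ∧ 1 < ‖r + p‖},
            ENNReal.ofReal (1 / (‖r + p‖ ^ 2 - ‖r‖ ^ 2)) * G := by
            apply setLIntegral_mono ((meas_integrand p).mul_const G)
            rintro r ⟨hr1, hr2⟩
            have ha : 0 < ‖r + p‖ ^ 2 - ‖r‖ ^ 2 := by nlinarith [norm_nonneg r, norm_nonneg (r + p)]
            calc (∫⁻ r' in {r' : E3 | ‖r'‖ < x ∧ x < ‖r' + -p‖},
                ENNReal.ofReal (1 / (‖r + p‖ ^ 2 - ‖r‖ ^ 2 + ‖r' + -p‖ ^ 2 - ‖r'‖ ^ 2) ^ 2))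
                ≤ ∫⁻ r' in {r' : E3 | ‖r'‖ < x ∧ x < ‖r' + -p‖},
                  ENNReal.ofReal (1 / (‖r + p‖ ^ 2 - ‖r‖ ^ 2)) *
                    ENNReal.ofReal (1 / (‖r' + -p‖ ^ 2 - ‖r'‖ ^ 2)) := by
                  apply setLIntegral_mono ((meas_integrand (-p)).const_mul _)
                  rintro r' ⟨hr'1, hr'2⟩
                  have hb : 0 < ‖r' + -p‖ ^ 2 - ‖r'‖ ^ 2 := by
                    nlinarith [norm_nonneg r', norm_nonneg (r' + -p), hx]
                  exact pointwise_amgm _ _ _ ha hb (by ring)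
              _ = ENNReal.ofReal (1 / (‖r + p‖ ^ 2 - ‖r‖ ^ 2)) * G :=
                  lintegral_const_mul _ (meas_integrand (-p))
        _ = (∫⁻ r in {r : E3 | ‖r‖ < 1 ∧ 1 < ‖r + p‖},
            ENNReal.ofReal (1 / (‖r + p‖ ^ 2 - ‖r‖ ^ 2))) * G :=
            lintegral_mul_const _ (meas_integrand p)
    calc belyakovI 2 x
        = ∫⁻ p : E3, ∫⁻ r in {r : E3 | ‖r‖ < 1 ∧ 1 < ‖r + p‖},
            ∫⁻ r' in {r' : E3 | ‖r'‖ < x ∧ x < ‖r' + -p‖},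
              ENNReal.ofReal (1 / (‖r + p‖ ^ 2 - ‖r‖ ^ 2 + ‖r' + -p‖ ^ 2 - ‖r'‖ ^ 2) ^ 2) := by
          simp only [belyakovI, sub_eq_add_neg]
      _ ≤ ∫⁻ p : E3, (∫⁻ r in {r : E3 | ‖r‖ < 1 ∧ 1 < ‖r + p‖},
            ENNReal.ofReal (1 / (‖r + p‖ ^ 2 - ‖r‖ ^ 2))) *
          (∫⁻ r' in {r' : E3 | ‖r'‖ < x ∧ x < ‖r' + -p‖},
            ENNReal.ofReal (1 / (‖r' + -p‖ ^ 2 - ‖r'‖ ^ 2))) := lintegral_mono hFG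
      _ ≤ ∫⁻ p : E3, ENNReal.ofReal (c₀ / (1 + ‖p‖) ^ 2) * ENNReal.ofReal (c₀ / (1 + ‖p‖) ^ 2) := by
          apply lintegral_mono
          intro p
          apply mul_le_mul'
          · exact lens_bound 1 one_pos le_rfl p
          · have h := lens_bound x hx hx1 (-p)
            rwa [norm_neg] at h
      _ = ∫⁻ p : E3, ENNReal.ofReal (c₀ ^ 2) * ENNReal.ofReal ((1 + ‖p‖) ^ (-(4:ℝ))) := by
          apply lintegral_congr
          intro p
          have h1 : (0:ℝ) < 1 + ‖p‖ := by positivity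
          rw [← ENNReal.ofReal_mul (div_nonneg c₀_nonneg (by positivity)),
            ← ENNReal.ofReal_mul (by positivity : (0:ℝ) ≤ c₀ ^ 2)]
          congr 1
          rw [Real.rpow_neg h1.le, show ((4:ℝ) = ((4:ℕ):ℝ)) by norm_num, Real.rpow_natCast]
          field_simp
      _ = M := by rw [lintegral_const_mul _ hmeas4, hM, hJdef]
  calc belyakovI 2 x ≤ M := main
    _ = ENNReal.ofReal M.toReal := (ENNReal.ofReal_toReal hMtop).symm
    _ ≤ ENNReal.ofReal (M.toReal + 1) := ENNReal.ofReal_le_ofReal (by linarith)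
end

section
/- There exists a constant C > 0, independent of x, such that for every x ∈ (0,1] one has I₃(x) ≤ C x^{−3}, where I₃(x) = ∫_{ℝ³} dp ∫_{|r|<1<|r+p|} dr ∫_{|r'|<x<|r'−p|} dr' (|r+p|² − |r|² + |r'−p|² − |r'|²)^{−3}. -/
open MeasureTheory
open scoped ENNReal

section AuxLemmas

open Metric
open scoped RealInnerProductSpace

noncomputable abbrev E2' := EuclideanSpace ℝ (Fin 2)

lemma measurable_sumsq {n : ℕ} : Measurable fun y : Fin n → ℝ => ∑ j, y j ^ 2 := by
  apply Finset.measurable_sum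
  intro j _
  exact (measurable_pi_apply j).pow_const 2

lemma disk_area (s : ℝ) :
    volume {y : Fin 2 → ℝ | ∑ j, y j ^ 2 < s}
      = ENNReal.ofReal s * volume (ball (0:E2') 1) := by
  rcases le_or_gt s 0 with hs | hs
  · have hempty : {y : Fin 2 → ℝ | ∑ j, y j ^ 2 < s} = ∅ := by
      ext y
      simp only [Set.mem_setOf_eq, Set.mem_empty_iff_false, iff_false, not_lt]
      exact le_trans hs (Finset.sum_nonneg fun j _ => sq_nonneg _)
    rw [hempty, measure_empty, ENNReal.ofReal_eq_zero.2 hs, zero_mul]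
  · have hmp := (EuclideanSpace.volume_preserving_symm_measurableEquiv_toLp (Fin 2)).symm
    have hset : ((MeasurableEquiv.toLp 2 (Fin 2 → ℝ)).symm).symm ⁻¹' (ball (0:E2') (Real.sqrt s))
        = {y : Fin 2 → ℝ | ∑ j, y j ^ 2 < s} := by
      ext y
      simp only [Set.mem_preimage, mem_ball_zero_iff, Set.mem_setOf_eq]
      rw [EuclideanSpace.norm_eq]
      constructor
      · intro h
        have h0 : (0:ℝ) ≤ ∑ j, (((MeasurableEquiv.toLp 2 (Fin 2 → ℝ)).symm).symm y) j ^ 2 :=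
          Finset.sum_nonneg fun j _ => sq_nonneg _
        have := (Real.sqrt_lt_sqrt_iff h0).1 (by simpa using h)
        simpa using this
      · intro h
        have h0 : (0:ℝ) ≤ ∑ j, y j ^ 2 := Finset.sum_nonneg fun j _ => sq_nonneg _
        have : Real.sqrt (∑ j, y j ^ 2) < Real.sqrt s := (Real.sqrt_lt_sqrt_iff h0).2 h
        simpa using this
    rw [← hset, hmp.measure_preimage measurableSet_ball.nullMeasurableSet,
      Measure.addHaar_ball (volume : Measure E2') 0 (Real.sqrt_nonneg s),
      finrank_euclideanSpace_fin, Real.sq_sqrt hs.le]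

lemma shell_area (s t : ℝ) (ht : 0 ≤ t) :
    volume {y : Fin 2 → ℝ | s - t < ∑ j, y j ^ 2 ∧ ∑ j, y j ^ 2 < s}
      ≤ ENNReal.ofReal t * volume (ball (0:E2') 1) := by
  set V₂ := volume (ball (0:E2') 1)
  have hVfin : V₂ ≠ ∞ := measure_ball_lt_top.ne
  have hsub : {y : Fin 2 → ℝ | s - t < ∑ j, y j ^ 2 ∧ ∑ j, y j ^ 2 < s}
      ⊆ {y | ∑ j, y j ^ 2 < s} \ {y | ∑ j, y j ^ 2 < s - t} := by
    intro y hy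
    exact ⟨hy.2, by simp only [Set.mem_setOf_eq, not_lt]; exact hy.1.le⟩
  refine le_trans (measure_mono hsub) ?_
  have hmeas : MeasurableSet {y : Fin 2 → ℝ | ∑ j, y j ^ 2 < s - t} :=
    measurableSet_lt measurable_sumsq measurable_const
  have hss : {y : Fin 2 → ℝ | ∑ j, y j ^ 2 < s - t} ⊆ {y | ∑ j, y j ^ 2 < s} := by
    intro y hy
    simp only [Set.mem_setOf_eq] at hy ⊢
    linarith
  have hfin : volume {y : Fin 2 → ℝ | ∑ j, y j ^ 2 < s - t} ≠ ∞ := by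
    rw [disk_area]
    exact ENNReal.mul_ne_top ENNReal.ofReal_ne_top hVfin
  rw [measure_diff hss hmeas.nullMeasurableSet hfin, disk_area, disk_area]
  rw [tsub_le_iff_right, ← add_mul]
  apply mul_le_mul_left
  calc ENNReal.ofReal s = ENNReal.ofReal (t + (s - t)) := by ring_nf
    _ ≤ ENNReal.ofReal t + ENNReal.ofReal (s - t) := ENNReal.ofReal_add_le

lemma shell_slab (e : E3) (he : ‖e‖ = 1) (R t c w : ℝ) (ht : 0 ≤ t) (hw : 0 ≤ w) :
    volume {r : E3 | R - t < ‖r‖ ^ 2 ∧ ‖r‖ ^ 2 < R ∧ c ≤ ⟪e, r⟫ ∧ ⟪e, r⟫ ≤ c + w}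
      ≤ volume (ball (0:E2') 1) * ENNReal.ofReal t * ENNReal.ofReal w := by
  classical
  set V₂ := volume (ball (0:E2') 1) with hV₂
  -- extend e to an orthonormal basis
  obtain ⟨b, hb⟩ : ∃ b : OrthonormalBasis (Fin 3) ℝ E3, b 0 = e := by
    have hortho : Orthonormal ℝ (({0} : Set (Fin 3)).restrict (fun _ : Fin 3 => e)) := by
      constructor
      · intro i; exact he
      · intro i j hij
        exact absurd (Subtype.ext (by
          have hi := i.2; have hj := j.2
          simp only [Set.mem_singleton_iff] at hi hj
          rw [hi, hj])) hij
    obtain ⟨b, hb⟩ := hortho.exists_orthonormalBasis_extension_of_card_eq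
      (by simp [finrank_euclideanSpace_fin])
    exact ⟨b, hb 0 rfl⟩
  -- the set in Euclidean coordinates
  set A1 : Set (EuclideanSpace ℝ (Fin 3)) :=
    {v | R - t < ∑ i, v i ^ 2 ∧ ∑ i, v i ^ 2 < R ∧ c ≤ v 0 ∧ v 0 ≤ c + w} with hA1
  set A2 : Set (Fin 3 → ℝ) :=
    {u | R - t < ∑ i, u i ^ 2 ∧ ∑ i, u i ^ 2 < R ∧ c ≤ u 0 ∧ u 0 ≤ c + w} with hA2
  have hA2meas : MeasurableSet A2 := by
    apply MeasurableSet.inter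
    · exact measurableSet_lt measurable_const measurable_sumsq
    apply MeasurableSet.inter
    · exact measurableSet_lt measurable_sumsq measurable_const
    apply MeasurableSet.inter
    · exact measurableSet_le measurable_const (measurable_pi_apply 0)
    · exact measurableSet_le (measurable_pi_apply 0) measurable_const
  have hA1meas : MeasurableSet A1 :=
    ((MeasurableEquiv.toLp 2 (Fin 3 → ℝ)).symm).measurable hA2meas
  have hpre : {r : E3 | R - t < ‖r‖ ^ 2 ∧ ‖r‖ ^ 2 < R ∧ c ≤ ⟪e, r⟫ ∧ ⟪e, r⟫ ≤ c + w}
      = b.repr ⁻¹' A1 := by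
    ext r
    have hnorm : ‖r‖ ^ 2 = ∑ i, (b.repr r) i ^ 2 := by
      have h1 : ‖b.repr r‖ = ‖r‖ := b.repr.norm_map r
      rw [← h1, EuclideanSpace.norm_eq,
        Real.sq_sqrt (Finset.sum_nonneg fun j _ => sq_nonneg _)]
      simp [Real.norm_eq_abs, sq_abs]
    have hinner : (b.repr r) 0 = ⟪e, r⟫ := by
      rw [b.repr_apply_apply r 0, hb]
    simp only [Set.mem_setOf_eq, Set.mem_preimage, hA1, hnorm, hinner]
  rw [hpre, b.measurePreserving_repr.measure_preimage hA1meas.nullMeasurableSet]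
  -- move to the product measure on (Fin 3 → ℝ)
  have hmp3 := (EuclideanSpace.volume_preserving_symm_measurableEquiv_toLp (Fin 3)).symm
  have hpre2 : ((MeasurableEquiv.toLp 2 (Fin 3 → ℝ)).symm).symm ⁻¹' A1 = A2 := rfl
  rw [show volume A1 = volume A2 by
    rw [← hpre2, hmp3.measure_preimage hA1meas.nullMeasurableSet]]
  -- split off the first coordinate
  have hmpp := volume_preserving_piFinSuccAbove (fun _ : Fin 3 => ℝ) 0
  set A3 : Set (ℝ × (Fin 2 → ℝ)) :=
    {q | R - t < q.1 ^ 2 + ∑ j, q.2 j ^ 2 ∧ q.1 ^ 2 + ∑ j, q.2 j ^ 2 < R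
      ∧ c ≤ q.1 ∧ q.1 ≤ c + w} with hA3
  have hA3meas : MeasurableSet A3 := by
    have hm : Measurable fun q : ℝ × (Fin 2 → ℝ) => q.1 ^ 2 + ∑ j, q.2 j ^ 2 := by
      have h1 : Measurable fun q : ℝ × (Fin 2 → ℝ) => q.1 ^ 2 :=
        measurable_fst.pow_const 2
      have h2 : Measurable fun q : ℝ × (Fin 2 → ℝ) => ∑ j, q.2 j ^ 2 :=
        (measurable_sumsq (n := 2)).comp measurable_snd
      exact h1.add h2
    apply MeasurableSet.inter
    · exact measurableSet_lt measurable_const hm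
    apply MeasurableSet.inter
    · exact measurableSet_lt hm measurable_const
    apply MeasurableSet.inter
    · exact measurableSet_le measurable_const measurable_fst
    · exact measurableSet_le measurable_fst measurable_const
  have hpre3 : (MeasurableEquiv.piFinSuccAbove (fun _ : Fin 3 => ℝ) 0) ⁻¹' A3 = A2 := by
    ext u
    have hsum : ∑ i, u i ^ 2 = u 0 ^ 2 + ∑ j, u (Fin.succAbove 0 j) ^ 2 :=
      Fin.sum_univ_succAbove (fun i => u i ^ 2) 0
    simp only [Set.mem_preimage, MeasurableEquiv.piFinSuccAbove_apply, hA3, hA2,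
      Set.mem_setOf_eq, Fin.removeNth, Fin.insertNthEquiv, Equiv.coe_fn_symm_mk]
    rw [hsum]
  rw [show volume A2 = volume A3 by
    rw [← hpre3, hmpp.measure_preimage hA3meas.nullMeasurableSet]]
  -- Fubini
  rw [show (volume : Measure (ℝ × (Fin 2 → ℝ))) = volume.prod volume from
    Measure.volume_eq_prod _ _, Measure.prod_apply hA3meas]
  have hslice : ∀ z : ℝ, volume (Prod.mk z ⁻¹' A3)
      ≤ Set.indicator (Set.Icc c (c + w)) (fun _ => ENNReal.ofReal t * V₂) z := by
    intro z
    by_cases hz : z ∈ Set.Icc c (c + w)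
    · rw [Set.indicator_of_mem hz]
      have hsl : Prod.mk z ⁻¹' A3
          ⊆ {y : Fin 2 → ℝ | (R - z ^ 2) - t < ∑ j, y j ^ 2 ∧ ∑ j, y j ^ 2 < R - z ^ 2} := by
        intro y hy
        simp only [Set.mem_preimage, hA3, Set.mem_setOf_eq] at hy
        constructor <;> [linarith [hy.1]; linarith [hy.2.1]]
      exact le_trans (measure_mono hsl) (shell_area _ t ht)
    · rw [Set.indicator_of_notMem hz]
      have : Prod.mk z ⁻¹' A3 = ∅ := by
        ext y
        simp only [Set.mem_preimage, hA3, Set.mem_setOf_eq, Set.mem_empty_iff_false, iff_false]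
        intro hy
        exact hz ⟨hy.2.2.1, hy.2.2.2⟩
      rw [this, measure_empty]
  calc ∫⁻ z, volume (Prod.mk z ⁻¹' A3)
      ≤ ∫⁻ z, Set.indicator (Set.Icc c (c + w)) (fun _ => ENNReal.ofReal t * V₂) z :=
        lintegral_mono hslice
    _ = (ENNReal.ofReal t * V₂) * volume (Set.Icc c (c + w)) := by
        rw [lintegral_indicator measurableSet_Icc, setLIntegral_const]
    _ = V₂ * ENNReal.ofReal t * ENNReal.ofReal w := by
        rw [Real.volume_Icc]
        ring_nf

lemma dyadic_piece (t₀ : ℝ) (ht₀ : 0 < t₀) (k : ℕ) :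
    (t₀ * (4:ℝ)⁻¹ ^ (k+1)) ^ (-(3/2) : ℝ) * (t₀ * (4:ℝ)⁻¹ ^ k) ^ 2
      = 8 * t₀ ^ ((1/2) : ℝ) * (2:ℝ)⁻¹ ^ k := by
  have h4 : ((4:ℝ)⁻¹ ^ (k+1)) = ((4:ℝ) ^ (k+1))⁻¹ := by rw [inv_pow]
  have h4pos : (0:ℝ) < (4:ℝ) ^ (k+1) := by positivity
  have key : ((4:ℝ) ^ (k+1)) ^ ((3/2) : ℝ) = (8:ℝ) ^ (k+1) := by
    have : ((4:ℝ) ^ (k+1)) = (2:ℝ) ^ ((2*(k+1) : ℕ)) := by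
      rw [pow_mul]; norm_num
    rw [this, ← Real.rpow_natCast (2:ℝ) (2*(k+1)), ← Real.rpow_mul (by norm_num),
      show ((2*(k+1) : ℕ) : ℝ) * (3/2) = ((3*(k+1) : ℕ) : ℝ) by push_cast; ring,
      Real.rpow_natCast, pow_mul]
    norm_num
  have hmain : (t₀ * (4:ℝ)⁻¹ ^ (k+1)) ^ (-(3/2) : ℝ)
      = t₀ ^ (-(3/2) : ℝ) * (8:ℝ) ^ (k+1) := by
    rw [h4, Real.mul_rpow ht₀.le (by positivity), Real.inv_rpow h4pos.le,
      Real.rpow_neg h4pos.le, inv_inv, key]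
  rw [hmain, mul_pow]
  have ht2 : (t₀:ℝ) ^ (2:ℕ) = t₀ ^ ((2:ℕ) : ℝ) := (Real.rpow_natCast t₀ 2).symm
  have hcomb : t₀ ^ (-(3/2) : ℝ) * t₀ ^ ((2:ℕ) : ℝ) = t₀ ^ ((1/2) : ℝ) := by
    rw [← Real.rpow_add ht₀]; norm_num
  have hpow : ((4:ℝ)⁻¹ ^ k) ^ (2:ℕ) = (16:ℝ)⁻¹ ^ k := by
    rw [← pow_mul, mul_comm k 2, pow_mul]
    norm_num
  calc t₀ ^ (-(3/2) : ℝ) * (8:ℝ) ^ (k+1) * (t₀ ^ (2:ℕ) * ((4:ℝ)⁻¹ ^ k) ^ (2:ℕ))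
      = (t₀ ^ (-(3/2) : ℝ) * t₀ ^ ((2:ℕ):ℝ)) * ((8:ℝ) ^ (k+1) * (16:ℝ)⁻¹ ^ k) := by
        rw [← ht2, hpow]; ring
    _ = 8 * t₀ ^ ((1/2) : ℝ) * (2:ℝ)⁻¹ ^ k := by
        rw [hcomb, pow_succ']
        have : (8:ℝ) ^ k * (16:ℝ)⁻¹ ^ k = (2:ℝ)⁻¹ ^ k := by
          rw [← mul_pow]; norm_num
        rw [mul_assoc, this]; ring

lemma dyadic_bound {α : Type*} [MeasurableSpace α] (μ : Measure α) (S : Set α) (g : α → ℝ)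
    (hg : ∀ a ∈ S, 0 < g a) {t₀ : ℝ} (ht₀ : 0 < t₀) (M K : ℝ≥0∞)
    (hM : μ S ≤ M)
    (hK : ∀ u : ℝ, 0 < u → μ (S ∩ {a | g a < u}) ≤ K * ENNReal.ofReal (u ^ 2)) :
    ∫⁻ a in S, ENNReal.ofReal (g a ^ (-(3/2) : ℝ)) ∂μ
      ≤ M * ENNReal.ofReal (t₀ ^ (-(3/2) : ℝ)) + K * ENNReal.ofReal (16 * t₀ ^ ((1/2) : ℝ)) := by
  classical
  set f : α → ℝ≥0∞ := fun a => ENNReal.ofReal (g a ^ (-(3/2) : ℝ)) with hf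
  set A : Set α := S ∩ {a | t₀ ≤ g a} with hA
  set B : ℕ → Set α := fun k => S ∩ {a | t₀ * (4:ℝ)⁻¹ ^ (k+1) ≤ g a ∧ g a < t₀ * (4:ℝ)⁻¹ ^ k}
    with hB
  -- covering
  have hcov : S ⊆ A ∪ ⋃ k, B k := by
    intro a ha
    rcases le_or_gt t₀ (g a) with h | h
    · exact Or.inl ⟨ha, h⟩
    · right
      have hga : 0 < g a := hg a ha
      have hex : ∃ n : ℕ, t₀ * (4:ℝ)⁻¹ ^ (n+1) ≤ g a := by
        obtain ⟨n, hn⟩ := exists_pow_lt_of_lt_one (div_pos hga ht₀) (by norm_num : (4:ℝ)⁻¹ < 1)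
        refine ⟨n, ?_⟩
        have h1 : (4:ℝ)⁻¹ ^ (n+1) ≤ (4:ℝ)⁻¹ ^ n := by
          apply pow_le_pow_of_le_one (by norm_num) (by norm_num); omega
        have h2 : (4:ℝ)⁻¹ ^ n * t₀ < g a := (lt_div_iff₀ ht₀).1 hn
        nlinarith [ht₀.le]
      set k := Nat.find hex with hk
      refine Set.mem_iUnion.2 ⟨k, ha, Nat.find_spec hex, ?_⟩
      rcases Nat.eq_zero_or_pos k with h0 | hpos
      · rw [h0]; simpa using h
      · have := Nat.find_min hex (m := k - 1) (by omega)
        have hk1 : k - 1 + 1 = k := by omega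
        rw [hk1] at this
        exact lt_of_not_ge this
  -- main estimate
  calc ∫⁻ a in S, f a ∂μ ≤ ∫⁻ a in A ∪ ⋃ k, B k, f a ∂μ := lintegral_mono_set hcov
    _ ≤ ∫⁻ a in A, f a ∂μ + ∫⁻ a in ⋃ k, B k, f a ∂μ := lintegral_union_le _ _ _
    _ ≤ M * ENNReal.ofReal (t₀ ^ (-(3/2) : ℝ)) + K * ENNReal.ofReal (16 * t₀ ^ ((1/2) : ℝ)) := by
        gcongr
        · -- A part
          have : ∫⁻ a in A, f a ∂μ ≤ ∫⁻ _ in A, ENNReal.ofReal (t₀ ^ (-(3/2) : ℝ)) ∂μ := by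
            apply setLIntegral_mono measurable_const
            intro a ha
            exact ENNReal.ofReal_le_ofReal
              (Real.rpow_le_rpow_of_nonpos ht₀ ha.2 (by norm_num))
          refine this.trans ?_
          rw [setLIntegral_const]
          rw [mul_comm]
          exact mul_le_mul_left (le_trans (measure_mono Set.inter_subset_left) hM) _
        · -- B part
          refine (lintegral_iUnion_le _ _).trans ?_
          have hterm : ∀ k : ℕ, ∫⁻ a in B k, f a ∂μ
              ≤ (K * ENNReal.ofReal (8 * t₀ ^ ((1/2) : ℝ))) * (2:ℝ≥0∞)⁻¹ ^ k := by
            intro k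
            have hu : (0:ℝ) < t₀ * (4:ℝ)⁻¹ ^ k := by positivity
            have hl : (0:ℝ) < t₀ * (4:ℝ)⁻¹ ^ (k+1) := by positivity
            have step1 : ∫⁻ a in B k, f a ∂μ
                ≤ ∫⁻ _ in B k, ENNReal.ofReal ((t₀ * (4:ℝ)⁻¹ ^ (k+1)) ^ (-(3/2) : ℝ)) ∂μ := by
              apply setLIntegral_mono measurable_const
              intro a ha
              exact ENNReal.ofReal_le_ofReal
                (Real.rpow_le_rpow_of_nonpos hl ha.2.1 (by norm_num))
            refine step1.trans ?_
            rw [setLIntegral_const]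
            have hBsub : B k ⊆ S ∩ {a | g a < t₀ * (4:ℝ)⁻¹ ^ k} := by
              intro a ha; exact ⟨ha.1, ha.2.2⟩
            have hmeas : μ (B k) ≤ K * ENNReal.ofReal ((t₀ * (4:ℝ)⁻¹ ^ k) ^ 2) :=
              le_trans (measure_mono hBsub) (hK _ hu)
            calc ENNReal.ofReal ((t₀ * (4:ℝ)⁻¹ ^ (k+1)) ^ (-(3/2) : ℝ)) * μ (B k)
                ≤ ENNReal.ofReal ((t₀ * (4:ℝ)⁻¹ ^ (k+1)) ^ (-(3/2) : ℝ))
                  * (K * ENNReal.ofReal ((t₀ * (4:ℝ)⁻¹ ^ k) ^ 2)) := by gcongr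
              _ = K * (ENNReal.ofReal ((t₀ * (4:ℝ)⁻¹ ^ (k+1)) ^ (-(3/2) : ℝ))
                  * ENNReal.ofReal ((t₀ * (4:ℝ)⁻¹ ^ k) ^ 2)) := by ring
              _ = K * ENNReal.ofReal ((t₀ * (4:ℝ)⁻¹ ^ (k+1)) ^ (-(3/2) : ℝ)
                  * (t₀ * (4:ℝ)⁻¹ ^ k) ^ 2) := by
                    rw [← ENNReal.ofReal_mul (by positivity)]
              _ = K * ENNReal.ofReal (8 * t₀ ^ ((1/2) : ℝ) * (2:ℝ)⁻¹ ^ k) := by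
                    rw [dyadic_piece t₀ ht₀ k]
              _ = (K * ENNReal.ofReal (8 * t₀ ^ ((1/2) : ℝ))) * (2:ℝ≥0∞)⁻¹ ^ k := by
                    rw [ENNReal.ofReal_mul (by positivity), ← mul_assoc]
                    congr 1
                    rw [ENNReal.ofReal_pow (by norm_num), ENNReal.ofReal_inv_of_pos (by norm_num)]
                    norm_num
          calc ∑' k, ∫⁻ a in B k, f a ∂μ
              ≤ ∑' k, (K * ENNReal.ofReal (8 * t₀ ^ ((1/2) : ℝ))) * (2:ℝ≥0∞)⁻¹ ^ k :=
                ENNReal.tsum_le_tsum hterm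
            _ = (K * ENNReal.ofReal (8 * t₀ ^ ((1/2) : ℝ))) * (1 - 2⁻¹)⁻¹ := by
                rw [ENNReal.tsum_mul_left, ENNReal.tsum_geometric]
            _ = K * ENNReal.ofReal (16 * t₀ ^ ((1/2) : ℝ)) := by
                have h2 : ((1:ℝ≥0∞) - 2⁻¹)⁻¹ = 2 := by
                  rw [ENNReal.one_sub_inv_two, inv_inv]
                rw [h2, mul_assoc]
                congr 1
                rw [show (2:ℝ≥0∞) = ENNReal.ofReal 2 by norm_num,
                  ← ENNReal.ofReal_mul (by positivity)]
                congr 1; ring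

noncomputable abbrev V2c : ℝ≥0∞ := volume (ball (0:E2') 1)
noncomputable abbrev V3c : ℝ≥0∞ := volume (ball (0:E3) 1)

/-- The inner integral Φ. -/
noncomputable def Phi (x : ℝ) (p : E3) : ℝ≥0∞ :=
  ∫⁻ r in {r : E3 | ‖r‖ < x ∧ x < ‖r - p‖},
    ENNReal.ofReal ((‖r - p‖ ^ 2 - ‖r‖ ^ 2) ^ (-(3/2) : ℝ))

lemma small_b_bound {x : ℝ} (hx : 0 < x) {p : E3} (hp : p ≠ 0) {u : ℝ} (hu : 0 < u) :
    volume ({r : E3 | ‖r‖ < x ∧ x < ‖r - p‖} ∩ {r | ‖r - p‖ ^ 2 - ‖r‖ ^ 2 < u})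
      ≤ (V2c * ENNReal.ofReal ((2 * ‖p‖)⁻¹)) * ENNReal.ofReal (u ^ 2) := by
  have hpn : 0 < ‖p‖ := norm_pos_iff.2 hp
  set e : E3 := ‖p‖⁻¹ • p with he_def
  have he : ‖e‖ = 1 := by
    rw [he_def, norm_smul, norm_inv, norm_norm, inv_mul_cancel₀ hpn.ne']
  have hsub : {r : E3 | ‖r‖ < x ∧ x < ‖r - p‖} ∩ {r | ‖r - p‖ ^ 2 - ‖r‖ ^ 2 < u}
      ⊆ {r : E3 | x ^ 2 - u < ‖r‖ ^ 2 ∧ ‖r‖ ^ 2 < x ^ 2 ∧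
          (‖p‖ ^ 2 - u) / (2 * ‖p‖) ≤ ⟪e, r⟫ ∧
          ⟪e, r⟫ ≤ (‖p‖ ^ 2 - u) / (2 * ‖p‖) + u / (2 * ‖p‖)} := by
    intro r hr
    obtain ⟨⟨hr1, hr2⟩, hr3⟩ := hr
    simp only [Set.mem_setOf_eq] at hr3 ⊢
    have hb : ‖r - p‖ ^ 2 - ‖r‖ ^ 2 = ‖p‖ ^ 2 - 2 * ⟪r, p⟫ := by
      rw [norm_sub_sq_real]; ring
    have hxr : ‖r‖ ^ 2 < x ^ 2 := by
      have := norm_nonneg r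
      nlinarith
    have hxrp : x ^ 2 < ‖r - p‖ ^ 2 := by
      have := norm_nonneg (r - p)
      nlinarith
    have hbpos : 0 < ‖r - p‖ ^ 2 - ‖r‖ ^ 2 := by nlinarith
    have hinner : ⟪e, r⟫ = ⟪r, p⟫ / ‖p‖ := by
      rw [he_def, real_inner_smul_left, real_inner_comm]
      field_simp
    refine ⟨by nlinarith, hxr, ?_, ?_⟩
    · rw [hinner, div_le_div_iff₀ (by positivity) (by positivity)]
      nlinarith
    · rw [hinner, ← add_div, div_le_div_iff₀ (by positivity) (by positivity)]
      nlinarith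
  refine le_trans (measure_mono hsub) ?_
  refine le_trans (shell_slab e he (x ^ 2) u ((‖p‖ ^ 2 - u) / (2 * ‖p‖)) (u / (2 * ‖p‖))
    hu.le (by positivity)) ?_
  rw [mul_assoc, ← ENNReal.ofReal_mul hu.le, mul_assoc, ← ENNReal.ofReal_mul (by positivity)]
  apply mul_le_mul_right
  apply ENNReal.ofReal_le_ofReal
  rw [div_eq_mul_inv]
  ring_nf
  exact le_refl _

lemma Phi_bound1 {x : ℝ} (hx : 0 < x) {p : E3} (hp : p ≠ 0) :
    Phi x p ≤ (V3c + 8 * V2c) * ENNReal.ofReal (x ^ ((3:ℝ)/4) * ‖p‖ ^ (-(3:ℝ)/4)) := by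
  have hpn : 0 < ‖p‖ := norm_pos_iff.2 hp
  set t₀ : ℝ := x ^ ((3:ℝ)/2) * ‖p‖ ^ ((1:ℝ)/2) with ht₀def
  have ht₀ : 0 < t₀ := by positivity
  have hg : ∀ r ∈ {r : E3 | ‖r‖ < x ∧ x < ‖r - p‖}, 0 < ‖r - p‖ ^ 2 - ‖r‖ ^ 2 := by
    intro r hr
    have h1 := hr.1; have h2 := hr.2
    have := norm_nonneg r
    nlinarith
  have hM : volume {r : E3 | ‖r‖ < x ∧ x < ‖r - p‖}
      ≤ ENNReal.ofReal (x ^ 3) * V3c := by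
    have hsub : {r : E3 | ‖r‖ < x ∧ x < ‖r - p‖} ⊆ ball (0:E3) x :=
      fun r hr => mem_ball_zero_iff.2 hr.1
    refine le_trans (measure_mono hsub) ?_
    rw [Measure.addHaar_ball volume (0:E3) hx.le, finrank_euclideanSpace_fin]
  have key := dyadic_bound volume {r : E3 | ‖r‖ < x ∧ x < ‖r - p‖}
    (fun r => ‖r - p‖ ^ 2 - ‖r‖ ^ 2) hg ht₀ (ENNReal.ofReal (x ^ 3) * V3c)
    (V2c * ENNReal.ofReal ((2 * ‖p‖)⁻¹)) hM
    (fun u hu => small_b_bound hx hp hu)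
  refine le_trans key (le_of_eq ?_)
  have e1 : x ^ 3 * t₀ ^ (-(3/2) : ℝ) = x ^ ((3:ℝ)/4) * ‖p‖ ^ (-(3:ℝ)/4) := by
    rw [ht₀def, Real.mul_rpow (by positivity) (by positivity),
      ← Real.rpow_natCast x 3, ← Real.rpow_mul hx.le, ← Real.rpow_mul hpn.le, ← mul_assoc,
      ← Real.rpow_add hx]
    norm_num
  have e2 : (2 * ‖p‖)⁻¹ * (16 * t₀ ^ ((1/2) : ℝ)) = 8 * (x ^ ((3:ℝ)/4) * ‖p‖ ^ (-(3:ℝ)/4)) := by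
    have h1 : t₀ ^ ((1/2) : ℝ) = x ^ ((3:ℝ)/4) * ‖p‖ ^ ((1:ℝ)/4) := by
      rw [ht₀def, Real.mul_rpow (by positivity) (by positivity), ← Real.rpow_mul hx.le,
        ← Real.rpow_mul hpn.le]
      norm_num
    have h2 : ‖p‖⁻¹ * ‖p‖ ^ ((1:ℝ)/4) = ‖p‖ ^ (-(3:ℝ)/4) := by
      rw [show ‖p‖⁻¹ = ‖p‖ ^ (-(1:ℝ)) by rw [Real.rpow_neg_one], ← Real.rpow_add hpn]
      norm_num
    rw [h1, mul_inv]
    calc 2⁻¹ * ‖p‖⁻¹ * (16 * (x ^ ((3:ℝ)/4) * ‖p‖ ^ ((1:ℝ)/4)))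
        = 8 * (x ^ ((3:ℝ)/4) * (‖p‖⁻¹ * ‖p‖ ^ ((1:ℝ)/4))) := by ring
      _ = 8 * (x ^ ((3:ℝ)/4) * ‖p‖ ^ (-(3:ℝ)/4)) := by rw [h2]
  calc ENNReal.ofReal (x ^ 3) * V3c * ENNReal.ofReal (t₀ ^ (-(3/2) : ℝ))
        + V2c * ENNReal.ofReal ((2 * ‖p‖)⁻¹) * ENNReal.ofReal (16 * t₀ ^ ((1/2) : ℝ))
      = V3c * (ENNReal.ofReal (x ^ 3) * ENNReal.ofReal (t₀ ^ (-(3/2) : ℝ)))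
        + V2c * (ENNReal.ofReal ((2 * ‖p‖)⁻¹) * ENNReal.ofReal (16 * t₀ ^ ((1/2) : ℝ))) := by
        ring
    _ = V3c * ENNReal.ofReal (x ^ 3 * t₀ ^ (-(3/2) : ℝ))
        + V2c * ENNReal.ofReal ((2 * ‖p‖)⁻¹ * (16 * t₀ ^ ((1/2) : ℝ))) := by
        rw [← ENNReal.ofReal_mul (by positivity), ← ENNReal.ofReal_mul (by positivity)]
    _ = V3c * ENNReal.ofReal (x ^ ((3:ℝ)/4) * ‖p‖ ^ (-(3:ℝ)/4))
        + V2c * ENNReal.ofReal (8 * (x ^ ((3:ℝ)/4) * ‖p‖ ^ (-(3:ℝ)/4))) := by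
        rw [e1, e2]
    _ = (V3c + 8 * V2c) * ENNReal.ofReal (x ^ ((3:ℝ)/4) * ‖p‖ ^ (-(3:ℝ)/4)) := by
        rw [ENNReal.ofReal_mul (by norm_num : (0:ℝ) ≤ 8),
          show ENNReal.ofReal (8:ℝ) = (8:ℝ≥0∞) by norm_num]
        ring

lemma Phi_bound2 {x : ℝ} (hx : 0 < x) {p : E3} (hp : 4 * x ≤ ‖p‖) :
    Phi x p ≤ V3c * ENNReal.ofReal (3 * x ^ 3 * (‖p‖ ^ 3)⁻¹) := by
  have hpn : 0 < ‖p‖ := by linarith [hx]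
  have hb : ∀ r ∈ {r : E3 | ‖r‖ < x ∧ x < ‖r - p‖},
      ENNReal.ofReal ((‖r - p‖ ^ 2 - ‖r‖ ^ 2) ^ (-(3/2) : ℝ))
        ≤ ENNReal.ofReal (3 * (‖p‖ ^ 3)⁻¹) := by
    intro r hr
    apply ENNReal.ofReal_le_ofReal
    have h1 : ‖p‖ - ‖r‖ ≤ ‖r - p‖ := by
      have := norm_sub_norm_le p r
      rw [norm_sub_rev] at this
      linarith [this]
    have hblow : ‖p‖ ^ 2 / 2 ≤ ‖r - p‖ ^ 2 - ‖r‖ ^ 2 := by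
      have hr1 := hr.1
      have hrn := norm_nonneg r
      have hrpn := norm_nonneg (r - p)
      nlinarith
    have hppos : 0 < ‖p‖ ^ 2 / 2 := by positivity
    calc (‖r - p‖ ^ 2 - ‖r‖ ^ 2) ^ (-(3/2) : ℝ)
        ≤ (‖p‖ ^ 2 / 2) ^ (-(3/2) : ℝ) :=
          Real.rpow_le_rpow_of_nonpos hppos hblow (by norm_num)
      _ ≤ 3 * (‖p‖ ^ 3)⁻¹ := by
          rw [Real.rpow_neg (by positivity), Real.div_rpow (by positivity) (by norm_num)]
          have hq3 : (‖p‖ ^ 2 : ℝ) ^ ((3:ℝ)/2) = ‖p‖ ^ 3 := by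
            rw [← Real.rpow_natCast ‖p‖ 2, ← Real.rpow_mul hpn.le,
              show ((2:ℕ):ℝ) * ((3:ℝ)/2) = ((3:ℕ):ℝ) by push_cast; ring,
              Real.rpow_natCast]
          have h2r : (2:ℝ) ^ ((3:ℝ)/2) ≤ 3 := by
            have hs : (2:ℝ) ^ ((3:ℝ)/2) = Real.sqrt 8 := by
              rw [show ((3:ℝ)/2) = (3:ℝ) * (1/2) by norm_num, Real.rpow_mul (by norm_num),
                show ((2:ℝ) ^ (3:ℝ)) = 8 by
                  rw [show (3:ℝ) = ((3:ℕ):ℝ) by norm_num, Real.rpow_natCast]; norm_num,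
                Real.sqrt_eq_rpow]
            rw [hs]
            nlinarith [Real.sq_sqrt (by norm_num : (8:ℝ) ≥ 0), Real.sqrt_nonneg 8]
          rw [hq3, inv_div, div_le_iff₀ (by positivity)]
          calc (2:ℝ) ^ ((3:ℝ)/2) ≤ 3 := h2r
            _ = 3 * (‖p‖ ^ 3)⁻¹ * ‖p‖ ^ 3 := by field_simp
  calc Phi x p ≤ ∫⁻ _ in {r : E3 | ‖r‖ < x ∧ x < ‖r - p‖},
        ENNReal.ofReal (3 * (‖p‖ ^ 3)⁻¹) := setLIntegral_mono measurable_const hb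
    _ = ENNReal.ofReal (3 * (‖p‖ ^ 3)⁻¹) * volume {r : E3 | ‖r‖ < x ∧ x < ‖r - p‖} :=
        setLIntegral_const _ _
    _ ≤ ENNReal.ofReal (3 * (‖p‖ ^ 3)⁻¹) * (ENNReal.ofReal (x ^ 3) * V3c) := by
        apply mul_le_mul_right
        have hsub : {r : E3 | ‖r‖ < x ∧ x < ‖r - p‖} ⊆ ball (0:E3) x :=
          fun r hr => mem_ball_zero_iff.2 hr.1
        refine le_trans (measure_mono hsub) ?_
        rw [Measure.addHaar_ball volume (0:E3) hx.le, finrank_euclideanSpace_fin]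
    _ = V3c * ENNReal.ofReal (3 * x ^ 3 * (‖p‖ ^ 3)⁻¹) := by
        rw [show ENNReal.ofReal (3 * (‖p‖ ^ 3)⁻¹) * (ENNReal.ofReal (x ^ 3) * V3c)
            = (ENNReal.ofReal (3 * (‖p‖ ^ 3)⁻¹) * ENNReal.ofReal (x ^ 3)) * V3c by ring,
          ← ENNReal.ofReal_mul (by positivity),
          show 3 * (‖p‖ ^ 3)⁻¹ * x ^ 3 = 3 * x ^ 3 * (‖p‖ ^ 3)⁻¹ by ring]
        ring

lemma my_measurable_rpow_const (c : ℝ) : Measurable fun x : ℝ => x ^ c := by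
  have h : (fun x : ℝ => x ^ c) = fun x : ℝ =>
      if x < 0 then Real.exp (Real.log x * c) * Real.cos (c * Real.pi)
      else if x = 0 then (if c = 0 then 1 else 0) else Real.exp (Real.log x * c) := by
    funext x
    rcases lt_trichotomy x 0 with hx | hx | hx
    · simp [hx, not_lt.2 hx.le, Real.rpow_def_of_neg hx, hx.ne]
    · subst hx; simp [Real.rpow_def_of_pos, lt_irrefl]
      rcases eq_or_ne c 0 with rfl | hc <;> simp [Real.rpow_zero, Real.zero_rpow, *]
    · simp [not_lt.2 hx.le, hx.ne', Real.rpow_def_of_pos hx]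
  rw [h]
  refine Measurable.ite (measurableSet_lt measurable_id measurable_const)
    ((Real.measurable_log.mul measurable_const).exp.mul measurable_const) ?_
  exact Measurable.ite (measurableSet_eq) measurable_const
    ((Real.measurable_log.mul measurable_const).exp)

lemma core_ineq {a b : ℝ} (ha : 0 < a) (hb : 0 < b) :
    1 / (a + b) ^ 3 ≤ 8⁻¹ * (a ^ (-(3/2) : ℝ) * b ^ (-(3/2) : ℝ)) := by
  have hab : 0 < a * b := mul_pos ha hb
  have h1 : a ^ (-(3/2) : ℝ) * b ^ (-(3/2) : ℝ) = (a * b) ^ (-(3/2) : ℝ) :=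
    (Real.mul_rpow ha.le hb.le).symm
  have h2 : a * b ≤ ((a + b) / 2) ^ 2 := by nlinarith [sq_nonneg (a - b)]
  have h3 : (((a + b) / 2) ^ 2 : ℝ) ^ (-(3/2) : ℝ) ≤ (a * b) ^ (-(3/2) : ℝ) :=
    Real.rpow_le_rpow_of_nonpos hab h2 (by norm_num)
  have h4 : ((((a + b) / 2) ^ 2 : ℝ)) ^ (-(3/2) : ℝ) = 8 * (1 / (a + b) ^ 3) := by
    rw [Real.rpow_neg (by positivity), ← Real.rpow_natCast ((a+b)/2) 2,
      ← Real.rpow_mul (by positivity),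
      show ((2:ℕ):ℝ) * (3/2) = ((3:ℕ):ℝ) by push_cast; ring, Real.rpow_natCast, div_pow]
    have hapb : (0:ℝ) < a + b := by linarith
    field_simp
    norm_num
  rw [h1]
  linarith [h3, h4.symm.le]

lemma inner_reduction {x : ℝ} (hx : 0 < x) {p : E3} (hp : p ≠ 0) :
    (∫⁻ r in {r : E3 | ‖r‖ < 1 ∧ 1 < ‖r + p‖},
      ∫⁻ r' in {r' : E3 | ‖r'‖ < x ∧ x < ‖r' - p‖},
        ENNReal.ofReal (1 / (‖r + p‖ ^ 2 - ‖r‖ ^ 2 + ‖r' - p‖ ^ 2 - ‖r'‖ ^ 2) ^ 3))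
      ≤ ENNReal.ofReal 8⁻¹ * (Phi 1 (-p) * Phi x p) := by
  have hV3 : V3c ≠ ⊤ := measure_ball_lt_top.ne
  have hV2 : V2c ≠ ⊤ := measure_ball_lt_top.ne
  have hC₁top : V3c + 8 * V2c ≠ ⊤ :=
    ENNReal.add_ne_top.2 ⟨hV3, ENNReal.mul_ne_top (by norm_num) hV2⟩
  have hΦfin : Phi x p ≠ ⊤ := by
    refine ne_top_of_le_ne_top ?_ (Phi_bound1 hx hp)
    exact ENNReal.mul_ne_top hC₁top ENNReal.ofReal_ne_top
  have ha_pos : ∀ r ∈ {r : E3 | ‖r‖ < 1 ∧ 1 < ‖r + p‖}, 0 < ‖r + p‖ ^ 2 - ‖r‖ ^ 2 := by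
    intro r hr
    have h1 := hr.1; have h2 := hr.2
    have := norm_nonneg r
    nlinarith
  have hb_pos : ∀ r' ∈ {r' : E3 | ‖r'‖ < x ∧ x < ‖r' - p‖}, 0 < ‖r' - p‖ ^ 2 - ‖r'‖ ^ 2 := by
    intro r' hr'
    have h1 := hr'.1; have h2 := hr'.2
    have := norm_nonneg r'
    nlinarith
  have hbmeas : Measurable fun r' : E3 =>
      ENNReal.ofReal ((‖r' - p‖ ^ 2 - ‖r'‖ ^ 2) ^ (-(3/2) : ℝ)) := by
    have hc : Continuous fun r' : E3 => (‖r' - p‖ ^ 2 - ‖r'‖ ^ 2 : ℝ) :=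
      (((continuous_id.sub continuous_const).norm.pow 2).sub (continuous_norm.pow 2))
    exact ((my_measurable_rpow_const _).comp hc.measurable).ennreal_ofReal
  have hameas : Measurable fun r : E3 =>
      ENNReal.ofReal (8⁻¹ * (‖r + p‖ ^ 2 - ‖r‖ ^ 2) ^ (-(3/2) : ℝ)) := by
    have hc : Continuous fun r : E3 => (‖r + p‖ ^ 2 - ‖r‖ ^ 2 : ℝ) :=
      (((continuous_id.add continuous_const).norm.pow 2).sub (continuous_norm.pow 2))
    exact (((my_measurable_rpow_const _).comp hc.measurable).const_mul _).ennreal_ofReal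
  have hstep1 : ∀ r ∈ {r : E3 | ‖r‖ < 1 ∧ 1 < ‖r + p‖},
      (∫⁻ r' in {r' : E3 | ‖r'‖ < x ∧ x < ‖r' - p‖},
        ENNReal.ofReal (1 / (‖r + p‖ ^ 2 - ‖r‖ ^ 2 + ‖r' - p‖ ^ 2 - ‖r'‖ ^ 2) ^ 3))
      ≤ ENNReal.ofReal (8⁻¹ * (‖r + p‖ ^ 2 - ‖r‖ ^ 2) ^ (-(3/2) : ℝ)) * Phi x p := by
    intro r hr
    have har := ha_pos r hr
    calc (∫⁻ r' in {r' : E3 | ‖r'‖ < x ∧ x < ‖r' - p‖},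
          ENNReal.ofReal (1 / (‖r + p‖ ^ 2 - ‖r‖ ^ 2 + ‖r' - p‖ ^ 2 - ‖r'‖ ^ 2) ^ 3))
        ≤ ∫⁻ r' in {r' : E3 | ‖r'‖ < x ∧ x < ‖r' - p‖},
            ENNReal.ofReal (8⁻¹ * (‖r + p‖ ^ 2 - ‖r‖ ^ 2) ^ (-(3/2) : ℝ))
              * ENNReal.ofReal ((‖r' - p‖ ^ 2 - ‖r'‖ ^ 2) ^ (-(3/2) : ℝ)) := by
          apply setLIntegral_mono (hbmeas.const_mul _)
          intro r' hr'
          have hbr := hb_pos r' hr'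
          rw [← ENNReal.ofReal_mul (by positivity)]
          apply ENNReal.ofReal_le_ofReal
          have hgroup : ‖r + p‖ ^ 2 - ‖r‖ ^ 2 + ‖r' - p‖ ^ 2 - ‖r'‖ ^ 2
              = (‖r + p‖ ^ 2 - ‖r‖ ^ 2) + (‖r' - p‖ ^ 2 - ‖r'‖ ^ 2) := by ring
          rw [hgroup, mul_assoc]
          exact core_ineq har hbr
      _ = ENNReal.ofReal (8⁻¹ * (‖r + p‖ ^ 2 - ‖r‖ ^ 2) ^ (-(3/2) : ℝ)) * Phi x p := by
          rw [Phi]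
          exact lintegral_const_mul' _ _ ENNReal.ofReal_ne_top
  calc (∫⁻ r in {r : E3 | ‖r‖ < 1 ∧ 1 < ‖r + p‖},
        ∫⁻ r' in {r' : E3 | ‖r'‖ < x ∧ x < ‖r' - p‖},
          ENNReal.ofReal (1 / (‖r + p‖ ^ 2 - ‖r‖ ^ 2 + ‖r' - p‖ ^ 2 - ‖r'‖ ^ 2) ^ 3))
      ≤ ∫⁻ r in {r : E3 | ‖r‖ < 1 ∧ 1 < ‖r + p‖},
          ENNReal.ofReal (8⁻¹ * (‖r + p‖ ^ 2 - ‖r‖ ^ 2) ^ (-(3/2) : ℝ)) * Phi x p :=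
        setLIntegral_mono (hameas.mul_const _) hstep1
    _ = (∫⁻ r in {r : E3 | ‖r‖ < 1 ∧ 1 < ‖r + p‖},
          ENNReal.ofReal (8⁻¹ * (‖r + p‖ ^ 2 - ‖r‖ ^ 2) ^ (-(3/2) : ℝ))) * Phi x p :=
        lintegral_mul_const' _ _ hΦfin
    _ = (ENNReal.ofReal 8⁻¹ * ∫⁻ r in {r : E3 | ‖r‖ < 1 ∧ 1 < ‖r + p‖},
          ENNReal.ofReal ((‖r + p‖ ^ 2 - ‖r‖ ^ 2) ^ (-(3/2) : ℝ))) * Phi x p := by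
        congr 1
        rw [← lintegral_const_mul' (ENNReal.ofReal 8⁻¹) _ ENNReal.ofReal_ne_top]
        congr 1
        funext r
        rw [← ENNReal.ofReal_mul (by norm_num)]
    _ = ENNReal.ofReal 8⁻¹ * (Phi 1 (-p) * Phi x p) := by
        rw [mul_assoc]
        congr 2
        rw [Phi]
        simp only [sub_neg_eq_add]

lemma ball_rpow_integral :
    (∫⁻ p in Metric.ball (0:E3) 4, ENNReal.ofReal (‖p‖ ^ (-(3/2) : ℝ)))
      ≤ 128 * V3c := by
  have hV3 : V3c ≠ ⊤ := measure_ball_lt_top.ne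
  have hres : volume.restrict (Metric.ball (0:E3) 4)
      = volume.restrict (Metric.ball (0:E3) 4 \ {0}) := by
    apply Measure.restrict_congr_set
    refine (diff_ae_eq_self.2 ?_).symm
    exact le_antisymm
      (le_trans (measure_mono Set.inter_subset_right) (measure_singleton (0:E3)).le)
      (zero_le)
  have hg : ∀ q ∈ Metric.ball (0:E3) 4 \ {0}, 0 < ‖q‖ := by
    intro q hq
    exact norm_pos_iff.2 hq.2
  have hM : volume (Metric.ball (0:E3) 4 \ {0}) ≤ ENNReal.ofReal 64 * V3c := by
    refine le_trans (measure_mono Set.diff_subset) (le_of_eq ?_)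
    rw [Measure.addHaar_ball volume (0:E3) (by norm_num : (0:ℝ) ≤ 4),
      finrank_euclideanSpace_fin]
    norm_num
  have hK : ∀ u : ℝ, 0 < u →
      volume ((Metric.ball (0:E3) 4 \ {0}) ∩ {q | ‖q‖ < u})
        ≤ (4 * V3c) * ENNReal.ofReal (u ^ 2) := by
    intro u hu
    have heq : (4 : ℝ≥0∞) * V3c * ENNReal.ofReal (u ^ 2)
        = ENNReal.ofReal (4 * u ^ 2) * V3c := by
      rw [ENNReal.ofReal_mul (by norm_num), show ENNReal.ofReal (4:ℝ) = (4:ℝ≥0∞) by norm_num]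
      ring
    rw [heq]
    rcases le_total u 4 with h4 | h4
    · have hsub : (Metric.ball (0:E3) 4 \ {0}) ∩ {q | ‖q‖ < u} ⊆ Metric.ball (0:E3) u := by
        intro q hq
        exact mem_ball_zero_iff.2 hq.2
      refine le_trans (measure_mono hsub) ?_
      rw [Measure.addHaar_ball volume (0:E3) hu.le, finrank_euclideanSpace_fin]
      refine mul_le_mul_left (ENNReal.ofReal_le_ofReal ?_) _
      nlinarith
    · have hsub : (Metric.ball (0:E3) 4 \ {0}) ∩ {q | ‖q‖ < u} ⊆ Metric.ball (0:E3) 4 := by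
        intro q hq
        exact hq.1.1
      refine le_trans (measure_mono hsub) ?_
      rw [Measure.addHaar_ball volume (0:E3) (by norm_num : (0:ℝ) ≤ 4),
        finrank_euclideanSpace_fin]
      refine mul_le_mul_left (ENNReal.ofReal_le_ofReal ?_) _
      nlinarith
  have key := dyadic_bound volume (Metric.ball (0:E3) 4 \ {0}) (fun q => ‖q‖) hg one_pos
    (ENNReal.ofReal 64 * V3c) (4 * V3c) hM hK
  rw [hres]
  refine le_trans key ?_
  simp only [Real.one_rpow, mul_one, ENNReal.ofReal_one]
  rw [show ENNReal.ofReal (16:ℝ) = (16:ℝ≥0∞) by norm_num,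
    show ENNReal.ofReal (64:ℝ) = (64:ℝ≥0∞) by norm_num]
  exact le_of_eq (by ring)

end AuxLemmas

/-- `I₃(x) ≤ C x⁻³` uniformly in `x ∈ (0,1]`. -/
theorem belyakovI_three_bound :
    ∃ C : ℝ, 0 < C ∧ ∀ x : ℝ, 0 < x → x ≤ 1 →
      belyakovI 3 x ≤ ENNReal.ofReal (C / x ^ 3) := by
  classical
  have hV3 : V3c ≠ ⊤ := measure_ball_lt_top.ne
  have hV2 : V2c ≠ ⊤ := measure_ball_lt_top.ne
  set C₁ : ℝ≥0∞ := V3c + 8 * V2c with hC₁def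
  have hC₁top : C₁ ≠ ⊤ :=
    ENNReal.add_ne_top.2 ⟨hV3, ENNReal.mul_ne_top (by norm_num) hV2⟩
  set W : ℝ≥0∞ := ∫⁻ p : E3, ENNReal.ofReal ((1 + ‖p‖) ^ (-(4:ℝ))) with hWdef
  have hWfin : W ≠ ⊤ := by
    refine (finite_integral_one_add_norm ?_).ne
    rw [finrank_euclideanSpace_fin]
    norm_num
  set Ctot : ℝ≥0∞ := C₁ * C₁ * (128 * V3c) + 9 * (V3c * V3c) * W with hCtotdef
  have hCtotfin : Ctot ≠ ⊤ := by
    apply ENNReal.add_ne_top.2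
    constructor
    · exact ENNReal.mul_ne_top (ENNReal.mul_ne_top hC₁top hC₁top)
        (ENNReal.mul_ne_top (by norm_num) hV3)
    · exact ENNReal.mul_ne_top (ENNReal.mul_ne_top (by norm_num)
        (ENNReal.mul_ne_top hV3 hV3)) hWfin
  refine ⟨Ctot.toReal + 1, by positivity, ?_⟩
  intro x hx hx1
  have hae0 : ∀ᵐ p : E3, p ≠ 0 := by
    rw [ae_iff]
    have hset : {p : E3 | ¬ p ≠ 0} = {0} := by ext q; simp
    rw [hset]
    exact measure_singleton 0
  set F : E3 → ℝ≥0∞ := fun p => ∫⁻ r in {r : E3 | ‖r‖ < 1 ∧ 1 < ‖r + p‖},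
    ∫⁻ r' in {r' : E3 | ‖r'‖ < x ∧ x < ‖r' - p‖},
      ENNReal.ofReal (1 / (‖r + p‖ ^ 2 - ‖r‖ ^ 2 + ‖r' - p‖ ^ 2 - ‖r'‖ ^ 2) ^ 3) with hFdef
  have hsplit : belyakovI 3 x
      = (∫⁻ p in Metric.ball (0:E3) 4, F p) + ∫⁻ p in (Metric.ball (0:E3) 4)ᶜ, F p := by
    rw [show belyakovI 3 x = ∫⁻ p : E3, F p from rfl,
      ← lintegral_add_compl F measurableSet_ball]
  -- ball part
  have hball : (∫⁻ p in Metric.ball (0:E3) 4, F p) ≤ C₁ * C₁ * (128 * V3c) := by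
    have hmono : ∀ᵐ p ∂(volume.restrict (Metric.ball (0:E3) 4)),
        F p ≤ C₁ * C₁ * ENNReal.ofReal (‖p‖ ^ (-(3/2) : ℝ)) := by
      refine ae_restrict_of_ae (hae0.mono fun p hp => ?_)
      have hpn : 0 < ‖p‖ := norm_pos_iff.2 hp
      refine le_trans (inner_reduction hx hp) ?_
      have h1 : Phi 1 (-p) ≤ C₁ * ENNReal.ofReal (‖p‖ ^ (-(3:ℝ)/4)) := by
        have h := Phi_bound1 one_pos (neg_ne_zero.2 hp)
        rwa [norm_neg, Real.one_rpow, one_mul] at h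
      have h2 : Phi x p ≤ C₁ * ENNReal.ofReal (x ^ ((3:ℝ)/4) * ‖p‖ ^ (-(3:ℝ)/4)) :=
        Phi_bound1 hx hp
      calc ENNReal.ofReal 8⁻¹ * (Phi 1 (-p) * Phi x p)
          ≤ ENNReal.ofReal 8⁻¹ * ((C₁ * ENNReal.ofReal (‖p‖ ^ (-(3:ℝ)/4)))
            * (C₁ * ENNReal.ofReal (x ^ ((3:ℝ)/4) * ‖p‖ ^ (-(3:ℝ)/4)))) :=
            mul_le_mul_right (mul_le_mul' h1 h2) _
        _ = C₁ * C₁ * (ENNReal.ofReal 8⁻¹ * ENNReal.ofReal (‖p‖ ^ (-(3:ℝ)/4))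
            * ENNReal.ofReal (x ^ ((3:ℝ)/4) * ‖p‖ ^ (-(3:ℝ)/4))) := by ring
        _ = C₁ * C₁ * ENNReal.ofReal (8⁻¹ * ‖p‖ ^ (-(3:ℝ)/4)
            * (x ^ ((3:ℝ)/4) * ‖p‖ ^ (-(3:ℝ)/4))) := by
            rw [← ENNReal.ofReal_mul (by norm_num), ← ENNReal.ofReal_mul (by positivity)]
        _ ≤ C₁ * C₁ * ENNReal.ofReal (‖p‖ ^ (-(3/2) : ℝ)) := by
            apply mul_le_mul_right
            apply ENNReal.ofReal_le_ofReal
            have hxp : x ^ ((3:ℝ)/4) ≤ 1 := Real.rpow_le_one hx.le hx1 (by norm_num)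
            have hxp0 : 0 ≤ x ^ ((3:ℝ)/4) := Real.rpow_nonneg hx.le _
            have hA : 0 ≤ ‖p‖ ^ (-(3:ℝ)/4) := Real.rpow_nonneg (norm_nonneg p) _
            have hcomb : ‖p‖ ^ (-(3:ℝ)/4) * ‖p‖ ^ (-(3:ℝ)/4) = ‖p‖ ^ (-(3/2) : ℝ) := by
              rw [← Real.rpow_add hpn]; norm_num
            rw [← hcomb]
            nlinarith
    calc (∫⁻ p in Metric.ball (0:E3) 4, F p)
        ≤ ∫⁻ p in Metric.ball (0:E3) 4, C₁ * C₁ * ENNReal.ofReal (‖p‖ ^ (-(3/2) : ℝ)) :=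
          lintegral_mono_ae hmono
      _ = C₁ * C₁ * ∫⁻ p in Metric.ball (0:E3) 4, ENNReal.ofReal (‖p‖ ^ (-(3/2) : ℝ)) :=
          lintegral_const_mul' _ _ (ENNReal.mul_ne_top hC₁top hC₁top)
      _ ≤ C₁ * C₁ * (128 * V3c) := mul_le_mul_right ball_rpow_integral _
  -- tail part
  have htail : (∫⁻ p in (Metric.ball (0:E3) 4)ᶜ, F p) ≤ 9 * (V3c * V3c) * W := by
    have hmono : ∀ p ∈ (Metric.ball (0:E3) 4)ᶜ,
        F p ≤ 9 * (V3c * V3c) * ENNReal.ofReal ((1 + ‖p‖) ^ (-(4:ℝ))) := by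
      intro p hp4
      have hpge : 4 ≤ ‖p‖ := by
        have := hp4
        simp only [Set.mem_compl_iff, mem_ball_zero_iff, not_lt] at this
        exact this
      have hpn : (0:ℝ) < ‖p‖ := by linarith
      have hp : p ≠ 0 := norm_pos_iff.1 hpn
      refine le_trans (inner_reduction hx hp) ?_
      have h1 : Phi 1 (-p) ≤ V3c * ENNReal.ofReal (3 * (‖p‖ ^ 3)⁻¹) := by
        have h := Phi_bound2 one_pos (p := -p) (by rw [norm_neg]; linarith)
        rw [norm_neg] at h
        simpa using h
      have h2 : Phi x p ≤ V3c * ENNReal.ofReal (3 * (‖p‖ ^ 3)⁻¹) := by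
        refine le_trans (Phi_bound2 hx (by nlinarith)) ?_
        apply mul_le_mul_right
        apply ENNReal.ofReal_le_ofReal
        have hx3 : x ^ 3 ≤ 1 := pow_le_one₀ hx.le hx1
        have hinv : (0:ℝ) ≤ (‖p‖ ^ 3)⁻¹ := by positivity
        nlinarith
      calc ENNReal.ofReal 8⁻¹ * (Phi 1 (-p) * Phi x p)
          ≤ 1 * ((V3c * ENNReal.ofReal (3 * (‖p‖ ^ 3)⁻¹))
            * (V3c * ENNReal.ofReal (3 * (‖p‖ ^ 3)⁻¹))) :=
            mul_le_mul' (ENNReal.ofReal_le_one.2 (by norm_num)) (mul_le_mul' h1 h2)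
        _ = (V3c * V3c) * (ENNReal.ofReal (3 * (‖p‖ ^ 3)⁻¹)
            * ENNReal.ofReal (3 * (‖p‖ ^ 3)⁻¹)) := by ring
        _ = (V3c * V3c) * ENNReal.ofReal (9 * ((‖p‖ ^ 3)⁻¹ * (‖p‖ ^ 3)⁻¹)) := by
            rw [← ENNReal.ofReal_mul (by positivity),
              show (3 * (‖p‖ ^ 3)⁻¹) * (3 * (‖p‖ ^ 3)⁻¹)
                = 9 * ((‖p‖ ^ 3)⁻¹ * (‖p‖ ^ 3)⁻¹) by ring]
        _ ≤ (V3c * V3c) * ENNReal.ofReal (9 * (1 + ‖p‖) ^ (-(4:ℝ))) := by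
            apply mul_le_mul_right
            apply ENNReal.ofReal_le_ofReal
            have hr : (1 + ‖p‖) ^ (-(4:ℝ)) = ((1 + ‖p‖) ^ (4:ℕ))⁻¹ := by
              rw [Real.rpow_neg (by positivity),
                show ((4:ℝ)) = ((4:ℕ):ℝ) by norm_num, Real.rpow_natCast]
            rw [hr]
            have h1q : 1 + ‖p‖ ≤ 2 * ‖p‖ := by linarith
            have h4 : (1 + ‖p‖) ^ (4:ℕ) ≤ (2 * ‖p‖) ^ (4:ℕ) :=
              pow_le_pow_left₀ (by positivity) h1q 4
            have hq2 : (16:ℝ) ≤ ‖p‖ ^ 2 := by nlinarith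
            have hmul := mul_le_mul_of_nonneg_left hq2
              (pow_nonneg (norm_nonneg p) 4)
            have hineq : (1 + ‖p‖) ^ (4:ℕ) ≤ ‖p‖ ^ 3 * ‖p‖ ^ 3 := by nlinarith
            have hinv : ((‖p‖:ℝ) ^ 3 * ‖p‖ ^ 3)⁻¹ ≤ ((1 + ‖p‖) ^ (4:ℕ))⁻¹ :=
              inv_anti₀ (by positivity) hineq
            rw [← mul_inv]
            linarith [hinv]
        _ = 9 * (V3c * V3c) * ENNReal.ofReal ((1 + ‖p‖) ^ (-(4:ℝ))) := by
            rw [ENNReal.ofReal_mul (by norm_num),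
              show ENNReal.ofReal (9:ℝ) = (9:ℝ≥0∞) by norm_num]
            ring
    have hgmeas : Measurable fun p : E3 =>
        9 * (V3c * V3c) * ENNReal.ofReal ((1 + ‖p‖) ^ (-(4:ℝ))) := by
      have hc : Continuous fun p : E3 => ((1 + ‖p‖) ^ (-(4:ℝ)) : ℝ) :=
        (continuous_const.add continuous_norm).rpow_const
          (fun p => Or.inl (ne_of_gt (add_pos_of_pos_of_nonneg one_pos (norm_nonneg p))))
      exact (hc.measurable.ennreal_ofReal).const_mul _
    calc (∫⁻ p in (Metric.ball (0:E3) 4)ᶜ, F p)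
        ≤ ∫⁻ p in (Metric.ball (0:E3) 4)ᶜ,
            9 * (V3c * V3c) * ENNReal.ofReal ((1 + ‖p‖) ^ (-(4:ℝ))) :=
          setLIntegral_mono hgmeas hmono
      _ ≤ ∫⁻ p : E3, 9 * (V3c * V3c) * ENNReal.ofReal ((1 + ‖p‖) ^ (-(4:ℝ))) :=
          setLIntegral_le_lintegral _ _
      _ = 9 * (V3c * V3c) * W := by
          rw [hWdef]
          exact lintegral_const_mul' _ _
            (ENNReal.mul_ne_top (by norm_num) (ENNReal.mul_ne_top hV3 hV3))
  -- conclusion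
  have hfinal : belyakovI 3 x ≤ Ctot := by
    rw [hsplit, hCtotdef]
    exact add_le_add hball htail
  refine le_trans hfinal ?_
  have hx3 : (0:ℝ) < x ^ 3 := by positivity
  have hx31 : x ^ 3 ≤ 1 := pow_le_one₀ hx.le hx1
  have htr : (0:ℝ) ≤ Ctot.toReal := ENNReal.toReal_nonneg
  calc Ctot = ENNReal.ofReal Ctot.toReal := (ENNReal.ofReal_toReal hCtotfin).symm
    _ ≤ ENNReal.ofReal ((Ctot.toReal + 1) / x ^ 3) := by
        apply ENNReal.ofReal_le_ofReal
        rw [le_div_iff₀ hx3]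
        nlinarith
end

section
/- There exists an absolute constant C > 0 such that for all a, b > 0, all R ≥ 4a, and all ε ≥ 0, ∫_{|p|≥R} dp ∫_{|r|<a<|r+p|} dr ∫_{|r'|<b<|r'−p|} dr' (|r+p|² − |r|² + |r'−p|² − |r'|² + 2ε)^{−2} ≤ C a³ b³ / R. (On the domain, since |r| < a ≤ R/4 ≤ |p|/4, one has |r+p|² − |r|² ≥ |p|²/2, and |r'−p|² − |r'|² > 0.) -/
set_option maxHeartbeats 1000000

open MeasureTheory Metric Set
open scoped ENNReal

lemma tail_bound {R : ℝ} (hR : 0 < R) :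
    ∫⁻ p in {p : E3 | R ≤ ‖p‖}, ENNReal.ofReal (4 / ‖p‖ ^ 4)
      ≤ ENNReal.ofReal (64 / R) * volume (Metric.ball (0:E3) 1) := by
  classical
  set V := volume (Metric.ball (0:E3) 1) with hV
  set A : ℕ → Set E3 := fun k => {p | 2 ^ k * R ≤ ‖p‖ ∧ ‖p‖ < 2 ^ (k+1) * R} with hA
  have hcover : {p : E3 | R ≤ ‖p‖} ⊆ ⋃ k, A k := by
    intro p hp
    have hp' : R ≤ ‖p‖ := hp
    have hP : ∃ n : ℕ, ‖p‖ < 2 ^ (n+1) * R := by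
      obtain ⟨n, hn⟩ := pow_unbounded_of_one_lt (‖p‖ / R) (by norm_num : (1:ℝ) < 2)
      rw [div_lt_iff₀ hR] at hn
      exact ⟨n, hn.trans_le (mul_le_mul_of_nonneg_right
        (pow_le_pow_right₀ one_le_two (Nat.le_succ n)) hR.le)⟩
    refine mem_iUnion.2 ⟨Nat.find hP, ?_, Nat.find_spec hP⟩
    rcases Nat.eq_zero_or_pos (Nat.find hP) with h0 | h0
    · simpa [h0] using hp'
    · have h1 : Nat.find hP - 1 + 1 = Nat.find hP := Nat.succ_pred_eq_of_pos h0
      have := Nat.find_min hP (show Nat.find hP - 1 < Nat.find hP by omega)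
      push_neg at this
      rw [h1] at this
      exact this
  calc ∫⁻ p in {p : E3 | R ≤ ‖p‖}, ENNReal.ofReal (4 / ‖p‖ ^ 4)
      ≤ ∫⁻ p in ⋃ k, A k, ENNReal.ofReal (4 / ‖p‖ ^ 4) := lintegral_mono_set hcover
    _ ≤ ∑' k, ∫⁻ p in A k, ENNReal.ofReal (4 / ‖p‖ ^ 4) := lintegral_iUnion_le _ _
    _ ≤ ∑' k, ENNReal.ofReal (32 / R) * (ENNReal.ofReal 2⁻¹) ^ k * V := by
        refine ENNReal.tsum_le_tsum fun k => ?_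
        have hk0 : (0:ℝ) < 2 ^ k * R := by positivity
        have step1 : ∫⁻ p in A k, ENNReal.ofReal (4 / ‖p‖ ^ 4)
            ≤ ∫⁻ _ in A k, ENNReal.ofReal (4 / (2 ^ k * R) ^ 4) := by
          refine setLIntegral_mono measurable_const fun p hp => ?_
          refine ENNReal.ofReal_le_ofReal ?_
          gcongr
          exact hp.1
        have step2 : ∫⁻ _ in A k, ENNReal.ofReal (4 / (2 ^ k * R) ^ 4)
            ≤ ENNReal.ofReal (4 / (2 ^ k * R) ^ 4) * volume (Metric.ball (0:E3) (2 ^ (k+1) * R)) := by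
          have hsub : A k ⊆ Metric.ball (0:E3) (2 ^ (k+1) * R) := fun p hp => by
            simpa [mem_ball_zero_iff] using hp.2
          calc ∫⁻ _ in A k, ENNReal.ofReal (4 / (2 ^ k * R) ^ 4)
              ≤ ∫⁻ _ in Metric.ball (0:E3) (2 ^ (k+1) * R), ENNReal.ofReal (4 / (2 ^ k * R) ^ 4) :=
                lintegral_mono_set hsub
            _ = _ := setLIntegral_const _ _
        have hball : volume (Metric.ball (0:E3) (2 ^ (k+1) * R))
            = ENNReal.ofReal ((2 ^ (k+1) * R) ^ 3) * V := by
          rw [Measure.addHaar_ball _ _ (by positivity), finrank_euclideanSpace_fin]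
        refine (step1.trans step2).trans ?_
        rw [hball, ← mul_assoc, ← ENNReal.ofReal_mul (by positivity),
          ← ENNReal.ofReal_pow (by norm_num), ← ENNReal.ofReal_mul (by positivity)]
        refine mul_le_mul_left (ENNReal.ofReal_le_ofReal (le_of_eq ?_)) V
        have h2k : (0:ℝ) < (2:ℝ) ^ k := by positivity
        rw [pow_succ, inv_pow]
        field_simp
        ring
    _ = ENNReal.ofReal (64 / R) * V := by
        rw [ENNReal.tsum_mul_right, ENNReal.tsum_mul_left, ENNReal.tsum_geometric]
        have h2 : ENNReal.ofReal 2⁻¹ = (2:ℝ≥0∞)⁻¹ := by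
          rw [ENNReal.ofReal_inv_of_pos two_pos, ENNReal.ofReal_ofNat]
        rw [h2, ENNReal.one_sub_inv_two, inv_inv, ← ENNReal.ofReal_ofNat 2,
          ← ENNReal.ofReal_mul (by positivity)]
        congr 1
        field_simp
        ring

/-- High-momentum tail estimate (error term `ℰ₁` in Lemma 5.5): for `a, b > 0`, `R ≥ 4a` and
`ε ≥ 0`, the regularized Belyakov integrand over `|p| ≥ R` is bounded by `C a³ b³ / R`. -/
theorem belyakov_tail_bound :
    ∃ C : ℝ, 0 < C ∧ ∀ (a b R ε : ℝ), 0 < a → 0 < b → 4 * a ≤ R → 0 ≤ ε →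
      (∫⁻ p in {p : E3 | R ≤ ‖p‖}, ∫⁻ r in {r : E3 | ‖r‖ < a ∧ a < ‖r + p‖},
        ∫⁻ r' in {r' : E3 | ‖r'‖ < b ∧ b < ‖r' - p‖},
          ENNReal.ofReal
            (1 / (‖r + p‖ ^ 2 - ‖r‖ ^ 2 + ‖r' - p‖ ^ 2 - ‖r'‖ ^ 2 + 2 * ε) ^ 2))
        ≤ ENNReal.ofReal (C * a ^ 3 * b ^ 3 / R) := by
  set V := volume (Metric.ball (0:E3) 1) with hVdef
  have hVlt : V < ⊤ := measure_ball_lt_top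
  have hVpos : 0 < V := measure_ball_pos _ _ one_pos
  set Vr := V.toReal with hVr
  have hVrpos : 0 < Vr := ENNReal.toReal_pos hVpos.ne' hVlt.ne
  have hVreq : V = ENNReal.ofReal Vr := (ENNReal.ofReal_toReal hVlt.ne).symm
  refine ⟨64 * Vr ^ 3, by positivity, fun a b R ε ha hb haR hε => ?_⟩
  have hR : 0 < R := lt_of_lt_of_le (by linarith) haR
  -- pointwise bound for the inner double integral
  have inner_bound : ∀ p : E3, R ≤ ‖p‖ →
      (∫⁻ r in {r : E3 | ‖r‖ < a ∧ a < ‖r + p‖},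
        ∫⁻ r' in {r' : E3 | ‖r'‖ < b ∧ b < ‖r' - p‖},
          ENNReal.ofReal
            (1 / (‖r + p‖ ^ 2 - ‖r‖ ^ 2 + ‖r' - p‖ ^ 2 - ‖r'‖ ^ 2 + 2 * ε) ^ 2))
        ≤ ENNReal.ofReal (4 / ‖p‖ ^ 4) *
            (ENNReal.ofReal (a ^ 3) * V * (ENNReal.ofReal (b ^ 3) * V)) := by
    intro p hp
    have hp0 : 0 < ‖p‖ := lt_of_lt_of_le hR hp
    have key : ∀ r ∈ {r : E3 | ‖r‖ < a ∧ a < ‖r + p‖},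
        ∀ r' ∈ {r' : E3 | ‖r'‖ < b ∧ b < ‖r' - p‖},
        (1 / (‖r + p‖ ^ 2 - ‖r‖ ^ 2 + ‖r' - p‖ ^ 2 - ‖r'‖ ^ 2 + 2 * ε) ^ 2)
          ≤ 4 / ‖p‖ ^ 4 := by
      rintro r ⟨hr1, _⟩ r' ⟨hr'1, hr'2⟩
      have hra : ‖r‖ < ‖p‖ / 4 := by
        have : ‖r‖ < R / 4 := by linarith
        linarith [hp]
      have htri : ‖p‖ - ‖r‖ ≤ ‖r + p‖ := by
        have : ‖p‖ ≤ ‖r + p‖ + ‖r‖ := by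
          calc ‖p‖ = ‖(r + p) - r‖ := by congr 1; abel
            _ ≤ ‖r + p‖ + ‖r‖ := norm_sub_le _ _
        linarith
      have h34 : 3 / 4 * ‖p‖ ≤ ‖r + p‖ := by linarith
      have hsq1 : (3 / 4 * ‖p‖) ^ 2 ≤ ‖r + p‖ ^ 2 := by
        have h0 : (0:ℝ) ≤ 3 / 4 * ‖p‖ := by positivity
        nlinarith
      have hsq2 : ‖r‖ ^ 2 ≤ (‖p‖ / 4) ^ 2 := by nlinarith [norm_nonneg r]
      have hfirst : ‖p‖ ^ 2 / 2 ≤ ‖r + p‖ ^ 2 - ‖r‖ ^ 2 := by nlinarith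
      have hsecond : 0 ≤ ‖r' - p‖ ^ 2 - ‖r'‖ ^ 2 := by
        nlinarith [norm_nonneg r', hb]
      set D := ‖r + p‖ ^ 2 - ‖r‖ ^ 2 + ‖r' - p‖ ^ 2 - ‖r'‖ ^ 2 + 2 * ε with hD
      have hDge : ‖p‖ ^ 2 / 2 ≤ D := by simp only [hD]; linarith
      have hDpos : 0 < D := lt_of_lt_of_le (by positivity) hDge
      have hD2 : ‖p‖ ^ 4 / 4 ≤ D ^ 2 := by nlinarith
      calc 1 / D ^ 2 ≤ 1 / (‖p‖ ^ 4 / 4) := by gcongr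
        _ = 4 / ‖p‖ ^ 4 := by rw [one_div_div]
    have step_r' : ∀ r ∈ {r : E3 | ‖r‖ < a ∧ a < ‖r + p‖},
        (∫⁻ r' in {r' : E3 | ‖r'‖ < b ∧ b < ‖r' - p‖},
          ENNReal.ofReal
            (1 / (‖r + p‖ ^ 2 - ‖r‖ ^ 2 + ‖r' - p‖ ^ 2 - ‖r'‖ ^ 2 + 2 * ε) ^ 2))
          ≤ ENNReal.ofReal (4 / ‖p‖ ^ 4) * (ENNReal.ofReal (b ^ 3) * V) := by
      intro r hr
      calc (∫⁻ r' in {r' : E3 | ‖r'‖ < b ∧ b < ‖r' - p‖}, ENNReal.ofReal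
            (1 / (‖r + p‖ ^ 2 - ‖r‖ ^ 2 + ‖r' - p‖ ^ 2 - ‖r'‖ ^ 2 + 2 * ε) ^ 2))
          ≤ ∫⁻ _ in {r' : E3 | ‖r'‖ < b ∧ b < ‖r' - p‖}, ENNReal.ofReal (4 / ‖p‖ ^ 4) :=
            setLIntegral_mono measurable_const fun r' hr' =>
              ENNReal.ofReal_le_ofReal (key r hr r' hr')
        _ ≤ ∫⁻ _ in Metric.ball (0:E3) b, ENNReal.ofReal (4 / ‖p‖ ^ 4) :=
            lintegral_mono_set (fun r' hr' => by simpa [mem_ball_zero_iff] using hr'.1)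
        _ = ENNReal.ofReal (4 / ‖p‖ ^ 4) * volume (Metric.ball (0:E3) b) :=
            setLIntegral_const _ _
        _ = ENNReal.ofReal (4 / ‖p‖ ^ 4) * (ENNReal.ofReal (b ^ 3) * V) := by
            rw [Measure.addHaar_ball _ _ hb.le, finrank_euclideanSpace_fin]
    calc (∫⁻ r in {r : E3 | ‖r‖ < a ∧ a < ‖r + p‖},
          ∫⁻ r' in {r' : E3 | ‖r'‖ < b ∧ b < ‖r' - p‖},
            ENNReal.ofReal
              (1 / (‖r + p‖ ^ 2 - ‖r‖ ^ 2 + ‖r' - p‖ ^ 2 - ‖r'‖ ^ 2 + 2 * ε) ^ 2))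
        ≤ ∫⁻ _ in {r : E3 | ‖r‖ < a ∧ a < ‖r + p‖},
            ENNReal.ofReal (4 / ‖p‖ ^ 4) * (ENNReal.ofReal (b ^ 3) * V) :=
          setLIntegral_mono measurable_const step_r'
      _ ≤ ∫⁻ _ in Metric.ball (0:E3) a,
            ENNReal.ofReal (4 / ‖p‖ ^ 4) * (ENNReal.ofReal (b ^ 3) * V) :=
          lintegral_mono_set (fun r hr => by simpa [mem_ball_zero_iff] using hr.1)
      _ = ENNReal.ofReal (4 / ‖p‖ ^ 4) * (ENNReal.ofReal (b ^ 3) * V) *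
            volume (Metric.ball (0:E3) a) := setLIntegral_const _ _
      _ = ENNReal.ofReal (4 / ‖p‖ ^ 4) *
            (ENNReal.ofReal (a ^ 3) * V * (ENNReal.ofReal (b ^ 3) * V)) := by
          rw [Measure.addHaar_ball _ _ ha.le, finrank_euclideanSpace_fin]
          ring
  set M := ENNReal.ofReal (a ^ 3) * V * (ENNReal.ofReal (b ^ 3) * V) with hM
  have hmeas : Measurable fun p : E3 => ENNReal.ofReal (4 / ‖p‖ ^ 4) * M :=
    ((measurable_const.div (measurable_norm.pow_const 4)).ennreal_ofReal).mul_const M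
  calc (∫⁻ p in {p : E3 | R ≤ ‖p‖}, ∫⁻ r in {r : E3 | ‖r‖ < a ∧ a < ‖r + p‖},
        ∫⁻ r' in {r' : E3 | ‖r'‖ < b ∧ b < ‖r' - p‖},
          ENNReal.ofReal
            (1 / (‖r + p‖ ^ 2 - ‖r‖ ^ 2 + ‖r' - p‖ ^ 2 - ‖r'‖ ^ 2 + 2 * ε) ^ 2))
      ≤ ∫⁻ p in {p : E3 | R ≤ ‖p‖}, ENNReal.ofReal (4 / ‖p‖ ^ 4) * M :=
        setLIntegral_mono hmeas fun p hp => inner_bound p hp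
    _ = (∫⁻ p in {p : E3 | R ≤ ‖p‖}, ENNReal.ofReal (4 / ‖p‖ ^ 4)) * M :=
        lintegral_mul_const _ ((measurable_const.div (measurable_norm.pow_const 4)).ennreal_ofReal)
    _ ≤ ENNReal.ofReal (64 / R) * V * M := mul_le_mul_left (tail_bound hR) M
    _ = ENNReal.ofReal (64 * Vr ^ 3 * a ^ 3 * b ^ 3 / R) := by
        rw [hM, hVreq, ← ENNReal.ofReal_mul (by positivity), ← ENNReal.ofReal_mul (by positivity),
          ← ENNReal.ofReal_mul (by positivity), ← ENNReal.ofReal_mul (by positivity),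
          ← ENNReal.ofReal_mul (by positivity)]
        congr 1
        field_simp
end

section
/- There exists an absolute constant C > 0 such that for all 0 < k₂ ≤ k₁ and all ε > 0, ∫_{ℝ³} dp ∫_{|r|<k₁<|r+p|} dr ∫_{|r'|<k₂<|r'−p|} dr' | (E + 2ε)^{−2} − E^{−2} | ≤ C ε k₁³ (k₁/k₂)³, where E = E(p,r,r') := |r+p|² − |r|² + |r'−p|² − |r'|² (which is strictly positive on the integration domain). -/
open MeasureTheory
open scoped ENNReal

namespace BelyakovAux

open Metric Set

noncomputable def bg (s : ℝ) : ℝ≥0∞ := ENNReal.ofReal (s⁻¹ * (Real.sqrt s)⁻¹)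

lemma bg_anti {s t : ℝ} (hs : 0 < s) (h : s ≤ t) : bg t ≤ bg s := by
  unfold bg
  apply ENNReal.ofReal_le_ofReal
  have ht : 0 < t := hs.trans_le h
  have h1 : t⁻¹ ≤ s⁻¹ := by gcongr
  have h2 : (Real.sqrt t)⁻¹ ≤ (Real.sqrt s)⁻¹ :=
    inv_anti₀ (Real.sqrt_pos.2 hs) (Real.sqrt_le_sqrt h)
  exact mul_le_mul h1 h2 (by positivity) (by positivity)

lemma bg_meas : Measurable bg :=
  ENNReal.measurable_ofReal.comp
    (measurable_inv.mul (Real.continuous_sqrt.measurable.inv))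

lemma key_aux {E ε : ℝ} (hE : 0 < E) (hε : 0 < ε) :
    1 / E ^ 2 - 1 / (E + 2 * ε) ^ 2 ≤ 4 * ε / E ^ 3 := by
  rw [div_sub_div _ _ (by positivity) (by positivity),
    div_le_div_iff₀ (by positivity) (by positivity)]
  nlinarith [mul_pos hE hε, mul_pos (mul_pos hE hε) hε, mul_pos (mul_pos hE hE) hε,
    mul_pos (mul_pos (mul_pos hE hE) hE) hε, sq_nonneg E, mul_pos hε hε,
    mul_pos (mul_pos hε hε) hε, mul_pos (mul_pos (mul_pos hE hE) hε) hε]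

lemma pointwise_bound {A B ε : ℝ} (hA : 0 < A) (hB : 0 < B) (hε : 0 < ε) :
    ENNReal.ofReal |1 / (A + B + 2 * ε) ^ 2 - 1 / (A + B) ^ 2|
      ≤ ENNReal.ofReal (4 * ε) * (bg A * bg B) := by
  unfold bg
  rw [← ENNReal.ofReal_mul (by positivity), ← ENNReal.ofReal_mul (by positivity)]
  apply ENNReal.ofReal_le_ofReal
  have hEpos : 0 < A + B := by positivity
  have habs : |1 / (A + B + 2 * ε) ^ 2 - 1 / (A + B) ^ 2|
      = 1 / (A + B) ^ 2 - 1 / (A + B + 2 * ε) ^ 2 := by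
    rw [abs_sub_comm, abs_of_nonneg]
    have h2 : ((A + B):ℝ) ^ 2 ≤ (A + B + 2 * ε) ^ 2 := by nlinarith
    have h1 : 1 / (A + B + 2*ε)^2 ≤ 1 / (A + B)^2 :=
      one_div_le_one_div_of_le (by positivity) h2
    linarith
  rw [habs]
  refine (key_aux hEpos hε).trans ?_
  set a := Real.sqrt A with ha
  set b := Real.sqrt B with hb
  have hA' : A = a ^ 2 := (Real.sq_sqrt hA.le).symm
  have hB' : B = b ^ 2 := (Real.sq_sqrt hB.le).symm
  have hap : 0 < a := Real.sqrt_pos.2 hA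
  have hbp : 0 < b := Real.sqrt_pos.2 hB
  have hEab : a * b ≤ A + B := by nlinarith [sq_nonneg (a - b)]
  have hE3 : a ^ 3 * b ^ 3 ≤ (A + B) ^ 3 := by
    calc a^3 * b^3 = (a*b)^3 := by ring
    _ ≤ (A+B)^3 := pow_le_pow_left₀ (by positivity) hEab 3
  have step : 4 * ε / (A + B) ^ 3 ≤ 4 * ε / (a^3 * b^3) := by gcongr <;> positivity
  refine step.trans (le_of_eq ?_)
  rw [hA', hB']
  field_simp

lemma core_sqrt_int {M : ℝ} (hM : 0 ≤ M) :
    ∫⁻ s in Ioo (0:ℝ) M, ENNReal.ofReal (Real.sqrt s)⁻¹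
      ≤ ENNReal.ofReal (2 * Real.sqrt M) := by
  have hint : IntegrableOn (fun s : ℝ => s ^ (-(1/2) : ℝ)) (Ioo 0 M) := by
    have h1 : IntervalIntegrable (fun s : ℝ => s ^ (-(1/2) : ℝ)) volume 0 M :=
      intervalIntegral.intervalIntegrable_rpow' (by norm_num)
    have := (intervalIntegrable_iff_integrableOn_Ioc_of_le hM).1 h1
    exact this.mono_set Ioo_subset_Ioc_self
  have heq : ∀ s ∈ Ioo (0:ℝ) M, (Real.sqrt s)⁻¹ = s ^ (-(1/2) : ℝ) := by
    intro s hs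
    rw [Real.sqrt_eq_rpow, ← Real.rpow_neg hs.1.le]
  have hint' : IntegrableOn (fun s : ℝ => (Real.sqrt s)⁻¹) (Ioo 0 M) :=
    hint.congr_fun (fun s hs => (heq s hs).symm) measurableSet_Ioo
  rw [← ofReal_integral_eq_lintegral_ofReal hint'
    (Filter.Eventually.of_forall fun s => by positivity)]
  apply ENNReal.ofReal_le_ofReal
  have : ∫ s in Ioo (0:ℝ) M, (Real.sqrt s)⁻¹ = ∫ s in Ioo (0:ℝ) M, s ^ (-(1/2) : ℝ) :=
    setIntegral_congr_fun measurableSet_Ioo heq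
  rw [this, ← integral_Ioc_eq_integral_Ioo, ← intervalIntegral.integral_of_le hM,
    integral_rpow (Or.inl (by norm_num))]
  rw [Real.zero_rpow (by norm_num)]
  rw [show (-(1/2) : ℝ) + 1 = 1/2 by norm_num, ← Real.sqrt_eq_rpow]
  rw [div_le_iff₀ (by norm_num)]
  ring_nf
  nlinarith [Real.sqrt_nonneg M]

lemma oneD {P k : ℝ} (hP : 0 < P) (hk : 0 < k) :
    ∫⁻ t in Ioo (max (-k) (-(P/2))) k, ENNReal.ofReal (Real.sqrt (P^2 + 2*P*t))⁻¹
      ≤ ENNReal.ofReal (Real.sqrt (P * (P + 2*k)) / P) := by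
  set t₀ := max (-k) (-(P/2)) with ht₀
  have ht₀1 : -(P/2) ≤ t₀ := le_max_right _ _
  set φ : ℝ → ℝ := fun t => 2*P*t + P^2 with hφ
  have hφmeas : Measurable φ := by fun_prop
  have hmap : Measure.map φ volume = ENNReal.ofReal |(2*P)⁻¹| • volume := by
    have h1 : φ = (fun s => s + P^2) ∘ (fun t => (2*P) * t) := by
      funext t; simp [hφ, Function.comp]
    rw [h1, ← Measure.map_map (by fun_prop) (by fun_prop),
      Real.map_volume_mul_left (by positivity : (0:ℝ) < 2*P).ne',
      Measure.map_smul, map_add_right_eq_self]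
  have hpre : φ ⁻¹' (Ioo (φ t₀) (φ k)) = Ioo t₀ k := by
    ext t
    simp only [mem_preimage, mem_Ioo, hφ]
    constructor
    · rintro ⟨h1, h2⟩; constructor <;> nlinarith
    · rintro ⟨h1, h2⟩; constructor <;> nlinarith
  have hF : Measurable (fun s : ℝ => ENNReal.ofReal (Real.sqrt s)⁻¹) := by
    apply ENNReal.measurable_ofReal.comp
    exact Real.continuous_sqrt.measurable.inv
  have step1 : ∫⁻ t in Ioo t₀ k, ENNReal.ofReal (Real.sqrt (P^2 + 2*P*t))⁻¹
      = ∫⁻ s in Ioo (φ t₀) (φ k), ENNReal.ofReal (Real.sqrt s)⁻¹ ∂(Measure.map φ volume) := by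
    rw [setLIntegral_map measurableSet_Ioo hF hφmeas, hpre]
    apply lintegral_congr
    intro t
    congr 1
    simp [hφ]; ring_nf
  rw [step1, hmap, Measure.restrict_smul, lintegral_smul_measure]
  have hsub : Ioo (φ t₀) (φ k) ⊆ Ioo 0 (P * (P + 2*k)) := by
    apply Ioo_subset_Ioo
    · have : φ (-(P/2)) = 0 := by simp [hφ]; ring
      rw [← this]
      simp only [hφ]
      nlinarith
    · simp only [hφ]; nlinarith
  have hmono : ∫⁻ s in Ioo (φ t₀) (φ k), ENNReal.ofReal (Real.sqrt s)⁻¹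
      ≤ ∫⁻ s in Ioo (0:ℝ) (P * (P + 2*k)), ENNReal.ofReal (Real.sqrt s)⁻¹ :=
    lintegral_mono_set hsub
  calc ENNReal.ofReal |(2*P)⁻¹| * ∫⁻ s in Ioo (φ t₀) (φ k), ENNReal.ofReal (Real.sqrt s)⁻¹
      ≤ ENNReal.ofReal |(2*P)⁻¹| * ENNReal.ofReal (2 * Real.sqrt (P * (P + 2*k))) := by
        gcongr
        exact hmono.trans (core_sqrt_int (by positivity))
    _ = ENNReal.ofReal (Real.sqrt (P * (P + 2*k)) / P) := by
        rw [← ENNReal.ofReal_mul (abs_nonneg _), abs_of_pos (by positivity)]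
        congr 1
        field_simp

noncomputable def ω₂ : ℝ := (volume (ball (0 : EuclideanSpace ℝ (Fin 2)) 1)).toReal

lemma ω₂_nonneg : 0 ≤ ω₂ := ENNReal.toReal_nonneg

lemma ν₂_eq : volume (ball (0 : EuclideanSpace ℝ (Fin 2)) 1) = ENNReal.ofReal ω₂ :=
  (ENNReal.ofReal_toReal (measure_ball_lt_top).ne).symm

lemma annulus_measure (c d : ℝ) :
    volume {y : Fin 2 → ℝ | c < y 0 ^ 2 + y 1 ^ 2 ∧ y 0 ^ 2 + y 1 ^ 2 < d}
      ≤ ENNReal.ofReal (ω₂ * (d - c)) := by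
  set S := {y : Fin 2 → ℝ | c < y 0 ^ 2 + y 1 ^ 2 ∧ y 0 ^ 2 + y 1 ^ 2 < d} with hS
  have hSm : MeasurableSet S := by
    apply MeasurableSet.inter
    · exact measurableSet_lt measurable_const
        (((measurable_pi_apply 0).pow_const 2).add ((measurable_pi_apply 1).pow_const 2))
    · exact measurableSet_lt
        (((measurable_pi_apply 0).pow_const 2).add ((measurable_pi_apply 1).pow_const 2))
        measurable_const
  have hpre : volume S = volume (((MeasurableEquiv.toLp 2 (Fin 2 → ℝ)).symm) ⁻¹' S) :=
    ((EuclideanSpace.volume_preserving_symm_measurableEquiv_toLp (Fin 2)).measure_preimage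
      hSm.nullMeasurableSet).symm
  have hset : ((MeasurableEquiv.toLp 2 (Fin 2 → ℝ)).symm) ⁻¹' S
      = {x : EuclideanSpace ℝ (Fin 2) | c < ‖x‖ ^ 2 ∧ ‖x‖ ^ 2 < d} := by
    ext x
    have hx : ‖x‖ ^ 2 = x 0 ^ 2 + x 1 ^ 2 := by
      rw [EuclideanSpace.norm_eq, Real.sq_sqrt (by positivity)]
      simp [Fin.sum_univ_two, sq_abs]
    simp only [mem_preimage, hS, mem_setOf_eq, hx]
    rfl
  rw [hpre, hset]
  rcases le_or_gt d 0 with hd | hd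
  · have : {x : EuclideanSpace ℝ (Fin 2) | c < ‖x‖ ^ 2 ∧ ‖x‖ ^ 2 < d} = ∅ := by
      ext x; simp only [mem_setOf_eq, mem_empty_iff_false, iff_false, not_and]
      intro _; nlinarith [sq_nonneg ‖x‖]
    simp [this]
  rcases le_or_gt c 0 with hc | hc
  · calc volume {x : EuclideanSpace ℝ (Fin 2) | c < ‖x‖ ^ 2 ∧ ‖x‖ ^ 2 < d}
        ≤ volume (ball (0 : EuclideanSpace ℝ (Fin 2)) (Real.sqrt d)) := by
          apply measure_mono
          intro x hx
          rw [mem_ball, dist_zero_right]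
          have := hx.2
          nlinarith [Real.sq_sqrt hd.le, Real.sqrt_nonneg d, norm_nonneg x,
            abs_nonneg (‖x‖), Real.sqrt_lt_sqrt (sq_nonneg ‖x‖) this,
            Real.sqrt_sq (norm_nonneg x)]
      _ = ENNReal.ofReal (Real.sqrt d ^ Module.finrank ℝ (EuclideanSpace ℝ (Fin 2))) *
            volume (ball (0 : EuclideanSpace ℝ (Fin 2)) 1) :=
          Measure.addHaar_ball volume 0 (Real.sqrt_nonneg d)
      _ ≤ ENNReal.ofReal (ω₂ * (d - c)) := by
          rw [ν₂_eq, finrank_euclideanSpace_fin, ← ENNReal.ofReal_mul (by positivity)]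
          apply ENNReal.ofReal_le_ofReal
          rw [Real.sq_sqrt hd.le]
          nlinarith [ω₂_nonneg]
  · rcases le_or_gt d c with hdc | hcd
    · have : {x : EuclideanSpace ℝ (Fin 2) | c < ‖x‖ ^ 2 ∧ ‖x‖ ^ 2 < d} = ∅ := by
        ext x; simp only [mem_setOf_eq, mem_empty_iff_false, iff_false, not_and]
        intro h1; nlinarith
      simp [this]
    · have hsub : {x : EuclideanSpace ℝ (Fin 2) | c < ‖x‖ ^ 2 ∧ ‖x‖ ^ 2 < d}
          ⊆ ball (0 : EuclideanSpace ℝ (Fin 2)) (Real.sqrt d) \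
            closedBall 0 (Real.sqrt c) := by
        intro x hx
        constructor
        · rw [mem_ball, dist_zero_right]
          nlinarith [Real.sq_sqrt hd.le, Real.sqrt_nonneg d, norm_nonneg x, hx.2]
        · rw [mem_closedBall, dist_zero_right, not_le]
          nlinarith [Real.sq_sqrt hc.le, Real.sqrt_nonneg c, norm_nonneg x, hx.1]
      refine (measure_mono hsub).trans ?_
      have hsub2 : closedBall (0 : EuclideanSpace ℝ (Fin 2)) (Real.sqrt c)
          ⊆ ball 0 (Real.sqrt d) := by
        apply closedBall_subset_ball
        exact Real.sqrt_lt_sqrt hc.le hcd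
      rw [measure_diff hsub2 measurableSet_closedBall.nullMeasurableSet
        measure_closedBall_lt_top.ne]
      rw [Measure.addHaar_ball volume 0 (Real.sqrt_nonneg d),
        Measure.addHaar_closedBall volume 0 (Real.sqrt_nonneg c),
        finrank_euclideanSpace_fin, ν₂_eq,
        Real.sq_sqrt hd.le, Real.sq_sqrt hc.le,
        ← ENNReal.ofReal_mul hd.le, ← ENNReal.ofReal_mul hc.le,
        ← ENNReal.ofReal_sub _ (mul_nonneg hc.le ω₂_nonneg)]
      apply ENNReal.ofReal_le_ofReal
      nlinarith [ω₂_nonneg]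

lemma slice_lemma {k : ℝ} (hk : 0 < k) {p : EuclideanSpace ℝ (Fin 3)} (hp : p ≠ 0) :
    ∫⁻ r in {r : EuclideanSpace ℝ (Fin 3) | ‖r‖ < k ∧ k < ‖r + p‖},
        bg (‖r + p‖ ^ 2 - ‖r‖ ^ 2)
      ≤ ENNReal.ofReal (ω₂ * (Real.sqrt (‖p‖ * (‖p‖ + 2*k)) / ‖p‖)) := by
  have hP : 0 < ‖p‖ := norm_pos_iff.2 hp
  set P := ‖p‖ with hPdef
  -- orthonormal basis whose first vector is along p
  set u : EuclideanSpace ℝ (Fin 3) := P⁻¹ • p with hu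
  have hu1 : ‖u‖ = 1 := by
    rw [hu, norm_smul, norm_inv, Real.norm_eq_abs, abs_of_pos hP, ← hPdef,
      inv_mul_cancel₀ hP.ne']
  have huo : Orthonormal ℝ (({0} : Set (Fin 3)).restrict (fun _ => u)) := by
    rw [orthonormal_iff_ite]
    rintro ⟨i, hi⟩ ⟨j, hj⟩
    simp only [mem_singleton_iff] at hi hj
    rw [if_pos (Subtype.ext (hi.trans hj.symm))]
    show inner ℝ u u = 1
    rw [real_inner_self_eq_norm_sq, hu1]
    norm_num
  obtain ⟨b, hb⟩ := huo.exists_orthonormalBasis_extension_of_card_eq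
    (by simp [finrank_euclideanSpace_fin])
  have hb0 : b 0 = u := hb 0 rfl
  have hpu : p = P • u := by
    rw [hu, smul_smul, mul_inv_cancel₀ hP.ne', one_smul]
  -- the composite measurable equivalence
  set e₁ := b.measurableEquiv with he₁
  set e₂ := (MeasurableEquiv.toLp 2 (Fin 3 → ℝ)).symm with he₂
  set e₃ := MeasurableEquiv.piFinSuccAbove (fun _ : Fin 3 => ℝ) 0 with he₃
  set ψ := (e₁.trans e₂).trans e₃ with hψ
  have hψcoe : ⇑ψ = ⇑e₃ ∘ ⇑e₂ ∘ ⇑e₁ := rfl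
  have hψmp : MeasurePreserving ψ volume volume := by
    rw [hψcoe]
    exact (volume_preserving_piFinSuccAbove (fun _ : Fin 3 => ℝ) 0).comp
      ((EuclideanSpace.volume_preserving_symm_measurableEquiv_toLp (Fin 3)).comp
        b.measurePreserving_measurableEquiv)
  -- coordinates
  have hcoord : ∀ r : EuclideanSpace ℝ (Fin 3),
      (ψ r).1 = b.repr r 0 ∧ (ψ r).2 0 = b.repr r 1 ∧ (ψ r).2 1 = b.repr r 2 := by
    intro r
    refine ⟨rfl, ?_, ?_⟩ <;> rfl
  -- norm identities
  have hnorm : ∀ r : EuclideanSpace ℝ (Fin 3),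
      ‖r‖ ^ 2 = b.repr r 0 ^ 2 + (b.repr r 1 ^ 2 + b.repr r 2 ^ 2) := by
    intro r
    have h1 : ‖r‖ = ‖b.repr r‖ := (b.repr.norm_map r).symm
    rw [h1, EuclideanSpace.norm_eq, Real.sq_sqrt (by positivity)]
    simp [Fin.sum_univ_three, sq_abs]
    ring
  have hreprp : ∀ i, b.repr p i = if i = 0 then P else 0 := by
    intro i
    have hrs := b.repr_self 0
    rw [hb0] at hrs
    rw [hpu, _root_.map_smul, hrs, PiLp.smul_apply, EuclideanSpace.single_apply,
      smul_eq_mul]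
    split_ifs <;> simp
  have haddp : ∀ r : EuclideanSpace ℝ (Fin 3),
      (b.repr (r + p) 0 = b.repr r 0 + P) ∧ (b.repr (r + p) 1 = b.repr r 1)
        ∧ (b.repr (r + p) 2 = b.repr r 2) := by
    intro r
    rw [map_add]
    refine ⟨?_, ?_, ?_⟩ <;>
      simp [hreprp, Fin.ext_iff]
  set t₀ := max (-k) (-(P/2)) with ht₀
  set T : Set (ℝ × (Fin 2 → ℝ)) :=
    {z | z.1^2 + (z.2 0^2 + z.2 1^2) < k^2 ∧ k^2 < (z.1+P)^2 + (z.2 0^2 + z.2 1^2)} with hT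
  have hmQ : Measurable (fun z : ℝ × (Fin 2 → ℝ) => z.2 0 ^ 2 + z.2 1 ^ 2) := by fun_prop
  have hm1 : Measurable (fun z : ℝ × (Fin 2 → ℝ) => z.1^2 + (z.2 0^2 + z.2 1^2)) := by
    fun_prop
  have hm2 : Measurable (fun z : ℝ × (Fin 2 → ℝ) => (z.1+P)^2 + (z.2 0^2 + z.2 1^2)) := by
    fun_prop
  have hTm : MeasurableSet T := by
    apply MeasurableSet.inter
    · exact measurableSet_lt hm1 measurable_const
    · exact measurableSet_lt measurable_const hm2
  have hSpre : {r : EuclideanSpace ℝ (Fin 3) | ‖r‖ < k ∧ k < ‖r + p‖} = ψ ⁻¹' T := by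
    ext r
    obtain ⟨hc0, hc1, hc2⟩ := hcoord r
    obtain ⟨ha0, ha1, ha2⟩ := haddp r
    simp only [mem_setOf_eq, mem_preimage, hT, hc0, hc1, hc2]
    have hn1 := hnorm r
    have hn2 := hnorm (r + p)
    rw [ha0, ha1, ha2] at hn2
    constructor
    · rintro ⟨h1, h2⟩
      refine ⟨?_, ?_⟩
      · rw [← hn1]; exact pow_lt_pow_left₀ h1 (norm_nonneg r) (by norm_num)
      · calc k^2 < ‖r + p‖^2 := pow_lt_pow_left₀ h2 hk.le (by norm_num)
          _ = _ := hn2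
    · rintro ⟨h1, h2⟩
      rw [← hn1] at h1
      rw [← hn2] at h2
      exact ⟨lt_of_pow_lt_pow_left₀ 2 hk.le h1,
        lt_of_pow_lt_pow_left₀ 2 (norm_nonneg _) h2⟩
  have hInteg : ∀ r : EuclideanSpace ℝ (Fin 3),
      bg (‖r + p‖ ^ 2 - ‖r‖ ^ 2) = bg (P^2 + 2*P*(ψ r).1) := by
    intro r
    obtain ⟨hc0, _, _⟩ := hcoord r
    obtain ⟨ha0, ha1, ha2⟩ := haddp r
    have hn1 := hnorm r
    have hn2 := hnorm (r + p)
    rw [ha0, ha1, ha2] at hn2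
    rw [hc0]
    congr 1
    rw [hn1, hn2]
    ring
  have hslicem : ∀ t : ℝ, MeasurableSet
      {y : Fin 2 → ℝ | t^2 + (y 0^2 + y 1^2) < k^2 ∧ k^2 < (t+P)^2 + (y 0^2 + y 1^2)} := by
    intro t
    have hm1' : Measurable (fun y : Fin 2 → ℝ => t^2 + (y 0^2 + y 1^2)) := by fun_prop
    have hm2' : Measurable (fun y : Fin 2 → ℝ => (t+P)^2 + (y 0^2 + y 1^2)) := by fun_prop
    apply MeasurableSet.inter
    · exact measurableSet_lt hm1' measurable_const
    · exact measurableSet_lt measurable_const hm2'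
  calc ∫⁻ r in {r : EuclideanSpace ℝ (Fin 3) | ‖r‖ < k ∧ k < ‖r + p‖},
        bg (‖r + p‖ ^ 2 - ‖r‖ ^ 2)
      = ∫⁻ r in ψ ⁻¹' T, bg (P^2 + 2*P*(ψ r).1) := by
        rw [hSpre]; exact lintegral_congr hInteg
    _ = ∫⁻ z in T, bg (P^2 + 2*P*z.1) := by
        exact hψmp.setLIntegral_comp_preimage_emb (MeasurableEquiv.measurableEmbedding ψ)
          (fun z => bg (P^2 + 2*P*z.1)) T
    _ = ∫⁻ z, T.indicator (fun z => bg (P^2 + 2*P*z.1)) z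
          ∂((volume : Measure ℝ).prod volume) := by
        rw [← Measure.volume_eq_prod, ← lintegral_indicator hTm]
    _ = ∫⁻ t : ℝ, ∫⁻ y : Fin 2 → ℝ, T.indicator (fun z => bg (P^2+2*P*z.1)) (t, y) := by
        apply lintegral_prod
        exact ((bg_meas.comp (by fun_prop)).indicator hTm).aemeasurable
    _ ≤ ∫⁻ t : ℝ, (Ioo t₀ k).indicator
          (fun t => ENNReal.ofReal (ω₂ * (Real.sqrt (P^2+2*P*t))⁻¹)) t := by
        apply lintegral_mono
        intro t
        have hind : ∀ y : Fin 2 → ℝ, T.indicator (fun z => bg (P^2+2*P*z.1)) (t, y)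
            = Set.indicator {y : Fin 2 → ℝ | t^2 + (y 0^2 + y 1^2) < k^2
                ∧ k^2 < (t+P)^2 + (y 0^2 + y 1^2)} (fun _ => bg (P^2+2*P*t)) y := by
          intro y
          simp only [Set.indicator_apply, hT, mem_setOf_eq]
        simp only [hind]
        rw [lintegral_indicator_const (hslicem t)]
        by_cases htI : t ∈ Ioo t₀ k
        · rw [Set.indicator_of_mem htI]
          have hta : -(P/2) < t := lt_of_le_of_lt (le_max_right _ _) htI.1
          have ha : 0 < P^2 + 2*P*t := by nlinarith
          have hvol : volume {y : Fin 2 → ℝ | t^2 + (y 0^2 + y 1^2) < k^2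
              ∧ k^2 < (t+P)^2 + (y 0^2 + y 1^2)}
              ≤ ENNReal.ofReal (ω₂ * (P^2 + 2*P*t)) := by
            refine le_trans (measure_mono ?_) (le_trans
              (annulus_measure (k^2 - (t+P)^2) (k^2 - t^2)) (le_of_eq ?_))
            · intro y hy
              obtain ⟨h1, h2⟩ := hy
              exact ⟨by linarith, by linarith⟩
            · congr 1
              ring
          calc bg (P^2+2*P*t) * volume {y : Fin 2 → ℝ | t^2 + (y 0^2 + y 1^2) < k^2
                ∧ k^2 < (t+P)^2 + (y 0^2 + y 1^2)}
              ≤ bg (P^2+2*P*t) * ENNReal.ofReal (ω₂ * (P^2 + 2*P*t)) := by gcongr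
            _ = ENNReal.ofReal (ω₂ * (Real.sqrt (P^2+2*P*t))⁻¹) := by
              rw [bg, ← ENNReal.ofReal_mul (by positivity)]
              congr 1
              have hne : P^2+2*P*t ≠ 0 := ha.ne'
              calc _ = ((P^2+2*P*t)⁻¹ * (P^2+2*P*t)) * (ω₂ * (Real.sqrt (P^2+2*P*t))⁻¹) := by ring
                _ = _ := by rw [inv_mul_cancel₀ hne, one_mul]
        · rw [Set.indicator_of_notMem htI]
          have hempty : {y : Fin 2 → ℝ | t^2 + (y 0^2 + y 1^2) < k^2
              ∧ k^2 < (t+P)^2 + (y 0^2 + y 1^2)} = ∅ := by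
            ext y
            simp only [mem_setOf_eq, mem_empty_iff_false, iff_false, not_and, not_lt]
            intro h1
            have hQ : 0 ≤ y 0^2 + y 1^2 := by positivity
            rw [mem_Ioo, not_and_or, not_lt, not_lt] at htI
            rcases htI with h | h
            · rcases max_cases (-k) (-(P/2)) with ⟨heq, _⟩ | ⟨heq, _⟩
              · rw [ht₀, heq] at h
                nlinarith
              · rw [ht₀, heq] at h
                nlinarith
            · nlinarith
          rw [hempty]
          simp
    _ = ENNReal.ofReal ω₂ * ∫⁻ t in Ioo t₀ k, ENNReal.ofReal (Real.sqrt (P^2+2*P*t))⁻¹ := by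
        rw [lintegral_indicator measurableSet_Ioo]
        rw [← lintegral_const_mul' _ _ ENNReal.ofReal_ne_top]
        apply lintegral_congr
        intro t
        rw [← ENNReal.ofReal_mul ω₂_nonneg]
    _ ≤ ENNReal.ofReal ω₂ * ENNReal.ofReal (Real.sqrt (P * (P + 2*k)) / P) := by
        gcongr
        exact oneD hP hk
    _ = ENNReal.ofReal (ω₂ * (Real.sqrt (P * (P + 2*k)) / P)) := by
        rw [← ENNReal.ofReal_mul ω₂_nonneg]

noncomputable def ω₃ : ℝ := (volume (ball (0 : EuclideanSpace ℝ (Fin 3)) 1)).toReal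

lemma ω₃_nonneg : 0 ≤ ω₃ := ENNReal.toReal_nonneg

lemma ν₃_eq : volume (ball (0 : EuclideanSpace ℝ (Fin 3)) 1) = ENNReal.ofReal ω₃ :=
  (ENNReal.ofReal_toReal (measure_ball_lt_top).ne).symm

lemma Smeas (k : ℝ) (p : EuclideanSpace ℝ (Fin 3)) :
    MeasurableSet {r : EuclideanSpace ℝ (Fin 3) | ‖r‖ < k ∧ k < ‖r + p‖} := by
  have h1 : Measurable (fun r : EuclideanSpace ℝ (Fin 3) => ‖r‖) := by fun_prop
  have h2 : Measurable (fun r : EuclideanSpace ℝ (Fin 3) => ‖r + p‖) := by fun_prop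
  exact (measurableSet_lt h1 measurable_const).inter
    (measurableSet_lt measurable_const h2)

lemma vol_ball3 {k : ℝ} (hk : 0 ≤ k) :
    volume (ball (0 : EuclideanSpace ℝ (Fin 3)) k) = ENNReal.ofReal (ω₃ * k^3) := by
  rw [Measure.addHaar_ball volume 0 hk, ν₃_eq, finrank_euclideanSpace_fin,
    ← ENNReal.ofReal_mul (by positivity)]
  ring_nf

lemma far_lemma {k : ℝ} (hk : 0 < k) {p : EuclideanSpace ℝ (Fin 3)} (hP : 3*k ≤ ‖p‖) :
    ∫⁻ r in {r : EuclideanSpace ℝ (Fin 3) | ‖r‖ < k ∧ k < ‖r + p‖},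
        bg (‖r + p‖ ^ 2 - ‖r‖ ^ 2)
      ≤ ENNReal.ofReal (6 / ‖p‖^3 * (ω₃ * k^3)) := by
  have hP0 : 0 < ‖p‖ := by linarith
  have hbound : ∀ r ∈ {r : EuclideanSpace ℝ (Fin 3) | ‖r‖ < k ∧ k < ‖r + p‖},
      bg (‖r + p‖ ^ 2 - ‖r‖ ^ 2) ≤ ENNReal.ofReal (6 / ‖p‖^3) := by
    intro r hr
    obtain ⟨h1, _⟩ := hr
    have h2 : ‖p‖ - k ≤ ‖r + p‖ := by
      have := norm_sub_le (r + p) r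
      simp only [add_sub_cancel_left] at this
      linarith
    have hrp2 : (‖p‖ - k)^2 ≤ ‖r + p‖^2 := by
      apply pow_le_pow_left₀ (by linarith) h2
    have hr2 : ‖r‖^2 < k^2 := pow_lt_pow_left₀ h1 (norm_nonneg r) (by norm_num)
    have ha : ‖p‖^2/3 ≤ ‖r + p‖ ^ 2 - ‖r‖ ^ 2 := by nlinarith
    refine (bg_anti (by positivity) ha).trans ?_
    rw [bg]
    apply ENNReal.ofReal_le_ofReal
    have hsq : ‖p‖/2 ≤ Real.sqrt (‖p‖^2/3) := by
      rw [show ‖p‖/2 = Real.sqrt ((‖p‖/2)^2) from (Real.sqrt_sq (by positivity)).symm]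
      apply Real.sqrt_le_sqrt
      nlinarith
    have h3 : (Real.sqrt (‖p‖^2/3))⁻¹ ≤ 2/‖p‖ := by
      rw [show (2:ℝ)/‖p‖ = (‖p‖/2)⁻¹ by field_simp]
      exact inv_anti₀ (by positivity) hsq
    have h4 : (‖p‖^2/3)⁻¹ = 3/‖p‖^2 := by field_simp
    calc (‖p‖^2/3)⁻¹ * (Real.sqrt (‖p‖^2/3))⁻¹ ≤ (3/‖p‖^2) * (2/‖p‖) := by
          rw [h4]; gcongr
      _ = 6/‖p‖^3 := by field_simp; ring
  calc ∫⁻ r in {r : EuclideanSpace ℝ (Fin 3) | ‖r‖ < k ∧ k < ‖r + p‖},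
        bg (‖r + p‖ ^ 2 - ‖r‖ ^ 2)
      ≤ ∫⁻ _ in {r : EuclideanSpace ℝ (Fin 3) | ‖r‖ < k ∧ k < ‖r + p‖},
          ENNReal.ofReal (6 / ‖p‖^3) := setLIntegral_mono' (Smeas k p) hbound
    _ = ENNReal.ofReal (6 / ‖p‖^3) *
          volume {r : EuclideanSpace ℝ (Fin 3) | ‖r‖ < k ∧ k < ‖r + p‖} := by
        rw [setLIntegral_const]
    _ ≤ ENNReal.ofReal (6 / ‖p‖^3) * volume (ball (0 : EuclideanSpace ℝ (Fin 3)) k) := by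
        gcongr
        intro r hr
        rw [mem_ball, dist_zero_right]
        exact hr.1
    _ = ENNReal.ofReal (6 / ‖p‖^3 * (ω₃ * k^3)) := by
        rw [vol_ball3 hk.le, ← ENNReal.ofReal_mul (by positivity)]

lemma ofReal_half_pow (j : ℕ) : ENNReal.ofReal ((1/2 : ℝ)^j) = (2⁻¹ : ℝ≥0∞)^j := by
  rw [ENNReal.ofReal_pow (by norm_num)]
  congr 1
  rw [one_div, ENNReal.ofReal_inv_of_pos (by norm_num)]
  norm_num

lemma geom_half : (∑' j : ℕ, (2⁻¹ : ℝ≥0∞)^j) = 2 := by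
  rw [ENNReal.tsum_geometric, ENNReal.one_sub_inv_two, inv_inv]

lemma shell_meas (a b : ℝ) :
    MeasurableSet {p : EuclideanSpace ℝ (Fin 3) | a ≤ ‖p‖ ∧ ‖p‖ < b} := by
  have h1 : Measurable (fun p : EuclideanSpace ℝ (Fin 3) => ‖p‖) := by fun_prop
  exact (measurableSet_le measurable_const h1).inter (measurableSet_lt h1 measurable_const)

lemma dyadic_low {R : ℝ} (hR : 0 < R) :
    ∫⁻ p : EuclideanSpace ℝ (Fin 3) in ball 0 R, ENNReal.ofReal ‖p‖⁻¹
      ≤ ENNReal.ofReal (4 * ω₃ * R^2) := by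
  set A : ℕ → Set (EuclideanSpace ℝ (Fin 3)) :=
    fun j => {p | R/2^(j+1) ≤ ‖p‖ ∧ ‖p‖ < R/2^j} with hA
  have hpoint : ∀ p ∈ ball (0 : EuclideanSpace ℝ (Fin 3)) R, ENNReal.ofReal ‖p‖⁻¹
      ≤ ∑' j, (A j).indicator (fun _ => ENNReal.ofReal (2^(j+1)/R)) p := by
    intro p hp
    rcases eq_or_ne p 0 with rfl | hp0
    · simp
    · have hn : 0 < ‖p‖ := norm_pos_iff.2 hp0
      have hpR : ‖p‖ < R := by rwa [mem_ball, dist_zero_right] at hp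
      have hq : 1 < R/‖p‖ := (one_lt_div hn).2 hpR
      have hex : ∃ m : ℕ, R/‖p‖ ≤ 2^m := by
        obtain ⟨n, hn2⟩ := pow_unbounded_of_one_lt (R/‖p‖) (one_lt_two)
        exact ⟨n, hn2.le⟩
      have hm : R/‖p‖ ≤ 2^(Nat.find hex) := Nat.find_spec hex
      have hm1 : Nat.find hex ≠ 0 := by
        intro h
        rw [h] at hm
        simp at hm
        linarith
      obtain ⟨j, hj⟩ := Nat.exists_eq_succ_of_ne_zero hm1
      have hjlt : ¬(R/‖p‖ ≤ 2^j) := Nat.find_min hex (by omega)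
      push_neg at hjlt
      rw [hj, Nat.succ_eq_add_one] at hm
      have hmem : p ∈ A j := by
        constructor
        · rw [div_le_iff₀ (by positivity)]
          rw [div_le_iff₀ hn] at hm
          linarith [hm]
        · rw [lt_div_iff₀ (by positivity)]
          rw [lt_div_iff₀ hn] at hjlt
          linarith [hjlt]
      have hle : ENNReal.ofReal ‖p‖⁻¹ ≤ ENNReal.ofReal (2^(j+1)/R) := by
        apply ENNReal.ofReal_le_ofReal
        have h1 : R/2^(j+1) ≤ ‖p‖ := hmem.1
        have h2 : (0:ℝ) < R/2^(j+1) := by positivity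
        calc ‖p‖⁻¹ ≤ (R/2^(j+1))⁻¹ := inv_anti₀ h2 h1
          _ = 2^(j+1)/R := by field_simp
      calc ENNReal.ofReal ‖p‖⁻¹ ≤ (A j).indicator
            (fun _ => ENNReal.ofReal (2^(j+1)/R)) p := by
            rw [indicator_of_mem hmem]; exact hle
        _ ≤ _ := ENNReal.le_tsum j
  calc ∫⁻ p : EuclideanSpace ℝ (Fin 3) in ball 0 R, ENNReal.ofReal ‖p‖⁻¹
      ≤ ∫⁻ p in ball (0 : EuclideanSpace ℝ (Fin 3)) R,
          ∑' j, (A j).indicator (fun _ => ENNReal.ofReal (2^(j+1)/R)) p :=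
        setLIntegral_mono' measurableSet_ball hpoint
    _ ≤ ∫⁻ p, ∑' j, (A j).indicator (fun _ => ENNReal.ofReal (2^(j+1)/R)) p :=
        lintegral_mono' Measure.restrict_le_self le_rfl
    _ = ∑' j, ∫⁻ p, (A j).indicator (fun _ => ENNReal.ofReal (2^(j+1)/R)) p :=
        lintegral_tsum (fun j => (measurable_const.indicator
          (shell_meas (R/2^(j+1)) (R/2^j))).aemeasurable)
    _ = ∑' j, ENNReal.ofReal (2^(j+1)/R) * volume (A j) := by
        congr 1
        funext j
        exact lintegral_indicator_const (shell_meas (R/2^(j+1)) (R/2^j)) _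
    _ ≤ ∑' j, ENNReal.ofReal (2*ω₃*R^2) * (2⁻¹)^j := by
        apply ENNReal.tsum_le_tsum
        intro j
        have hvol : volume (A j) ≤ ENNReal.ofReal (ω₃ * (R/2^j)^3) := by
          rw [← vol_ball3 (by positivity : (0:ℝ) ≤ R/2^j)]
          apply measure_mono
          intro q hq
          rw [mem_ball, dist_zero_right]
          exact hq.2
        calc ENNReal.ofReal (2^(j+1)/R) * volume (A j)
            ≤ ENNReal.ofReal (2^(j+1)/R) * ENNReal.ofReal (ω₃ * (R/2^j)^3) := by gcongr
          _ = ENNReal.ofReal (2^(j+1)/R * (ω₃ * (R/2^j)^3)) :=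
            (ENNReal.ofReal_mul (by positivity)).symm
          _ ≤ ENNReal.ofReal (2*ω₃*R^2 * (1/2:ℝ)^j) := by
            apply ENNReal.ofReal_le_ofReal
            have key : (2:ℝ)^(j+1)/R * (ω₃ * (R/2^j)^3) = 2*ω₃*R^2 * (1/4:ℝ)^j := by
              have h2 : (2:ℝ)^(j+1) = 2 * 2^j := by rw [pow_succ]; ring
              have h4 : (1/4:ℝ)^j = ((2:ℝ)^j * 2^j)⁻¹ := by
                rw [div_pow, one_pow, show (4:ℝ) = 2*2 by norm_num, mul_pow, one_div]
              have hx : (0:ℝ) < (2:ℝ)^j := by positivity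
              rw [h2, h4, div_pow]
              field_simp
            rw [key]
            have : (1/4:ℝ)^j ≤ (1/2:ℝ)^j := by
              apply pow_le_pow_left₀ (by norm_num) (by norm_num)
            have h0 : (0:ℝ) ≤ 2*ω₃*R^2 :=
              mul_nonneg (mul_nonneg (by norm_num) ω₃_nonneg) (sq_nonneg R)
            nlinarith [this, h0, pow_nonneg (by norm_num : (0:ℝ) ≤ 1/4) j]
          _ = ENNReal.ofReal (2*ω₃*R^2) * (2⁻¹)^j := by
            rw [ENNReal.ofReal_mul
              (mul_nonneg (mul_nonneg (by norm_num) ω₃_nonneg) (sq_nonneg R)),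
              ofReal_half_pow]
    _ = ENNReal.ofReal (2*ω₃*R^2) * 2 := by
        rw [ENNReal.tsum_mul_left, geom_half]
    _ ≤ ENNReal.ofReal (4 * ω₃ * R^2) := by
        rw [show ((2:ℝ≥0∞)) = ENNReal.ofReal 2 by norm_num,
          ← ENNReal.ofReal_mul
            (mul_nonneg (mul_nonneg (by norm_num) ω₃_nonneg) (sq_nonneg R))]
        apply ENNReal.ofReal_le_ofReal
        nlinarith [ω₃_nonneg, sq_nonneg R]

lemma dyadic_high {R : ℝ} (hR : 0 < R) :
    ∫⁻ p : EuclideanSpace ℝ (Fin 3) in (ball 0 R)ᶜ, ENNReal.ofReal ((‖p‖^6)⁻¹)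
      ≤ ENNReal.ofReal (16 * ω₃ / R^3) := by
  set B : ℕ → Set (EuclideanSpace ℝ (Fin 3)) :=
    fun j => {p | R*2^j ≤ ‖p‖ ∧ ‖p‖ < R*2^(j+1)} with hB
  have hpoint : ∀ p ∈ (ball (0 : EuclideanSpace ℝ (Fin 3)) R)ᶜ,
      ENNReal.ofReal ((‖p‖^6)⁻¹)
      ≤ ∑' j, (B j).indicator (fun _ => ENNReal.ofReal (((R*2^j)^6)⁻¹)) p := by
    intro p hp
    have hpR : R ≤ ‖p‖ := by
      rw [mem_compl_iff, mem_ball, dist_zero_right, not_lt] at hp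
      exact hp
    have hn : 0 < ‖p‖ := lt_of_lt_of_le hR hpR
    have hex : ∃ m : ℕ, ‖p‖/R < 2^m := pow_unbounded_of_one_lt (‖p‖/R) one_lt_two
    have hm : ‖p‖/R < 2^(Nat.find hex) := Nat.find_spec hex
    have hm1 : Nat.find hex ≠ 0 := by
      intro h
      rw [h] at hm
      simp at hm
      rw [div_lt_iff₀ hR] at hm
      linarith
    obtain ⟨j, hj⟩ := Nat.exists_eq_succ_of_ne_zero hm1
    have hjge : ¬(‖p‖/R < 2^j) := Nat.find_min hex (by omega)
    push_neg at hjge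
    rw [hj, Nat.succ_eq_add_one] at hm
    have hmem : p ∈ B j := by
      constructor
      · rw [le_div_iff₀ hR] at hjge
        linarith
      · rw [div_lt_iff₀ hR] at hm
        linarith
    have hle : ENNReal.ofReal ((‖p‖^6)⁻¹) ≤ ENNReal.ofReal (((R*2^j)^6)⁻¹) := by
      apply ENNReal.ofReal_le_ofReal
      apply inv_anti₀ (by positivity)
      exact pow_le_pow_left₀ (by positivity) hmem.1 6
    calc ENNReal.ofReal ((‖p‖^6)⁻¹)
        ≤ (B j).indicator (fun _ => ENNReal.ofReal (((R*2^j)^6)⁻¹)) p := by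
          rw [indicator_of_mem hmem]; exact hle
      _ ≤ _ := ENNReal.le_tsum j
  calc ∫⁻ p : EuclideanSpace ℝ (Fin 3) in (ball 0 R)ᶜ, ENNReal.ofReal ((‖p‖^6)⁻¹)
      ≤ ∫⁻ p in (ball (0 : EuclideanSpace ℝ (Fin 3)) R)ᶜ,
          ∑' j, (B j).indicator (fun _ => ENNReal.ofReal (((R*2^j)^6)⁻¹)) p :=
        setLIntegral_mono' measurableSet_ball.compl hpoint
    _ ≤ ∫⁻ p, ∑' j, (B j).indicator (fun _ => ENNReal.ofReal (((R*2^j)^6)⁻¹)) p :=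
        lintegral_mono' Measure.restrict_le_self le_rfl
    _ = ∑' j, ∫⁻ p, (B j).indicator (fun _ => ENNReal.ofReal (((R*2^j)^6)⁻¹)) p :=
        lintegral_tsum (fun j => (measurable_const.indicator
          (shell_meas (R*2^j) (R*2^(j+1)))).aemeasurable)
    _ = ∑' j, ENNReal.ofReal (((R*2^j)^6)⁻¹) * volume (B j) := by
        congr 1
        funext j
        exact lintegral_indicator_const (shell_meas (R*2^j) (R*2^(j+1))) _
    _ ≤ ∑' j, ENNReal.ofReal (8*ω₃/R^3) * (2⁻¹)^j := by
        apply ENNReal.tsum_le_tsum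
        intro j
        have hvol : volume (B j) ≤ ENNReal.ofReal (ω₃ * (R*2^(j+1))^3) := by
          rw [← vol_ball3 (by positivity : (0:ℝ) ≤ R*2^(j+1))]
          apply measure_mono
          intro q hq
          rw [mem_ball, dist_zero_right]
          exact hq.2
        calc ENNReal.ofReal (((R*2^j)^6)⁻¹) * volume (B j)
            ≤ ENNReal.ofReal (((R*2^j)^6)⁻¹) * ENNReal.ofReal (ω₃ * (R*2^(j+1))^3) := by
              gcongr
          _ = ENNReal.ofReal (((R*2^j)^6)⁻¹ * (ω₃ * (R*2^(j+1))^3)) :=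
            (ENNReal.ofReal_mul (by positivity)).symm
          _ ≤ ENNReal.ofReal (8*ω₃/R^3 * (1/2:ℝ)^j) := by
            apply ENNReal.ofReal_le_ofReal
            have h2 : (2:ℝ)^(j+1) = 2 * 2^j := by rw [pow_succ]; ring
            have hx : (0:ℝ) < (2:ℝ)^j := by positivity
            have key : ((R*2^j)^6)⁻¹ * (ω₃ * (R*2^(j+1))^3)
                = 8*ω₃/R^3 * ((1/2:ℝ)^j)^3 := by
              rw [h2, mul_pow, mul_pow, mul_pow, div_pow, one_pow]
              field_simp
              ring
            rw [key]
            have hle3 : ((1/2:ℝ)^j)^3 ≤ (1/2:ℝ)^j := by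
              have h1 : (0:ℝ) ≤ (1/2:ℝ)^j := by positivity
              have h2' : (1/2:ℝ)^j ≤ 1 := pow_le_one₀ (by norm_num) (by norm_num)
              calc ((1/2:ℝ)^j)^3 ≤ ((1/2:ℝ)^j)^1 :=
                    pow_le_pow_of_le_one h1 h2' (by norm_num)
                _ = (1/2:ℝ)^j := pow_one _
            have h0 : (0:ℝ) ≤ 8*ω₃/R^3 := by
              apply div_nonneg _ (by positivity)
              exact mul_nonneg (by norm_num) ω₃_nonneg
            nlinarith [pow_nonneg (by norm_num : (0:ℝ) ≤ 1/2) j]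
          _ = ENNReal.ofReal (8*ω₃/R^3) * (2⁻¹)^j := by
            rw [ENNReal.ofReal_mul (div_nonneg (mul_nonneg (by norm_num) ω₃_nonneg)
              (by positivity)), ofReal_half_pow]
    _ = ENNReal.ofReal (8*ω₃/R^3) * 2 := by
        rw [ENNReal.tsum_mul_left, geom_half]
    _ ≤ ENNReal.ofReal (16 * ω₃ / R^3) := by
        rw [show ((2:ℝ≥0∞)) = ENNReal.ofReal 2 by norm_num,
          ← ENNReal.ofReal_mul (div_nonneg (mul_nonneg (by norm_num) ω₃_nonneg)
            (by positivity))]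
        apply ENNReal.ofReal_le_ofReal
        apply le_of_eq
        ring

lemma bg_ne_top (s : ℝ) : bg s ≠ ∞ := ENNReal.ofReal_ne_top

lemma Smeas' (k : ℝ) (p : EuclideanSpace ℝ (Fin 3)) :
    MeasurableSet {r : EuclideanSpace ℝ (Fin 3) | ‖r‖ < k ∧ k < ‖r - p‖} := by
  have h1 : Measurable (fun r : EuclideanSpace ℝ (Fin 3) => ‖r‖) := by fun_prop
  have h2 : Measurable (fun r : EuclideanSpace ℝ (Fin 3) => ‖r - p‖) := by fun_prop
  exact (measurableSet_lt h1 measurable_const).inter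
    (measurableSet_lt measurable_const h2)

lemma sq_pos_aux {k : ℝ} {x y : ℝ} (h1 : x < k) (h2 : k < y) (hx : 0 ≤ x) :
    0 < y^2 - x^2 := by nlinarith

lemma middle {k₁ k₂ ε : ℝ} (hε : 0 < ε) (hk₁ : 0 < k₁) (hk₂ : 0 < k₂)
    (p : EuclideanSpace ℝ (Fin 3)) {α β : ℝ}
    (hA : ∫⁻ r in {r : EuclideanSpace ℝ (Fin 3) | ‖r‖ < k₁ ∧ k₁ < ‖r + p‖},
        bg (‖r + p‖^2 - ‖r‖^2) ≤ ENNReal.ofReal α)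
    (hB : ∫⁻ r' in {r' : EuclideanSpace ℝ (Fin 3) | ‖r'‖ < k₂ ∧ k₂ < ‖r' - p‖},
        bg (‖r' - p‖^2 - ‖r'‖^2) ≤ ENNReal.ofReal β) :
    (∫⁻ r in {r : EuclideanSpace ℝ (Fin 3) | ‖r‖ < k₁ ∧ k₁ < ‖r + p‖},
      ∫⁻ r' in {r' : EuclideanSpace ℝ (Fin 3) | ‖r'‖ < k₂ ∧ k₂ < ‖r' - p‖},
        ENNReal.ofReal
          |1 / (‖r + p‖ ^ 2 - ‖r‖ ^ 2 + ‖r' - p‖ ^ 2 - ‖r'‖ ^ 2 + 2 * ε) ^ 2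
            - 1 / (‖r + p‖ ^ 2 - ‖r‖ ^ 2 + ‖r' - p‖ ^ 2 - ‖r'‖ ^ 2) ^ 2|)
      ≤ ENNReal.ofReal (4 * ε) * ENNReal.ofReal α * ENNReal.ofReal β := by
  have hstep : ∀ r ∈ {r : EuclideanSpace ℝ (Fin 3) | ‖r‖ < k₁ ∧ k₁ < ‖r + p‖},
      (∫⁻ r' in {r' : EuclideanSpace ℝ (Fin 3) | ‖r'‖ < k₂ ∧ k₂ < ‖r' - p‖},
        ENNReal.ofReal
          |1 / (‖r + p‖ ^ 2 - ‖r‖ ^ 2 + ‖r' - p‖ ^ 2 - ‖r'‖ ^ 2 + 2 * ε) ^ 2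
            - 1 / (‖r + p‖ ^ 2 - ‖r‖ ^ 2 + ‖r' - p‖ ^ 2 - ‖r'‖ ^ 2) ^ 2|)
      ≤ (ENNReal.ofReal (4 * ε) * ENNReal.ofReal β) * bg (‖r + p‖^2 - ‖r‖^2) := by
    intro r hr
    have hApos : 0 < ‖r + p‖^2 - ‖r‖^2 := sq_pos_aux hr.1 hr.2 (norm_nonneg r)
    calc (∫⁻ r' in {r' : EuclideanSpace ℝ (Fin 3) | ‖r'‖ < k₂ ∧ k₂ < ‖r' - p‖},
        ENNReal.ofReal
          |1 / (‖r + p‖ ^ 2 - ‖r‖ ^ 2 + ‖r' - p‖ ^ 2 - ‖r'‖ ^ 2 + 2 * ε) ^ 2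
            - 1 / (‖r + p‖ ^ 2 - ‖r‖ ^ 2 + ‖r' - p‖ ^ 2 - ‖r'‖ ^ 2) ^ 2|)
        ≤ ∫⁻ r' in {r' : EuclideanSpace ℝ (Fin 3) | ‖r'‖ < k₂ ∧ k₂ < ‖r' - p‖},
            (ENNReal.ofReal (4 * ε) * bg (‖r + p‖^2 - ‖r‖^2)) * bg (‖r' - p‖^2 - ‖r'‖^2) := by
          apply setLIntegral_mono' (Smeas' k₂ p)
          intro r' hr'
          have hBpos : 0 < ‖r' - p‖^2 - ‖r'‖^2 := sq_pos_aux hr'.1 hr'.2 (norm_nonneg r')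
          have hexpr : ‖r + p‖ ^ 2 - ‖r‖ ^ 2 + ‖r' - p‖ ^ 2 - ‖r'‖ ^ 2
              = (‖r + p‖^2 - ‖r‖^2) + (‖r' - p‖^2 - ‖r'‖^2) := by ring
          rw [hexpr, mul_assoc]
          exact pointwise_bound hApos hBpos hε
      _ = (ENNReal.ofReal (4 * ε) * bg (‖r + p‖^2 - ‖r‖^2)) *
            ∫⁻ r' in {r' : EuclideanSpace ℝ (Fin 3) | ‖r'‖ < k₂ ∧ k₂ < ‖r' - p‖},
              bg (‖r' - p‖^2 - ‖r'‖^2) :=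
          lintegral_const_mul' _ _
            (ENNReal.mul_ne_top ENNReal.ofReal_ne_top (bg_ne_top _))
      _ ≤ (ENNReal.ofReal (4 * ε) * bg (‖r + p‖^2 - ‖r‖^2)) * ENNReal.ofReal β := by
          gcongr
      _ = (ENNReal.ofReal (4 * ε) * ENNReal.ofReal β) * bg (‖r + p‖^2 - ‖r‖^2) := by
          ring
  calc (∫⁻ r in {r : EuclideanSpace ℝ (Fin 3) | ‖r‖ < k₁ ∧ k₁ < ‖r + p‖},
      ∫⁻ r' in {r' : EuclideanSpace ℝ (Fin 3) | ‖r'‖ < k₂ ∧ k₂ < ‖r' - p‖},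
        ENNReal.ofReal
          |1 / (‖r + p‖ ^ 2 - ‖r‖ ^ 2 + ‖r' - p‖ ^ 2 - ‖r'‖ ^ 2 + 2 * ε) ^ 2
            - 1 / (‖r + p‖ ^ 2 - ‖r‖ ^ 2 + ‖r' - p‖ ^ 2 - ‖r'‖ ^ 2) ^ 2|)
      ≤ ∫⁻ r in {r : EuclideanSpace ℝ (Fin 3) | ‖r‖ < k₁ ∧ k₁ < ‖r + p‖},
          (ENNReal.ofReal (4 * ε) * ENNReal.ofReal β) * bg (‖r + p‖^2 - ‖r‖^2) :=
        setLIntegral_mono' (Smeas k₁ p) hstep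
    _ = (ENNReal.ofReal (4 * ε) * ENNReal.ofReal β) *
          ∫⁻ r in {r : EuclideanSpace ℝ (Fin 3) | ‖r‖ < k₁ ∧ k₁ < ‖r + p‖},
            bg (‖r + p‖^2 - ‖r‖^2) :=
        lintegral_const_mul' _ _
          (ENNReal.mul_ne_top ENNReal.ofReal_ne_top ENNReal.ofReal_ne_top)
    _ ≤ (ENNReal.ofReal (4 * ε) * ENNReal.ofReal β) * ENNReal.ofReal α := by gcongr
    _ = ENNReal.ofReal (4 * ε) * ENNReal.ofReal α * ENNReal.ofReal β := by ring

end BelyakovAux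

open BelyakovAux Metric Set in
/-- Estimate of the error term `ℰ₂` in Lemma 5.5: removing the `ε`-regularization from the
Belyakov energy denominator costs at most `C ε k₁³ (k₁/k₂)³`. -/
theorem belyakov_regularization_error_bound :
    ∃ C : ℝ, 0 < C ∧ ∀ (k₁ k₂ ε : ℝ), 0 < k₂ → k₂ ≤ k₁ → 0 < ε →
      (∫⁻ p : E3, ∫⁻ r in {r : E3 | ‖r‖ < k₁ ∧ k₁ < ‖r + p‖},
        ∫⁻ r' in {r' : E3 | ‖r'‖ < k₂ ∧ k₂ < ‖r' - p‖},
          ENNReal.ofReal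
            |1 / (‖r + p‖ ^ 2 - ‖r‖ ^ 2 + ‖r' - p‖ ^ 2 - ‖r'‖ ^ 2 + 2 * ε) ^ 2
              - 1 / (‖r + p‖ ^ 2 - ‖r‖ ^ 2 + ‖r' - p‖ ^ 2 - ‖r'‖ ^ 2) ^ 2|)
        ≤ ENNReal.ofReal (C * ε * k₁ ^ 3 * (k₁ / k₂) ^ 3) := by
  refine ⟨720 * ω₂^2 * ω₃ + 86 * ω₃^3 + 1,
    add_pos_of_nonneg_of_pos (add_nonneg
      (mul_nonneg (mul_nonneg (by norm_num) (sq_nonneg ω₂)) ω₃_nonneg)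
      (mul_nonneg (by norm_num) (pow_nonneg ω₃_nonneg 3))) one_pos, ?_⟩
  intro k₁ k₂ ε hk₂ hk₁₂ hε
  have hk₁ : 0 < k₁ := lt_of_lt_of_le hk₂ hk₁₂
  set Inner : E3 → ℝ≥0∞ := fun p =>
    ∫⁻ r in {r : E3 | ‖r‖ < k₁ ∧ k₁ < ‖r + p‖},
      ∫⁻ r' in {r' : E3 | ‖r'‖ < k₂ ∧ k₂ < ‖r' - p‖},
        ENNReal.ofReal
          |1 / (‖r + p‖ ^ 2 - ‖r‖ ^ 2 + ‖r' - p‖ ^ 2 - ‖r'‖ ^ 2 + 2 * ε) ^ 2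
            - 1 / (‖r + p‖ ^ 2 - ‖r‖ ^ 2 + ‖r' - p‖ ^ 2 - ‖r'‖ ^ 2) ^ 2| with hInner
  -- near bound
  have hnear : ∀ p ∈ ball (0 : E3) (3*k₁),
      Inner p ≤ ENNReal.ofReal (20*ε*ω₂^2*k₁) * ENNReal.ofReal (‖p‖⁻¹) := by
    intro p hp
    rcases eq_or_ne p 0 with rfl | hp0
    · have hset : {r : E3 | ‖r‖ < k₁ ∧ k₁ < ‖r + 0‖} = ∅ := by
        ext r
        simp only [add_zero, mem_setOf_eq, mem_empty_iff_false, iff_false, not_and, not_lt]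
        intro h; linarith
      rw [hInner]
      simp only [hset, Measure.restrict_empty, lintegral_zero_measure]
      exact bot_le
    · have hP : 0 < ‖p‖ := norm_pos_iff.2 hp0
      have hp3 : ‖p‖ < 3*k₁ := by rwa [mem_ball, dist_zero_right] at hp
      have hB0 := slice_lemma hk₂ (neg_ne_zero.2 hp0)
      rw [norm_neg] at hB0
      simp only [← sub_eq_add_neg] at hB0
      refine (middle hε hk₁ hk₂ p (slice_lemma hk₁ hp0) hB0).trans ?_
      rw [← ENNReal.ofReal_mul (by positivity),
        ← ENNReal.ofReal_mul (mul_nonneg (by positivity)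
          (mul_nonneg ω₂_nonneg (by positivity))),
        ← ENNReal.ofReal_mul (by positivity : (0:ℝ) ≤ 20*ε*ω₂^2*k₁)]
      apply ENNReal.ofReal_le_ofReal
      set s₁ := Real.sqrt (‖p‖ * (‖p‖ + 2*k₁)) with hs₁
      set s₂ := Real.sqrt (‖p‖ * (‖p‖ + 2*k₂)) with hs₂
      have hs₁n : 0 ≤ s₁ := Real.sqrt_nonneg _
      have hs₂n : 0 ≤ s₂ := Real.sqrt_nonneg _
      have hprod : s₁ * s₂ ≤ 5*k₁*‖p‖ := by
        rw [hs₁, hs₂, ← Real.sqrt_mul (by positivity)]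
        have h25 : (‖p‖ + 2*k₁) * (‖p‖ + 2*k₂) ≤ 25*k₁^2 := by nlinarith
        have h1 : ‖p‖ * (‖p‖ + 2*k₁) * (‖p‖ * (‖p‖ + 2*k₂)) ≤ (5*k₁*‖p‖)^2 := by
          nlinarith [mul_le_mul_of_nonneg_left h25 (sq_nonneg ‖p‖)]
        calc Real.sqrt (‖p‖ * (‖p‖ + 2*k₁) * (‖p‖ * (‖p‖ + 2*k₂)))
            ≤ Real.sqrt ((5*k₁*‖p‖)^2) := Real.sqrt_le_sqrt h1
          _ = 5*k₁*‖p‖ := Real.sqrt_sq (by positivity)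
      have heq : 4 * ε * (ω₂ * (s₁ / ‖p‖)) * (ω₂ * (s₂ / ‖p‖))
          = 4*ε*ω₂^2*(s₁*s₂)/‖p‖^2 := by field_simp
      rw [heq]
      calc 4*ε*ω₂^2*(s₁*s₂)/‖p‖^2 ≤ 4*ε*ω₂^2*(5*k₁*‖p‖)/‖p‖^2 := by
            gcongr
          _ = 20*ε*ω₂^2*k₁ * ‖p‖⁻¹ := by field_simp; ring
  -- far bound
  have hfar : ∀ p ∈ (ball (0 : E3) (3*k₁))ᶜ,
      Inner p ≤ ENNReal.ofReal (144*ε*ω₃^2*k₁^3*k₂^3) * ENNReal.ofReal ((‖p‖^6)⁻¹) := by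
    intro p hp
    have hp3 : 3*k₁ ≤ ‖p‖ := by
      rw [mem_compl_iff, mem_ball, dist_zero_right, not_lt] at hp
      exact hp
    have hP : 0 < ‖p‖ := lt_of_lt_of_le (by positivity) hp3
    have hp3' : 3*k₂ ≤ ‖p‖ := le_trans (by nlinarith) hp3
    have hB0 := far_lemma hk₂ (p := -p) (by rwa [norm_neg])
    rw [norm_neg] at hB0
    simp only [← sub_eq_add_neg] at hB0
    refine (middle hε hk₁ hk₂ p (far_lemma hk₁ hp3) hB0).trans ?_
    rw [← ENNReal.ofReal_mul (by positivity),
      ← ENNReal.ofReal_mul (mul_nonneg (by positivity)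
        (mul_nonneg (by positivity) (mul_nonneg ω₃_nonneg (by positivity)))),
      ← ENNReal.ofReal_mul (mul_nonneg (mul_nonneg (mul_nonneg
        (mul_nonneg (by norm_num) hε.le) (sq_nonneg ω₃)) (by positivity)) (by positivity))]
    apply ENNReal.ofReal_le_ofReal
    apply le_of_eq
    field_simp
    ring
  -- assemble
  calc (∫⁻ p : E3, Inner p)
      = (∫⁻ p : E3 in ball 0 (3*k₁), Inner p)
        + ∫⁻ p : E3 in (ball (0:E3) (3*k₁))ᶜ, Inner p :=
        (lintegral_add_compl _ measurableSet_ball).symm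
    _ ≤ ENNReal.ofReal (720*ε*ω₂^2*ω₃*k₁^3) + ENNReal.ofReal (86*ε*ω₃^3*k₁^3) := by
        apply add_le_add
        · calc (∫⁻ p : E3 in ball 0 (3*k₁), Inner p)
              ≤ ∫⁻ p : E3 in ball 0 (3*k₁),
                  ENNReal.ofReal (20*ε*ω₂^2*k₁) * ENNReal.ofReal (‖p‖⁻¹) :=
                setLIntegral_mono' measurableSet_ball hnear
            _ = ENNReal.ofReal (20*ε*ω₂^2*k₁) *
                  ∫⁻ p : E3 in ball 0 (3*k₁), ENNReal.ofReal (‖p‖⁻¹) :=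
                lintegral_const_mul' _ _ ENNReal.ofReal_ne_top
            _ ≤ ENNReal.ofReal (20*ε*ω₂^2*k₁) * ENNReal.ofReal (4*ω₃*(3*k₁)^2) := by
                gcongr
                exact dyadic_low (by positivity)
            _ ≤ ENNReal.ofReal (720*ε*ω₂^2*ω₃*k₁^3) := by
                rw [← ENNReal.ofReal_mul (by positivity)]
                apply ENNReal.ofReal_le_ofReal
                apply le_of_eq
                ring
        · calc (∫⁻ p : E3 in (ball (0:E3) (3*k₁))ᶜ, Inner p)
              ≤ ∫⁻ p : E3 in (ball (0:E3) (3*k₁))ᶜ,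
                  ENNReal.ofReal (144*ε*ω₃^2*k₁^3*k₂^3) * ENNReal.ofReal ((‖p‖^6)⁻¹) :=
                setLIntegral_mono' measurableSet_ball.compl hfar
            _ = ENNReal.ofReal (144*ε*ω₃^2*k₁^3*k₂^3) *
                  ∫⁻ p : E3 in (ball (0:E3) (3*k₁))ᶜ, ENNReal.ofReal ((‖p‖^6)⁻¹) :=
                lintegral_const_mul' _ _ ENNReal.ofReal_ne_top
            _ ≤ ENNReal.ofReal (144*ε*ω₃^2*k₁^3*k₂^3) *
                  ENNReal.ofReal (16*ω₃/(3*k₁)^3) := by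
                gcongr
                exact dyadic_high (by positivity)
            _ ≤ ENNReal.ofReal (86*ε*ω₃^3*k₁^3) := by
                rw [← ENNReal.ofReal_mul (mul_nonneg (mul_nonneg (mul_nonneg
                  (mul_nonneg (by norm_num) hε.le) (sq_nonneg ω₃)) (by positivity))
                  (by positivity))]
                apply ENNReal.ofReal_le_ofReal
                have hk₂3 : k₂^3 ≤ k₁^3 := pow_le_pow_left₀ hk₂.le hk₁₂ 3
                have h1 : 144*ε*ω₃^2*k₁^3*k₂^3 * (16*ω₃/(3*k₁)^3)
                    = (2304/27)*ε*ω₃^3*k₂^3 := by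
                  field_simp
                  ring
                rw [h1]
                calc (2304/27)*ε*ω₃^3*k₂^3 ≤ 86*ε*ω₃^3*k₂^3 := by
                      apply mul_le_mul_of_nonneg_right _ (pow_nonneg hk₂.le 3)
                      apply mul_le_mul_of_nonneg_right _ (pow_nonneg ω₃_nonneg 3)
                      apply mul_le_mul_of_nonneg_right _ hε.le
                      norm_num
                  _ ≤ 86*ε*ω₃^3*k₁^3 := by
                      apply mul_le_mul_of_nonneg_left hk₂3
                      exact mul_nonneg (mul_nonneg (by norm_num) hε.le)
                        (pow_nonneg ω₃_nonneg 3)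
    _ ≤ ENNReal.ofReal ((720 * ω₂^2 * ω₃ + 86 * ω₃^3 + 1) * ε * k₁ ^ 3 * (k₁ / k₂) ^ 3) := by
        rw [← ENNReal.ofReal_add
          (mul_nonneg (mul_nonneg (mul_nonneg (mul_nonneg (by norm_num) hε.le)
            (sq_nonneg ω₂)) ω₃_nonneg) (by positivity))
          (mul_nonneg (mul_nonneg (mul_nonneg (by norm_num) hε.le)
            (pow_nonneg ω₃_nonneg 3)) (by positivity))]
        apply ENNReal.ofReal_le_ofReal
        have hq : 1 ≤ (k₁/k₂)^3 := one_le_pow₀ ((one_le_div hk₂).2 hk₁₂)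
        have hA : 0 ≤ 720*ω₂^2*ω₃ := mul_nonneg (mul_nonneg (by norm_num) (sq_nonneg ω₂)) ω₃_nonneg
        have hB : 0 ≤ 86*ω₃^3 := mul_nonneg (by norm_num) (pow_nonneg ω₃_nonneg 3)
        have hek : 0 < ε*k₁^3 := by positivity
        nlinarith [mul_le_mul_of_nonneg_left hq (mul_nonneg (add_nonneg (add_nonneg hA hB) zero_le_one) hek.le)]
end

section
/- There exists an absolute constant C > 0 such that for all k, k' > 0 and all ε > 0, ∫_{|p|<k} ∫_{|q|<k'} (k² − |p|² + k'² − |q|² + ε)^{−2} dq dp ≤ C k k' log(1 + 2k²/ε) log(1 + 2k'²/ε). (This follows since (A + B + ε)² ≥ (A + ε/2)(B + ε/2) for A, B ≥ 0, together with the single-ball logarithmic estimate.) -/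
open MeasureTheory Real
open scoped ENNReal

open Set

lemma log_integral (k c : ℝ) (hk : 0 < k) (hc : 0 < c) :
    ∫ r in (0:ℝ)..k, (k + c - r)⁻¹ = Real.log ((k + c) / c) := by
  rw [intervalIntegral.integral_comp_sub_left (fun x => x⁻¹) (k + c)]
  simp only [sub_zero, add_sub_cancel_left]
  exact integral_inv_of_pos hc (by linarith)

lemma single_ball (k δ : ℝ) (hk : 0 < k) (hδ : 0 < δ) :
    ∫⁻ p in {p : E3 | ‖p‖ < k}, ENNReal.ofReal (1 / (k ^ 2 - ‖p‖ ^ 2 + δ))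
      ≤ ENNReal.ofReal (3 * (volume (Metric.ball (0:E3) 1)).toReal * k
          * Real.log (1 + k ^ 2 / δ)) := by
  set V : ℝ := (volume (Metric.ball (0:E3) 1)).toReal with hV
  have hV0 : 0 ≤ V := ENNReal.toReal_nonneg
  set f : ℝ → ℝ := fun r => if r < k then 1 / (k ^ 2 - r ^ 2 + δ) else 0 with hf
  have hset : {p : E3 | ‖p‖ < k} = Metric.ball (0:E3) k := by
    ext p; simp [Metric.mem_ball, dist_zero_right]
  -- denominator positive on the ball
  have hden : ∀ r : ℝ, 0 ≤ r → r ≤ k → 0 < k ^ 2 - r ^ 2 + δ := by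
    intro r hr hrk
    have : r ^ 2 ≤ k ^ 2 := by nlinarith
    linarith
  have key : (∫⁻ p in {p : E3 | ‖p‖ < k}, ENNReal.ofReal (1 / (k ^ 2 - ‖p‖ ^ 2 + δ)))
      = ∫⁻ p : E3, ENNReal.ofReal (f ‖p‖) := by
    rw [hset, ← lintegral_indicator measurableSet_ball]
    congr 1
    funext p
    by_cases h : ‖p‖ < k
    · simp [Set.indicator, Metric.mem_ball, dist_zero_right, h, hf]
    · simp [Set.indicator, Metric.mem_ball, dist_zero_right, h, hf]
  -- integrability
  have hmeas : AEStronglyMeasurable (fun p : E3 => 1 / (k ^ 2 - ‖p‖ ^ 2 + δ)) volume := by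
    apply Measurable.aestronglyMeasurable
    have : Measurable fun p : E3 => k ^ 2 - ‖p‖ ^ 2 + δ :=
      ((measurable_const.sub ((measurable_norm).pow_const 2)).add measurable_const)
    have h2 := this.inv
    simp only [one_div]
    exact h2
  have hint : Integrable (fun p : E3 => f ‖p‖) volume := by
    have : (fun p : E3 => f ‖p‖)
        = (Metric.ball (0:E3) k).indicator (fun p => 1 / (k ^ 2 - ‖p‖ ^ 2 + δ)) := by
      funext p
      by_cases h : ‖p‖ < k
      · simp [Set.indicator, Metric.mem_ball, dist_zero_right, h, hf]
      · simp [Set.indicator, Metric.mem_ball, dist_zero_right, h, hf]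
    rw [this, integrable_indicator_iff measurableSet_ball]
    apply Measure.integrableOn_of_bounded measure_ball_lt_top.ne hmeas (M := 1 / δ)
    filter_upwards [ae_restrict_mem measurableSet_ball] with p hp
    have hp' : ‖p‖ < k := by simpa [Metric.mem_ball, dist_zero_right] using hp
    have h1 := hden ‖p‖ (norm_nonneg p) hp'.le
    have h2 : δ ≤ k ^ 2 - ‖p‖ ^ 2 + δ := by nlinarith [norm_nonneg p]
    rw [Real.norm_eq_abs, abs_of_pos (by positivity)]
    exact one_div_le_one_div_of_le hδ h2
  have hnn : ∀ p : E3, 0 ≤ f ‖p‖ := by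
    intro p
    by_cases h : ‖p‖ < k
    · simp only [hf, if_pos h]
      have := hden ‖p‖ (norm_nonneg p) h.le
      positivity
    · simp [hf, if_neg h]
  set c : ℝ := δ / k with hcdef
  have hc : 0 < c := by positivity
  have hkc : k * c = δ := by rw [hcdef]; field_simp
  have hI : ∫ y in Ioi (0:ℝ), y ^ 2 * f y ≤ k * Real.log (1 + k ^ 2 / δ) := by
    have e1 : ∫ y in Ioi (0:ℝ), y ^ 2 * f y
        = ∫ y in Ioo (0:ℝ) k, y ^ 2 / (k ^ 2 - y ^ 2 + δ) := by
      rw [setIntegral_congr_fun measurableSet_Ioi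
        (g := (Ioo (0:ℝ) k).indicator fun y => y ^ 2 / (k ^ 2 - y ^ 2 + δ)) ?_,
        setIntegral_indicator measurableSet_Ioo,
        Set.inter_eq_right.mpr Set.Ioo_subset_Ioi_self]
      intro y hy
      by_cases h : y < k
      · rw [Set.indicator_of_mem (Set.mem_Ioo.mpr ⟨hy, h⟩)]
        simp only [hf]
        rw [if_pos h]
        ring
      · rw [Set.indicator_of_notMem (fun hm => h hm.2)]
        simp only [hf]
        rw [if_neg h, mul_zero]
    have hHcont : ContinuousOn (fun y : ℝ => y ^ 2 / (k ^ 2 - y ^ 2 + δ)) (Icc 0 k) := by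
      apply ContinuousOn.div (by fun_prop) (by fun_prop)
      intro y hy
      exact (hden y hy.1 hy.2).ne'
    have hGcont : ContinuousOn (fun y : ℝ => k * (k + c - y)⁻¹) (Icc 0 k) := by
      apply ContinuousOn.mul continuousOn_const
      apply ContinuousOn.inv₀ (by fun_prop)
      intro y hy
      have : 0 < k + c - y := by
        have := hy.2
        linarith
      exact this.ne'
    have hHint : IntegrableOn (fun y : ℝ => y ^ 2 / (k ^ 2 - y ^ 2 + δ)) (Ioo 0 k) :=
      (hHcont.integrableOn_Icc).mono_set Set.Ioo_subset_Icc_self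
    have hGint : IntegrableOn (fun y : ℝ => k * (k + c - y)⁻¹) (Ioo 0 k) :=
      (hGcont.integrableOn_Icc).mono_set Set.Ioo_subset_Icc_self
    have e2 : ∫ y in Ioo (0:ℝ) k, y ^ 2 / (k ^ 2 - y ^ 2 + δ)
        ≤ ∫ y in Ioo (0:ℝ) k, k * (k + c - y)⁻¹ := by
      apply setIntegral_mono_on hHint hGint measurableSet_Ioo
      intro y hy
      have hy1 : 0 < y := hy.1
      have hy2 : y < k := hy.2
      have hd : 0 < k * (k + c - y) := by nlinarith
      have h3 : k * (k + c - y) ≤ k ^ 2 - y ^ 2 + δ := by nlinarith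
      have h4 : y ^ 2 ≤ k ^ 2 := by nlinarith
      calc y ^ 2 / (k ^ 2 - y ^ 2 + δ) ≤ k ^ 2 / (k * (k + c - y)) :=
            div_le_div₀ (by positivity) h4 hd h3
        _ = k * (k + c - y)⁻¹ := by
            rw [sq, mul_div_mul_left _ _ hk.ne', div_eq_mul_inv]
    have e3 : ∫ y in Ioo (0:ℝ) k, k * (k + c - y)⁻¹ = k * Real.log ((k + c) / c) := by
      rw [← integral_Ioc_eq_integral_Ioo, ← intervalIntegral.integral_of_le hk.le,
        intervalIntegral.integral_const_mul, log_integral k c hk hc]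
    have e4 : (k + c) / c = 1 + k ^ 2 / δ := by
      rw [hcdef]
      field_simp
      ring
    rw [e4] at e3
    rw [e1]
    exact e2.trans_eq e3
  -- now conclude
  rw [key, ← ofReal_integral_eq_lintegral_ofReal hint (Filter.Eventually.of_forall hnn)]
  apply ENNReal.ofReal_le_ofReal
  rw [integral_fun_norm_addHaar volume f]
  simp only [finrank_euclideanSpace, Fintype.card_fin, nsmul_eq_mul, smul_eq_mul]
  have hVr : volume.real (Metric.ball (0:E3) 1) = V := rfl
  rw [hVr, show (3:ℕ) - 1 = 2 from rfl, Nat.cast_ofNat]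
  have hL : 0 ≤ Real.log (1 + k ^ 2 / δ) := Real.log_nonneg (le_add_of_nonneg_right (by positivity))
  nlinarith [hI, hV0, mul_le_mul_of_nonneg_left hI hV0]

/-- Double logarithmic estimate over two Fermi balls:
`∫_{|p|<k} ∫_{|q|<k'} (k² - |p|² + k'² - |q|² + ε)⁻² dq dp
  ≤ C k k' log(1 + 2k²/ε) log(1 + 2k'²/ε)`. -/
theorem fermi_double_ball_log_bound :
    ∃ C : ℝ, 0 < C ∧ ∀ (k k' ε : ℝ), 0 < k → 0 < k' → 0 < ε →
      (∫⁻ p in {p : E3 | ‖p‖ < k}, ∫⁻ q in {q : E3 | ‖q‖ < k'},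
          ENNReal.ofReal (1 / (k ^ 2 - ‖p‖ ^ 2 + k' ^ 2 - ‖q‖ ^ 2 + ε) ^ 2))
        ≤ ENNReal.ofReal
            (C * k * k' * Real.log (1 + 2 * k ^ 2 / ε) * Real.log (1 + 2 * k' ^ 2 / ε)) := by
  set V : ℝ := (volume (Metric.ball (0:E3) 1)).toReal with hV
  have hV0 : 0 < V := ENNReal.toReal_pos (Metric.measure_ball_pos volume 0 one_pos).ne'
    measure_ball_lt_top.ne
  refine ⟨9 * V ^ 2, by positivity, ?_⟩
  intro k k' ε hk hk' hε
  set δ : ℝ := ε / 2 with hδdef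
  have hδ : 0 < δ := by positivity
  have hlog : ∀ a : ℝ, 0 < a → 1 + a ^ 2 / δ = 1 + 2 * a ^ 2 / ε := by
    intro a ha
    rw [hδdef]
    field_simp
  have hL : 0 ≤ Real.log (1 + 2 * k ^ 2 / ε) := Real.log_nonneg (le_add_of_nonneg_right (by positivity))
  have hL' : 0 ≤ Real.log (1 + 2 * k' ^ 2 / ε) := Real.log_nonneg (le_add_of_nonneg_right (by positivity))
  have hS := single_ball k δ hk hδ
  have hS' := single_ball k' δ hk' hδ
  rw [hlog k hk] at hS
  rw [hlog k' hk'] at hS'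
  set S' : ℝ≥0∞ := ENNReal.ofReal (3 * V * k' * Real.log (1 + 2 * k' ^ 2 / ε)) with hSd
  have hmset : MeasurableSet {p : E3 | ‖p‖ < k} := by
    have : {p : E3 | ‖p‖ < k} = Metric.ball (0:E3) k := by
      ext p; simp [Metric.mem_ball, dist_zero_right]
    rw [this]; exact measurableSet_ball
  have hmset' : MeasurableSet {q : E3 | ‖q‖ < k'} := by
    have : {q : E3 | ‖q‖ < k'} = Metric.ball (0:E3) k' := by
      ext q; simp [Metric.mem_ball, dist_zero_right]
    rw [this]; exact measurableSet_ball
  have inner_bound : ∀ p : E3, ‖p‖ < k →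
      (∫⁻ q in {q : E3 | ‖q‖ < k'},
          ENNReal.ofReal (1 / (k ^ 2 - ‖p‖ ^ 2 + k' ^ 2 - ‖q‖ ^ 2 + ε) ^ 2))
        ≤ ENNReal.ofReal (1 / (k ^ 2 - ‖p‖ ^ 2 + δ)) * S' := by
    intro p hp
    have hA : 0 ≤ k ^ 2 - ‖p‖ ^ 2 := by nlinarith [norm_nonneg p]
    calc (∫⁻ q in {q : E3 | ‖q‖ < k'},
          ENNReal.ofReal (1 / (k ^ 2 - ‖p‖ ^ 2 + k' ^ 2 - ‖q‖ ^ 2 + ε) ^ 2))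
        ≤ ∫⁻ q in {q : E3 | ‖q‖ < k'},
            ENNReal.ofReal (1 / (k ^ 2 - ‖p‖ ^ 2 + δ))
              * ENNReal.ofReal (1 / (k' ^ 2 - ‖q‖ ^ 2 + δ)) := by
          apply setLIntegral_mono' hmset'
          intro q hq
          have hq' : ‖q‖ < k' := hq
          have hB : 0 ≤ k' ^ 2 - ‖q‖ ^ 2 := by nlinarith [norm_nonneg q]
          rw [← ENNReal.ofReal_mul (by positivity)]
          apply ENNReal.ofReal_le_ofReal
          rw [div_mul_div_comm, one_mul]
          apply one_div_le_one_div_of_le (by positivity)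
          have hε2 : ε = 2 * δ := by rw [hδdef]; ring
          nlinarith [sq_nonneg (k ^ 2 - ‖p‖ ^ 2 - (k' ^ 2 - ‖q‖ ^ 2))]
      _ = ENNReal.ofReal (1 / (k ^ 2 - ‖p‖ ^ 2 + δ))
            * ∫⁻ q in {q : E3 | ‖q‖ < k'}, ENNReal.ofReal (1 / (k' ^ 2 - ‖q‖ ^ 2 + δ)) :=
          lintegral_const_mul' _ _ ENNReal.ofReal_ne_top
      _ ≤ _ := mul_le_mul_right hS' _
  calc (∫⁻ p in {p : E3 | ‖p‖ < k}, ∫⁻ q in {q : E3 | ‖q‖ < k'},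
          ENNReal.ofReal (1 / (k ^ 2 - ‖p‖ ^ 2 + k' ^ 2 - ‖q‖ ^ 2 + ε) ^ 2))
      ≤ ∫⁻ p in {p : E3 | ‖p‖ < k},
          ENNReal.ofReal (1 / (k ^ 2 - ‖p‖ ^ 2 + δ)) * S' :=
        setLIntegral_mono' hmset (fun p hp => inner_bound p hp)
    _ = (∫⁻ p in {p : E3 | ‖p‖ < k}, ENNReal.ofReal (1 / (k ^ 2 - ‖p‖ ^ 2 + δ))) * S' :=
        lintegral_mul_const' _ _ ENNReal.ofReal_ne_top
    _ ≤ ENNReal.ofReal (3 * V * k * Real.log (1 + 2 * k ^ 2 / ε)) * S' :=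
        mul_le_mul_left hS _
    _ = ENNReal.ofReal (9 * V ^ 2 * k * k' * Real.log (1 + 2 * k ^ 2 / ε)
          * Real.log (1 + 2 * k' ^ 2 / ε)) := by
        rw [hSd, ← ENNReal.ofReal_mul (by positivity)]
        ring_nf
end

section
/- There exists an absolute constant C > 0 such that for every x > 0, every e with 0 < e ≤ (3/4)x², and every w ∈ ℝ³ with w ≠ 0, the Lebesgue measure of the intersection of the two spherical shells S := {y ∈ ℝ³ : x² − e ≤ |y|² ≤ x² and x² ≤ |y − w|² ≤ x² + e} satisfies vol(S) ≤ C (1 + 1/x) e² / |w|. -/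
open MeasureTheory
open scoped ENNReal

-- Area of an annulus {c ≤ |p|² ≤ c + d} in the plane (pi measure on Fin 2 → ℝ) is ≤ π d.
lemma annulus_area_le (c d : ℝ) (hd : 0 ≤ d) :
    (volume : Measure (Fin 2 → ℝ)) {p : Fin 2 → ℝ | c ≤ p 0 ^ 2 + p 1 ^ 2 ∧ p 0 ^ 2 + p 1 ^ 2 ≤ c + d}
      ≤ ENNReal.ofReal (Real.pi * d) := by
  set A : Set (Fin 2 → ℝ) := {p | c ≤ p 0 ^ 2 + p 1 ^ 2 ∧ p 0 ^ 2 + p 1 ^ 2 ≤ c + d} with hA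
  have hAm : MeasurableSet A := by
    apply MeasurableSet.inter
    · exact measurableSet_le measurable_const (((measurable_pi_apply 0).pow_const 2).add
        ((measurable_pi_apply 1).pow_const 2))
    · exact measurableSet_le (((measurable_pi_apply 0).pow_const 2).add
        ((measurable_pi_apply 1).pow_const 2)) measurable_const
  have hmp := (EuclideanSpace.volume_preserving_symm_measurableEquiv_toLp (Fin 2))
  rw [← hmp.measure_preimage hAm.nullMeasurableSet]
  set R : ℝ := Real.sqrt (max 0 (c + d)) with hR
  set r : ℝ := Real.sqrt (max 0 c) with hr
  have hsub : (MeasurableEquiv.toLp 2 (Fin 2 → ℝ)).symm ⁻¹' A ⊆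
      Metric.closedBall (0 : EuclideanSpace ℝ (Fin 2)) R \ Metric.ball 0 r := by
    intro z hz
    have hz' : c ≤ z 0 ^ 2 + z 1 ^ 2 ∧ z 0 ^ 2 + z 1 ^ 2 ≤ c + d := hz
    have hnorm : ‖z‖ ^ 2 = z 0 ^ 2 + z 1 ^ 2 := by
      rw [EuclideanSpace.norm_eq, Real.sq_sqrt (by positivity)]
      simp [Fin.sum_univ_two]
    constructor
    · simp only [Metric.mem_closedBall, dist_zero_right]
      have h1 : ‖z‖ ^ 2 ≤ max 0 (c + d) := by rw [hnorm]; exact le_max_of_le_right hz'.2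
      calc ‖z‖ = Real.sqrt (‖z‖ ^ 2) := (Real.sqrt_sq (norm_nonneg z)).symm
        _ ≤ R := Real.sqrt_le_sqrt h1
    · simp only [Metric.mem_ball, dist_zero_right, not_lt]
      have h1 : max 0 c ≤ ‖z‖ ^ 2 := by
        rw [hnorm]; exact max_le (by positivity) hz'.1
      calc r ≤ Real.sqrt (‖z‖ ^ 2) := Real.sqrt_le_sqrt h1
        _ = ‖z‖ := Real.sqrt_sq (norm_nonneg z)
  refine le_trans (measure_mono hsub) ?_
  have hrR : r ≤ R := Real.sqrt_le_sqrt (max_le_max le_rfl (by linarith))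
  have hball : Metric.ball (0 : EuclideanSpace ℝ (Fin 2)) r ⊆ Metric.closedBall 0 R :=
    (Metric.ball_subset_closedBall).trans (Metric.closedBall_subset_closedBall hrR)
  rw [measure_diff hball measurableSet_ball.nullMeasurableSet measure_ball_lt_top.ne]
  have hconst : ENNReal.ofReal (Real.sqrt Real.pi ^ (Fintype.card (Fin 2)) /
      Real.Gamma (Fintype.card (Fin 2) / 2 + 1)) = ENNReal.ofReal Real.pi := by
    norm_num [Real.sq_sqrt Real.pi_pos.le, Real.Gamma_two]
  rw [EuclideanSpace.volume_closedBall, EuclideanSpace.volume_ball, hconst]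
  have hRnn : 0 ≤ R := Real.sqrt_nonneg _
  have hrnn : 0 ≤ r := Real.sqrt_nonneg _
  rw [← ENNReal.ofReal_pow hRnn, ← ENNReal.ofReal_pow hrnn,
    ← ENNReal.ofReal_mul (by positivity), ← ENNReal.ofReal_mul (by positivity),
    ← ENNReal.ofReal_sub _ (by positivity)]
  apply ENNReal.ofReal_le_ofReal
  simp only [Fintype.card_fin]
  have hR2 : R ^ 2 = max 0 (c + d) := Real.sq_sqrt (le_max_left _ _)
  have hr2 : r ^ 2 = max 0 c := Real.sq_sqrt (le_max_left _ _)
  rw [hR2, hr2]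
  have : max 0 (c + d) - max 0 c ≤ d := by
    rcases le_total 0 c with h | h <;> rcases le_total 0 (c + d) with h' | h' <;>
      simp [max_eq_left, max_eq_right, *] <;> linarith
  nlinarith [Real.pi_pos]

open scoped BigOperators

lemma slab_shell_bound (x e a L : ℝ) (he : 0 ≤ e) (hL : 0 ≤ L) :
    (volume : Measure (Fin 3 → ℝ))
      {z : Fin 3 → ℝ | (x ^ 2 - e ≤ ∑ i, z i ^ 2 ∧ ∑ i, z i ^ 2 ≤ x ^ 2)
        ∧ z 0 ∈ Set.Icc a (a + L)}
      ≤ ENNReal.ofReal (Real.pi * e) * ENNReal.ofReal L := by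
  set U : Set (ℝ × (Fin 2 → ℝ)) :=
    {p | (x ^ 2 - e ≤ p.1 ^ 2 + (p.2 0 ^ 2 + p.2 1 ^ 2)
        ∧ p.1 ^ 2 + (p.2 0 ^ 2 + p.2 1 ^ 2) ≤ x ^ 2) ∧ p.1 ∈ Set.Icc a (a + L)} with hU
  have hg : Measurable fun p : ℝ × (Fin 2 → ℝ) => p.1 ^ 2 + (p.2 0 ^ 2 + p.2 1 ^ 2) :=
    (measurable_fst.pow_const 2).add
      (((measurable_pi_apply 0).comp measurable_snd).pow_const 2 |>.add
        (((measurable_pi_apply 1).comp measurable_snd).pow_const 2))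
  have hUm : MeasurableSet U := by
    refine MeasurableSet.inter (MeasurableSet.inter ?_ ?_) ?_
    · exact measurableSet_le measurable_const hg
    · exact measurableSet_le hg measurable_const
    · exact measurable_fst measurableSet_Icc
  have hmp := volume_preserving_piFinSuccAbove (fun _ : Fin 3 => ℝ) 0
  have hpre : {z : Fin 3 → ℝ | (x ^ 2 - e ≤ ∑ i, z i ^ 2 ∧ ∑ i, z i ^ 2 ≤ x ^ 2)
        ∧ z 0 ∈ Set.Icc a (a + L)}
      = (MeasurableEquiv.piFinSuccAbove (fun _ : Fin 3 => ℝ) 0) ⁻¹' U := by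
    ext z
    have hfst : ((Fin.insertNthEquiv (fun _ : Fin 3 => ℝ) 0).symm z).1 = z 0 := rfl
    have hsnd0 : ((Fin.insertNthEquiv (fun _ : Fin 3 => ℝ) 0).symm z).2 0 = z 1 := rfl
    have hsnd1 : ((Fin.insertNthEquiv (fun _ : Fin 3 => ℝ) 0).symm z).2 1 = z 2 := rfl
    simp only [Set.mem_setOf_eq, Set.mem_preimage, MeasurableEquiv.piFinSuccAbove_apply, hU,
      Fin.sum_univ_three, hfst, hsnd0, hsnd1]
    constructor
    · rintro ⟨⟨h1, h2⟩, h3⟩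
      exact ⟨⟨by linarith, by linarith⟩, h3⟩
    · rintro ⟨⟨h1, h2⟩, h3⟩
      exact ⟨⟨by linarith, by linarith⟩, h3⟩
  rw [hpre, hmp.measure_preimage hUm.nullMeasurableSet]
  rw [Measure.volume_eq_prod, Measure.prod_apply hUm]
  have hbound : ∀ t : ℝ, (volume : Measure (Fin 2 → ℝ)) (Prod.mk t ⁻¹' U)
      ≤ Set.indicator (Set.Icc a (a + L)) (fun _ => ENNReal.ofReal (Real.pi * e)) t := by
    intro t
    by_cases ht : t ∈ Set.Icc a (a + L)
    · rw [Set.indicator_of_mem ht]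
      have hsub : Prod.mk t ⁻¹' U ⊆
          {p : Fin 2 → ℝ | x ^ 2 - e - t ^ 2 ≤ p 0 ^ 2 + p 1 ^ 2
            ∧ p 0 ^ 2 + p 1 ^ 2 ≤ (x ^ 2 - e - t ^ 2) + e} := by
        rintro p ⟨⟨h1, h2⟩, _⟩
        exact ⟨by linarith, by linarith⟩
      exact le_trans (measure_mono hsub) (annulus_area_le _ e he)
    · have : Prod.mk t ⁻¹' U = ∅ := by
        ext p; simp only [Set.mem_preimage, hU, Set.mem_setOf_eq, Set.mem_empty_iff_false,
          iff_false]
        rintro ⟨_, h3⟩; exact ht h3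
      rw [this, measure_empty, Set.indicator_of_notMem ht]
  calc ∫⁻ t, (volume : Measure (Fin 2 → ℝ)) (Prod.mk t ⁻¹' U) ∂volume
      ≤ ∫⁻ t, Set.indicator (Set.Icc a (a + L)) (fun _ => ENNReal.ofReal (Real.pi * e)) t ∂volume :=
        lintegral_mono hbound
    _ = ENNReal.ofReal (Real.pi * e) * volume (Set.Icc a (a + L)) :=
        lintegral_indicator_const measurableSet_Icc _
    _ ≤ ENNReal.ofReal (Real.pi * e) * ENNReal.ofReal L := by
        rw [Real.volume_Icc]
        exact mul_le_mul_right (ENNReal.ofReal_le_ofReal (by linarith)) _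

/-- Volume bound for the intersection of two spherical shells (eq. volume S1 of Lemma B.2):
for `0 < e ≤ (3/4)x²` and `w ≠ 0`,
`vol{y : x² - e ≤ |y|² ≤ x², x² ≤ |y-w|² ≤ x² + e} ≤ C (1 + 1/x) e² / |w|`. -/
theorem shell_intersection_volume_bound :
    ∃ C : ℝ, 0 < C ∧ ∀ (x e : ℝ) (w : E3), 0 < x → 0 < e → e ≤ 3 / 4 * x ^ 2 → w ≠ 0 →
      volume {y : E3 | (x ^ 2 - e ≤ ‖y‖ ^ 2 ∧ ‖y‖ ^ 2 ≤ x ^ 2)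
            ∧ (x ^ 2 ≤ ‖y - w‖ ^ 2 ∧ ‖y - w‖ ^ 2 ≤ x ^ 2 + e)}
        ≤ ENNReal.ofReal (C * (1 + 1 / x) * e ^ 2 / ‖w‖) := by
  refine ⟨4, by norm_num, ?_⟩
  intro x e w hx he _hex hw
  have hwn : (0:ℝ) < ‖w‖ := norm_pos_iff.mpr hw
  -- an orthonormal basis whose first vector is `w/‖w‖`
  have horth : Orthonormal ℝ (({0} : Set (Fin 3)).restrict fun _ : Fin 3 => (‖w‖⁻¹ : ℝ) • w) := by
    constructor
    · intro i
      show ‖(‖w‖⁻¹ : ℝ) • w‖ = 1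
      simp [norm_smul, abs_of_nonneg (inv_nonneg.mpr hwn.le), inv_mul_cancel₀ hwn.ne']
    · intro i j hij
      exact absurd (Subsingleton.elim i j) hij
  obtain ⟨b, hb⟩ := Orthonormal.exists_orthonormalBasis_extension_of_card_eq (𝕜 := ℝ)
    (by simp [finrank_euclideanSpace]) horth
  have hb0 : b 0 = (‖w‖⁻¹ : ℝ) • w := hb 0 rfl
  set a : ℝ := ‖w‖ / 2 - e / ‖w‖ with ha
  set L : ℝ := e / ‖w‖ with hL
  set T : Set (EuclideanSpace ℝ (Fin 3)) :=
    {z | (x ^ 2 - e ≤ ‖z‖ ^ 2 ∧ ‖z‖ ^ 2 ≤ x ^ 2) ∧ z 0 ∈ Set.Icc a (a + L)} with hT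
  have hz0cont : Continuous fun z : EuclideanSpace ℝ (Fin 3) => z 0 :=
    (continuous_apply (0 : Fin 3)).comp (PiLp.continuous_ofLp (p := 2) (β := fun _ : Fin 3 => ℝ))
  have hTm : MeasurableSet T := by
    refine MeasurableSet.inter (MeasurableSet.inter ?_ ?_) ?_
    · exact measurableSet_le measurable_const ((measurable_norm).pow_const 2)
    · exact measurableSet_le ((measurable_norm).pow_const 2) measurable_const
    · exact hz0cont.measurable measurableSet_Icc
  have hsub : {y : E3 | (x ^ 2 - e ≤ ‖y‖ ^ 2 ∧ ‖y‖ ^ 2 ≤ x ^ 2)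
      ∧ (x ^ 2 ≤ ‖y - w‖ ^ 2 ∧ ‖y - w‖ ^ 2 ≤ x ^ 2 + e)} ⊆ b.repr ⁻¹' T := by
    rintro y ⟨⟨h1, h2⟩, h3, h4⟩
    have hnorm : ‖b.repr y‖ = ‖y‖ := b.repr.norm_map y
    set I : ℝ := inner ℝ w y with hI
    have hrepr0 : b.repr y 0 = ‖w‖⁻¹ * I := by
      rw [b.repr_apply_apply, hb0, real_inner_smul_left]
    have hkey : ‖y - w‖ ^ 2 = ‖y‖ ^ 2 - 2 * I + ‖w‖ ^ 2 := by
      rw [norm_sub_sq_real, real_inner_comm]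
    have hupper : I ≤ ‖w‖ ^ 2 / 2 := by nlinarith
    have hlower : ‖w‖ ^ 2 / 2 - e ≤ I := by nlinarith
    refine ⟨⟨?_, ?_⟩, ?_, ?_⟩
    · rwa [hnorm]
    · rwa [hnorm]
    · rw [hrepr0, inv_mul_eq_div, ha, le_div_iff₀ hwn]
      have : (‖w‖ / 2 - e / ‖w‖) * ‖w‖ = ‖w‖ ^ 2 / 2 - e := by
        field_simp
      rw [this]; exact hlower
    · rw [hrepr0, inv_mul_eq_div, div_le_iff₀ hwn]
      have : (a + L) * ‖w‖ = ‖w‖ ^ 2 / 2 := by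
        rw [ha, hL]; field_simp; ring
      rw [this]; exact hupper
  refine le_trans (measure_mono hsub) ?_
  rw [(b.measurePreserving_repr).measure_preimage hTm.nullMeasurableSet]
  -- express the volume of T in the pi space
  set Tpi : Set (Fin 3 → ℝ) :=
    {z | (x ^ 2 - e ≤ ∑ i, z i ^ 2 ∧ ∑ i, z i ^ 2 ≤ x ^ 2) ∧ z 0 ∈ Set.Icc a (a + L)} with hTpi
  have hTpim : MeasurableSet Tpi := by
    have hsum : Measurable fun z : Fin 3 → ℝ => ∑ i, z i ^ 2 :=
      Finset.measurable_sum _ fun i _ => (measurable_pi_apply i).pow_const 2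
    refine MeasurableSet.inter (MeasurableSet.inter ?_ ?_) ?_
    · exact measurableSet_le measurable_const hsum
    · exact measurableSet_le hsum measurable_const
    · exact (measurable_pi_apply 0) measurableSet_Icc
  have hTeq : T = (MeasurableEquiv.toLp 2 (Fin 3 → ℝ)).symm ⁻¹' Tpi := by
    ext z
    have hnz : ‖z‖ ^ 2 = ∑ i, z i ^ 2 := by
      rw [EuclideanSpace.norm_eq, Real.sq_sqrt (by positivity)]
      simp [Real.norm_eq_abs, sq_abs]
    simp only [hT, hTpi, Set.mem_setOf_eq, Set.mem_preimage, hnz]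
    rfl
  rw [hTeq, (EuclideanSpace.volume_preserving_symm_measurableEquiv_toLp (Fin 3)).measure_preimage
    hTpim.nullMeasurableSet]
  refine le_trans (slab_shell_bound x e a L he.le (by positivity)) ?_
  rw [← ENNReal.ofReal_mul (by positivity)]
  apply ENNReal.ofReal_le_ofReal
  have hπ : Real.pi ≤ 4 * (1 + 1 / x) := by
    have h1 : (0:ℝ) < 1 / x := by positivity
    nlinarith [Real.pi_le_four]
  calc Real.pi * e * L = Real.pi * (e ^ 2 / ‖w‖) := by rw [hL]; ring
    _ ≤ (4 * (1 + 1 / x)) * (e ^ 2 / ‖w‖) :=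
        mul_le_mul_of_nonneg_right hπ (by positivity)
    _ = 4 * (1 + 1 / x) * e ^ 2 / ‖w‖ := by ring
end
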